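/- arXiv:2002.11112 — 5 statements merged into one kernel-verified Lean document; each statement's English description precedes it below -/
import Mathlib

section
/- Let ρ₁, ..., ρₙ : S^{n-1} → (0,∞) be continuous positive functions on the unit sphere in ℝⁿ (radial functions of star bodies K₁,...,Kₙ), and define the dual mixed volume Ṽ(K₁,...,Kₙ) = (1/n) ∫_{S^{n-1}} ρ₁(u)···ρₙ(u) dS(u). Then Ṽ(K₁,...,Kₙ)ⁿ ≤ V(K₁)···V(Kₙ), where V(Kᵢ) = (1/n) ∫_{S^{n-1}} ρᵢ(u)ⁿ dS(u), with equality if and only if the ρᵢ are pairwise proportional. -/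
open MeasureTheory Metric Finset

open Module
open scoped RealInnerProductSpace NNReal ENNReal

set_option maxHeartbeats 1000000

/-- The surface (spherical) measure on the unit sphere `S^{n-1} ⊆ ℝⁿ`,
realized as the `(n-1)`-dimensional Hausdorff measure. -/
noncomputable def sphereσ (n : ℕ) : Measure (sphere (0 : EuclideanSpace ℝ (Fin n)) 1) :=
  μH[(n : ℝ) - 1]

/-- sqrt is Lipschitz away from 0 -/
lemma sqrt_abs_sub_le {a b c : ℝ} (ha : 1/4 ≤ a) (hb : 1/4 ≤ b) (hab : |a - b| ≤ c) :
    |Real.sqrt a - Real.sqrt b| ≤ c := by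
  set sa := Real.sqrt a
  set sb := Real.sqrt b
  have ha0 : (0:ℝ) ≤ a := by linarith
  have hb0 : (0:ℝ) ≤ b := by linarith
  have hsa : sa ^ 2 = a := Real.sq_sqrt ha0
  have hsb : sb ^ 2 = b := Real.sq_sqrt hb0
  have hsa2 : 1/2 ≤ sa := by
    rw [show (1:ℝ)/2 = Real.sqrt (1/4) by
      rw [show (1:ℝ)/4 = (1/2)^2 by norm_num, Real.sqrt_sq]; norm_num]
    exact Real.sqrt_le_sqrt ha
  have hsb2 : 1/2 ≤ sb := by
    rw [show (1:ℝ)/2 = Real.sqrt (1/4) by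
      rw [show (1:ℝ)/4 = (1/2)^2 by norm_num, Real.sqrt_sq]; norm_num]
    exact Real.sqrt_le_sqrt hb
  have key : |sa - sb| * (sa + sb) = |a - b| := by
    rw [← abs_of_nonneg (show (0:ℝ) ≤ sa + sb by linarith), ← abs_mul]
    congr 1
    nlinarith
  calc |sa - sb| ≤ |sa - sb| * (sa + sb) :=
        le_mul_of_one_le_right (abs_nonneg _) (by linarith)
    _ = |a - b| := key
    _ ≤ c := hab


variable {F : Type*} [NormedAddCommGroup F] [InnerProductSpace ℝ F]

lemma helper_norm (v h : F) (hv : ‖v‖ = 1) (ho : ⟪h, v⟫ = 0) (s : ℝ) :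
    ‖h + s • v‖ ^ 2 = ‖h‖ ^ 2 + s ^ 2 := by
  rw [norm_add_sq_real, real_inner_smul_right, ho, mul_zero, mul_zero, add_zero, norm_smul, hv,
    mul_one, Real.norm_eq_abs, sq_abs]

/-- the point `h + √(1-‖h‖²) v` lies on the sphere and near `v` -/
lemma helper_point (v h : F) (hv : ‖v‖ = 1) (ho : ⟪h, v⟫ = 0) (hh : ‖h‖ ≤ 1) :
    ‖h + Real.sqrt (1 - ‖h‖ ^ 2) • v‖ = 1 ∧
      ‖(h + Real.sqrt (1 - ‖h‖ ^ 2) • v) - v‖ ^ 2 ≤ 2 * ‖h‖ ^ 2 := by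
  have hh0 : 0 ≤ ‖h‖ := norm_nonneg _
  set s := Real.sqrt (1 - ‖h‖ ^ 2) with hs_def
  have hs0 : 0 ≤ s := Real.sqrt_nonneg _
  have hs2 : s ^ 2 = 1 - ‖h‖ ^ 2 := Real.sq_sqrt (by nlinarith)
  have h1 : ‖h + s • v‖ ^ 2 = ‖h‖ ^ 2 + s ^ 2 := helper_norm v h hv ho s
  constructor
  · have : ‖h + s • v‖ ^ 2 = 1 := by rw [h1]; linarith
    nlinarith [norm_nonneg (h + s • v)]
  · have h2 : (h + s • v) - v = h + (s - 1) • v := by module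
    rw [h2, helper_norm v h hv ho (s - 1)]
    have hs_ge : 1 - ‖h‖ ^ 2 ≤ s := by
      rw [hs_def]
      have h3 := Real.sqrt_le_sqrt (show (1 - ‖h‖ ^ 2) ^ 2 ≤ 1 - ‖h‖ ^ 2 by nlinarith)
      rwa [Real.sqrt_sq (by nlinarith)] at h3
    have hs_le1 : s ≤ 1 := by nlinarith
    nlinarith

/-- decomposition of a sphere point in a positive cap -/
lemma helper_decomp (v u : F) (hv : ‖v‖ = 1) (hu : ‖u‖ = 1) (hc : 0 < ⟪v, u⟫) :
    ⟪u - ⟪v, u⟫ • v, v⟫ = 0 ∧ ‖u - ⟪v, u⟫ • v‖ ^ 2 = 1 - ⟪v, u⟫ ^ 2 ∧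
      (u - ⟪v, u⟫ • v) + Real.sqrt (1 - ‖u - ⟪v, u⟫ • v‖ ^ 2) • v = u := by
  set c := ⟪v, u⟫ with hc_def
  have ho : ⟪u - c • v, v⟫ = 0 := by
    rw [inner_sub_left, real_inner_smul_left, real_inner_self_eq_norm_sq, hv]
    rw [real_inner_comm]
    simp [hc_def]
  have hd : u = (u - c • v) + c • v := by module
  have hn : ‖u - c • v‖ ^ 2 = 1 - c ^ 2 := by
    have := helper_norm v (u - c • v) hv ho c
    rw [← hd, hu] at this
    linarith
  refine ⟨ho, hn, ?_⟩
  rw [hn]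
  have : Real.sqrt (1 - (1 - c ^ 2)) = c := by
    rw [show 1 - (1 - c ^ 2) = c ^ 2 by ring, Real.sqrt_sq hc.le]
  rw [this]; module

/-- Lipschitz property of the graph map -/
lemma helper_lip (v : F) (hv : ‖v‖ = 1) {h₁ h₂ : F} (hh₁ : ‖h₁‖ ^ 2 ≤ 3/4) (hh₂ : ‖h₂‖ ^ 2 ≤ 3/4) :
    dist (h₁ + Real.sqrt (1 - ‖h₁‖ ^ 2) • v) (h₂ + Real.sqrt (1 - ‖h₂‖ ^ 2) • v) ≤
      3 * dist h₁ h₂ := by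
  have e1 : 1/4 ≤ 1 - ‖h₁‖ ^ 2 := by linarith
  have e2 : 1/4 ≤ 1 - ‖h₂‖ ^ 2 := by linarith
  have hn1 : ‖h₁‖ ≤ 1 := by nlinarith [norm_nonneg h₁]
  have hn2 : ‖h₂‖ ≤ 1 := by nlinarith [norm_nonneg h₂]
  have habs : |(1 - ‖h₁‖ ^ 2) - (1 - ‖h₂‖ ^ 2)| ≤ 2 * ‖h₁ - h₂‖ := by
    have h3 : |‖h₁‖ - ‖h₂‖| ≤ ‖h₁ - h₂‖ := abs_norm_sub_norm_le _ _
    rw [abs_le] at h3 ⊢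
    obtain ⟨h3a, h3b⟩ := h3
    constructor <;> nlinarith [norm_nonneg (h₁ - h₂), norm_nonneg h₁, norm_nonneg h₂]
  have hsq : |Real.sqrt (1 - ‖h₁‖ ^ 2) - Real.sqrt (1 - ‖h₂‖ ^ 2)| ≤ 2 * ‖h₁ - h₂‖ := by
    apply sqrt_abs_sub_le e1 e2 habs
  rw [dist_eq_norm]
  have hre : (h₁ + Real.sqrt (1 - ‖h₁‖ ^ 2) • v) - (h₂ + Real.sqrt (1 - ‖h₂‖ ^ 2) • v) =
      (h₁ - h₂) + (Real.sqrt (1 - ‖h₁‖ ^ 2) - Real.sqrt (1 - ‖h₂‖ ^ 2)) • v := by module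
  rw [hre]
  calc ‖(h₁ - h₂) + (Real.sqrt (1 - ‖h₁‖ ^ 2) - Real.sqrt (1 - ‖h₂‖ ^ 2)) • v‖
      ≤ ‖h₁ - h₂‖ + ‖(Real.sqrt (1 - ‖h₁‖ ^ 2) - Real.sqrt (1 - ‖h₂‖ ^ 2)) • v‖ :=
        norm_add_le _ _
    _ = ‖h₁ - h₂‖ + |Real.sqrt (1 - ‖h₁‖ ^ 2) - Real.sqrt (1 - ‖h₂‖ ^ 2)| := by
        rw [norm_smul, hv, mul_one, Real.norm_eq_abs]
    _ ≤ ‖h₁ - h₂‖ + 2 * ‖h₁ - h₂‖ := by linarith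
    _ = 3 * dist h₁ h₂ := by rw [dist_eq_norm]; ring

lemma finrank_orth (n : ℕ) (v : EuclideanSpace ℝ (Fin n)) (hv : ‖v‖ = 1) :
    finrank ℝ ((ℝ ∙ v)ᗮ : Submodule ℝ (EuclideanSpace ℝ (Fin n))) = n - 1 := by
  have hv0 : v ≠ 0 := by intro h; rw [h, norm_zero] at hv; norm_num at hv
  have h1 : finrank ℝ (ℝ ∙ v) = 1 := finrank_span_singleton hv0
  have h2 := Submodule.finrank_add_finrank_orthogonal (K := (ℝ ∙ v))
  rw [h1] at h2
  have h3 : finrank ℝ (EuclideanSpace ℝ (Fin n)) = n := by simp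
  omega

lemma cast_orth (n : ℕ) (hn : 0 < n) (v : EuclideanSpace ℝ (Fin n)) (hv : ‖v‖ = 1) :
    ((n:ℝ) - 1) = ((finrank ℝ ((ℝ ∙ v)ᗮ : Submodule ℝ (EuclideanSpace ℝ (Fin n)))) : ℝ) := by
  rw [finrank_orth n v hv]
  have : (1:ℕ) ≤ n := hn
  push_cast [Nat.cast_sub this]
  ring

lemma sphere_transfer (n : ℕ) (hn : 0 < n) (U : Set (sphere (0 : EuclideanSpace ℝ (Fin n)) 1)) :
    sphereσ n U = μH[(n:ℝ)-1] (Subtype.val '' U) := by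
  have hd : (0:ℝ) ≤ (n:ℝ) - 1 := by
    have h : (1:ℝ) ≤ n := by exact_mod_cast hn
    linarith
  rw [sphereσ, Isometry.hausdorffMeasure_image isometry_subtype_coe (Or.inl hd)]


lemma scal1 {a δ ε : ℝ} (h1 : a < δ) (h2 : 0 ≤ a) (h3 : δ ≤ 1/2) (h4 : δ ≤ ε/2) (h5 : 0 < δ) :
    2 * a ^ 2 < ε ^ 2 := by nlinarith

lemma sphereσ_openPos (n : ℕ) (hn : 0 < n) : (sphereσ n).IsOpenPosMeasure := by
  constructor
  intro U hU hUne
  have hd : (0:ℝ) ≤ (n:ℝ) - 1 := by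
    have h : (1:ℝ) ≤ n := by exact_mod_cast hn
    linarith
  obtain ⟨u₀, hu₀⟩ := hUne
  obtain ⟨ε, hε, hball⟩ := Metric.isOpen_iff.1 hU u₀ hu₀
  set v : EuclideanSpace ℝ (Fin n) := (u₀ : EuclideanSpace ℝ (Fin n)) with hv_def
  have hv : ‖v‖ = 1 := by
    have h := u₀.2
    rwa [mem_sphere_zero_iff_norm] at h
  set H := ((ℝ ∙ v)ᗮ : Submodule ℝ (EuclideanSpace ℝ (Fin n))) with hH_def
  set P : EuclideanSpace ℝ (Fin n) →L[ℝ] H := H.orthogonalProjectionOnto with hP_def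
  set δ := min (1/2 : ℝ) (ε/2) with hδ_def
  have hδ : 0 < δ := lt_min (by norm_num) (by linarith)
  have hδhalf : δ ≤ 1/2 := min_le_left _ _
  have hδε : δ ≤ ε/2 := min_le_right _ _
  have key : ball (0 : H) δ ⊆ (fun x => (P x : H)) '' (Subtype.val '' U) := by
    intro h hh
    have hhn : ‖h‖ < δ := by simpa [mem_ball, dist_zero_right] using hh
    set w : EuclideanSpace ℝ (Fin n) := (h : EuclideanSpace ℝ (Fin n)) with hw_def
    have hwn : ‖w‖ = ‖h‖ := rfl
    have ho : ⟪w, v⟫ = 0 := by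
      rw [real_inner_comm]
      exact Submodule.mem_orthogonal_singleton_iff_inner_right.1 h.2
    have hw1 : ‖w‖ ≤ 1 := by rw [hwn]; linarith
    obtain ⟨hx1, hx2⟩ := helper_point v w hv ho hw1
    set x : EuclideanSpace ℝ (Fin n) := w + Real.sqrt (1 - ‖w‖ ^ 2) • v with hx_def
    have hxs : x ∈ sphere (0 : EuclideanSpace ℝ (Fin n)) 1 := by
      rwa [mem_sphere_zero_iff_norm]
    have hdist : dist x v < ε := by
      rw [dist_eq_norm]
      refine lt_of_pow_lt_pow_left₀ 2 hε.le (lt_of_le_of_lt hx2 ?_)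
      rw [hwn]
      exact scal1 hhn (norm_nonneg _) hδhalf hδε hδ
    have hu'U : (⟨x, hxs⟩ : sphere (0 : EuclideanSpace ℝ (Fin n)) 1) ∈ U := by
      apply hball
      rw [mem_ball, Subtype.dist_eq]
      exact hdist
    refine ⟨x, ⟨⟨x, hxs⟩, hu'U, rfl⟩, ?_⟩
    have hPh : P w = h := Submodule.orthogonalProjectionOnto_mem_subspace_eq_self h
    have hPv : P v = 0 :=
      Submodule.orthogonalProjectionOnto_apply_of_mem_orthogonal
        (Submodule.le_orthogonal_orthogonal _ (Submodule.mem_span_singleton_self v))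
    show P x = h
    rw [hx_def, map_add, ContinuousLinearMap.map_smul, hPh, hPv, smul_zero, add_zero]
  intro hzero
  have htrans : sphereσ n U = μH[(n:ℝ)-1] (Subtype.val '' U) := sphere_transfer n hn U
  have hPlip : LipschitzWith 1 (fun x => (P x : H)) := by
    have h1 : ‖P‖₊ ≤ 1 := by
      rw [← NNReal.coe_le_coe]
      exact_mod_cast H.orthogonalProjectionOnto_norm_le
    exact P.lipschitz.weaken h1
  have himg : μH[(n:ℝ)-1] ((fun x => (P x : H)) '' (Subtype.val '' U)) ≤
      (1:ℝ≥0) ^ ((n:ℝ)-1) * μH[(n:ℝ)-1] (Subtype.val '' U) :=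
    hPlip.hausdorffMeasure_image_le hd _
  rw [htrans] at hzero
  rw [hzero, mul_zero] at himg
  have hpos : 0 < μH[(n:ℝ)-1] (ball (0 : H) δ) := by
    rw [cast_orth n hn v hv]
    exact isOpen_ball.measure_pos _ ⟨0, mem_ball_self hδ⟩
  have hcontr := lt_of_lt_of_le hpos ((measure_mono key).trans himg)
  simp at hcontr
lemma sphereσ_finite (n : ℕ) (hn : 0 < n) : IsFiniteMeasure (sphereσ n) := by
  have hd : (0:ℝ) ≤ (n:ℝ) - 1 := by
    have h : (1:ℝ) ≤ n := by exact_mod_cast hn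
    linarith
  constructor
  set S := sphere (0 : EuclideanSpace ℝ (Fin n)) 1 with hS_def
  set C : S → Set S := fun v => {u : S | 1/2 < ⟪(v : EuclideanSpace ℝ (Fin n)), (u : EuclideanSpace ℝ (Fin n))⟫} with hC_def
  have hCopen : ∀ v, IsOpen (C v) := fun v =>
    isOpen_lt continuous_const ((continuous_const.inner continuous_subtype_val))
  have hCcover : (Set.univ : Set S) ⊆ ⋃ v, C v := by
    intro u _
    refine Set.mem_iUnion.2 ⟨u, ?_⟩
    have hu : ‖(u : EuclideanSpace ℝ (Fin n))‖ = 1 := by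
      have h := u.2; rwa [mem_sphere_zero_iff_norm] at h
    simp only [C, Set.mem_setOf_eq, real_inner_self_eq_norm_sq, hu]
    norm_num
  obtain ⟨t, ht⟩ := isCompact_univ.elim_finite_subcover C hCopen hCcover
  have capFin : ∀ v : S, sphereσ n (C v) < ⊤ := by
    intro v
    have hv : ‖(v : EuclideanSpace ℝ (Fin n))‖ = 1 := by
      have h := v.2; rwa [mem_sphere_zero_iff_norm] at h
    set H := ((ℝ ∙ (v : EuclideanSpace ℝ (Fin n)))ᗮ : Submodule ℝ (EuclideanSpace ℝ (Fin n))) with hH_def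
    set g : H → EuclideanSpace ℝ (Fin n) := fun h =>
      (h : EuclideanSpace ℝ (Fin n)) +
        Real.sqrt (1 - ‖(h : EuclideanSpace ℝ (Fin n))‖ ^ 2) • (v : EuclideanSpace ℝ (Fin n))
      with hg_def
    set K : Set H := {h : H | ‖(h : EuclideanSpace ℝ (Fin n))‖ ^ 2 ≤ 3/4} with hK_def
    have hsub : Subtype.val '' (C v) ⊆ g '' K := by
      rintro _ ⟨u, hu, rfl⟩
      have hu1 : ‖(u : EuclideanSpace ℝ (Fin n))‖ = 1 := by
        have h := u.2; rwa [mem_sphere_zero_iff_norm] at h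
      have hc : 0 < ⟪(v : EuclideanSpace ℝ (Fin n)), (u : EuclideanSpace ℝ (Fin n))⟫ :=
        lt_trans (by norm_num) hu
      obtain ⟨ho, hn2, heq⟩ := helper_decomp _ _ hv hu1 hc
      have hmem : (u : EuclideanSpace ℝ (Fin n)) -
          ⟪(v : EuclideanSpace ℝ (Fin n)), (u : EuclideanSpace ℝ (Fin n))⟫ •
            (v : EuclideanSpace ℝ (Fin n)) ∈ H := by
        apply Submodule.mem_orthogonal_singleton_iff_inner_right.2
        rw [real_inner_comm]; exact ho
      refine ⟨⟨_, hmem⟩, ?_, ?_⟩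
      · show ‖(u : EuclideanSpace ℝ (Fin n)) - _ • _‖ ^ 2 ≤ 3/4
        rw [hn2]
        have h12 : (1:ℝ)/2 < ⟪(v : EuclideanSpace ℝ (Fin n)), (u : EuclideanSpace ℝ (Fin n))⟫ := hu
        nlinarith
      · exact heq
    have hlip : LipschitzOnWith 3 g K := by
      apply LipschitzOnWith.of_dist_le_mul
      intro h₁ hh₁ h₂ hh₂
      have h3 := helper_lip (v : EuclideanSpace ℝ (Fin n)) hv hh₁ hh₂
      calc dist (g h₁) (g h₂) ≤ 3 * dist (h₁ : EuclideanSpace ℝ (Fin n)) (h₂ : EuclideanSpace ℝ (Fin n)) := h3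
        _ = 3 * dist h₁ h₂ := by rw [Subtype.dist_eq]
    have hKball : K ⊆ closedBall (0 : H) 1 := by
      intro h hh
      simp only [K, Set.mem_setOf_eq] at hh
      rw [mem_closedBall, dist_zero_right]
      show ‖h‖ ≤ 1
      have hn0 : ‖(h : EuclideanSpace ℝ (Fin n))‖ = ‖h‖ := rfl
      rw [← hn0]
      nlinarith [norm_nonneg (h : EuclideanSpace ℝ (Fin n))]
    rw [sphere_transfer n hn]
    calc μH[(n:ℝ)-1] (Subtype.val '' (C v)) ≤ μH[(n:ℝ)-1] (g '' K) := measure_mono hsub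
      _ ≤ (3:ℝ≥0) ^ ((n:ℝ)-1) * μH[(n:ℝ)-1] K := hlip.hausdorffMeasure_image_le hd
      _ ≤ (3:ℝ≥0) ^ ((n:ℝ)-1) * μH[(n:ℝ)-1] (closedBall (0 : H) 1) :=
          mul_le_mul_right (measure_mono hKball) _
      _ < ⊤ := by
          apply ENNReal.mul_lt_top
          · exact ENNReal.rpow_lt_top_of_nonneg hd (by simp)
          · rw [cast_orth n hn _ hv]
            exact (isCompact_closedBall _ _).measure_lt_top
  calc sphereσ n Set.univ ≤ sphereσ n (⋃ v ∈ t, C v) := measure_mono ht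
    _ ≤ ∑ v ∈ t, sphereσ n (C v) := measure_biUnion_finset_le _ _
    _ < ⊤ := ENNReal.sum_lt_top.2 fun v _ => capFin v
/-- Dual mixed volume type inequality: `Ṽ(K₁,...,Kₙ)ⁿ ≤ V(K₁)⋯V(Kₙ)`, with equality iff
the radial functions are pairwise proportional. -/
theorem dual_mixed_volume_le_prod_volumes
    (n : ℕ) (hn : 0 < n)
    (ρ : Fin n → (sphere (0 : EuclideanSpace ℝ (Fin n)) 1 → ℝ))
    (hcont : ∀ i, Continuous (ρ i))
    (hpos : ∀ i u, 0 < ρ i u)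
    (Vt : ℝ) (hVt : Vt = (1 / n) * ∫ u, (∏ i, ρ i u) ∂(sphereσ n))
    (V : Fin n → ℝ) (hV : ∀ i, V i = (1 / n) * ∫ u, (ρ i u) ^ n ∂(sphereσ n)) :
    Vt ^ n ≤ ∏ i, V i ∧
      (Vt ^ n = ∏ i, V i ↔
        ∀ i j, ∃ c : ℝ, 0 < c ∧ ∀ u, ρ i u = c * ρ j u) := by
  classical
  haveI hfinm : IsFiniteMeasure (sphereσ n) := sphereσ_finite n hn
  haveI hop : (sphereσ n).IsOpenPosMeasure := sphereσ_openPos n hn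
  set μ := sphereσ n with hμ_def
  haveI hSne : Nonempty (sphere (0 : EuclideanSpace ℝ (Fin n)) 1) :=
    ⟨⟨EuclideanSpace.single ⟨0, hn⟩ (1:ℝ), by
      rw [mem_sphere_zero_iff_norm, EuclideanSpace.norm_single]; norm_num⟩⟩
  have hnR : (0:ℝ) < n := by exact_mod_cast hn
  have hnne : (n:ℝ) ≠ 0 := hnR.ne'
  have hint : ∀ f : (sphere (0 : EuclideanSpace ℝ (Fin n)) 1) → ℝ,
      Continuous f → Integrable f μ := fun f hf =>
    hf.integrable_of_hasCompactSupport (HasCompactSupport.of_compactSpace f)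
  set I : Fin n → ℝ := fun i => ∫ u, (ρ i u) ^ n ∂μ with hI_def
  have hIpos : ∀ i, 0 < I i := by
    intro i
    have hinn : ∀ u, 0 < (ρ i u) ^ n := fun u => pow_pos (hpos i u) n
    rw [show I i = ∫ u, (ρ i u) ^ n ∂μ from rfl,
      integral_pos_iff_support_of_nonneg (fun u => (hinn u).le) (hint _ ((hcont i).pow n))]
    have hsupp : (Function.support fun u => (ρ i u) ^ n) = Set.univ := by
      ext u; simp [(hinn u).ne']
    rw [hsupp]
    exact isOpen_univ.measure_pos μ Set.univ_nonempty
  set c : Fin n → ℝ := fun i => (I i) ^ ((1:ℝ)/n) with hc_def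
  have hcpos : ∀ i, 0 < c i := fun i => Real.rpow_pos_of_pos (hIpos i) _
  have hcpow : ∀ i, (c i) ^ n = I i := by
    intro i
    rw [show c i = (I i) ^ ((1:ℝ)/n) from rfl, ← Real.rpow_natCast ((I i) ^ ((1:ℝ)/n)) n,
      ← Real.rpow_mul (hIpos i).le, one_div, inv_mul_cancel₀ hnne, Real.rpow_one]
  set g : Fin n → (sphere (0 : EuclideanSpace ℝ (Fin n)) 1) → ℝ :=
    fun i u => ρ i u / c i with hg_def
  have hgcont : ∀ i, Continuous (g i) := fun i => (hcont i).div_const _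
  have hgpos : ∀ i u, 0 < g i u := fun i u => div_pos (hpos i u) (hcpos i)
  have hcalc : ∀ a b x : ℝ, b ≠ 0 → a / b * (b * x) = a * x := by
    intro a b x hb; field_simp
  have hrho : ∀ i u, ρ i u = c i * g i u := by
    intro i u
    rw [show g i u = ρ i u / c i from rfl, eq_comm, mul_comm]
    exact div_mul_cancel₀ _ (hcpos i).ne'
  have hgint : ∀ i, ∫ u, (g i u) ^ n ∂μ = 1 := by
    intro i
    simp only [hg_def, div_pow]
    rw [integral_div, hcpow i, hI_def, div_self (hIpos i).ne']
  -- pointwise root identity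
  have hroot : ∀ i u, (((g i u) ^ n : ℝ)) ^ ((1:ℝ)/n) = g i u := by
    intro i u
    rw [← Real.rpow_natCast (g i u) n, ← Real.rpow_mul (hgpos i u).le, mul_one_div,
      div_self hnne, Real.rpow_one]
  have hpoint : ∀ u, ∏ i, g i u ≤ ∑ i, (1/(n:ℝ)) * (g i u) ^ n := by
    intro u
    have h1 := Real.geom_mean_le_arith_mean_weighted Finset.univ (fun _ => 1/(n:ℝ))
      (fun i => (g i u) ^ n) (fun i _ => div_nonneg zero_le_one (Nat.cast_nonneg n))
      (by rw [Finset.sum_const, Finset.card_univ, Fintype.card_fin, nsmul_eq_mul]; field_simp)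
      (fun i _ => pow_nonneg (hgpos i u).le n)
    calc ∏ i, g i u = ∏ i, (((g i u) ^ n : ℝ)) ^ ((1:ℝ)/n) :=
          (Finset.prod_congr rfl fun i _ => (hroot i u).symm)
      _ ≤ ∑ i, (1/(n:ℝ)) * (g i u) ^ n := h1
  set F : (sphere (0 : EuclideanSpace ℝ (Fin n)) 1) → ℝ := fun u => ∏ i, g i u with hF_def
  set G : (sphere (0 : EuclideanSpace ℝ (Fin n)) 1) → ℝ :=
    fun u => ∑ i, (1/(n:ℝ)) * (g i u) ^ n with hG_def
  have hFcont : Continuous F := continuous_finset_prod _ fun i _ => hgcont i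
  have hGcont : Continuous G := continuous_finset_sum _ fun i _ => continuous_const.mul ((hgcont i).pow n)
  have hGint : ∫ u, G u ∂μ = 1 := by
    simp only [hG_def]
    rw [integral_finset_sum _ fun i _ => (hint (fun u => (1/(n:ℝ)) * (g i u) ^ n) (continuous_const.mul ((hgcont i).pow n)))]
    rw [Finset.sum_congr rfl fun i (_ : i ∈ Finset.univ) =>
      (by rw [integral_const_mul, hgint i, mul_one] :
        ∫ u, (1/(n:ℝ)) * (g i u) ^ n ∂μ = 1/(n:ℝ))]
    rw [Finset.sum_const, Finset.card_univ, Fintype.card_fin, nsmul_eq_mul]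
    field_simp
  set J : ℝ := ∫ u, F u ∂μ with hJ_def
  have hJ0 : 0 ≤ J := integral_nonneg fun u => Finset.prod_nonneg fun i _ => (hgpos i u).le
  have hJ1 : J ≤ 1 :=
    le_trans ((le_of_eq hJ_def).trans
      (integral_mono (hint F hFcont) (hint G hGcont) hpoint)) (le_of_eq hGint)
  have hVtJ : Vt = (1/(n:ℝ)) * ((∏ i, c i) * J) := by
    rw [hVt]
    congr 1
    calc (∫ u, ∏ i, ρ i u ∂μ) = ∫ u, (∏ i, c i) * F u ∂μ := by
          apply integral_congr_ae
          filter_upwards with u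
          rw [hF_def, ← Finset.prod_mul_distrib]
          exact Finset.prod_congr rfl fun i _ => hrho i u
      _ = (∏ i, c i) * J := by rw [integral_const_mul]
  have hprodV : ∏ i, V i = (1/(n:ℝ)) ^ n * ∏ i, I i := by
    rw [Finset.prod_congr rfl fun i (_ : i ∈ Finset.univ) => hV i,
      Finset.prod_mul_distrib, Finset.prod_const, Finset.card_univ, Fintype.card_fin]
  have hVtpow : Vt ^ n = ((1/(n:ℝ)) ^ n * ∏ i, I i) * J ^ n := by
    rw [hVtJ, mul_pow, mul_pow, ← Finset.prod_pow,
      Finset.prod_congr rfl fun i (_ : i ∈ Finset.univ) => hcpow i]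
    ring
  have hApos : 0 < (1/(n:ℝ)) ^ n * ∏ i, I i := by
    apply mul_pos (pow_pos (by positivity) n)
    exact Finset.prod_pos fun i _ => hIpos i
  have hmain : Vt ^ n ≤ ∏ i, V i := by
    rw [hVtpow, hprodV]
    have hJn : J ^ n ≤ 1 := pow_le_one₀ hJ0 hJ1
    calc ((1/(n:ℝ)) ^ n * ∏ i, I i) * J ^ n ≤ ((1/(n:ℝ)) ^ n * ∏ i, I i) * 1 := by
          exact mul_le_mul_of_nonneg_left hJn hApos.le
      _ = (1/(n:ℝ)) ^ n * ∏ i, I i := mul_one _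
  refine ⟨hmain, ?_, ?_⟩
  · -- equality → proportional
    intro heq
    have hJn : J ^ n = 1 := by
      rw [hVtpow, hprodV] at heq
      have := mul_left_cancel₀ hApos.ne' (heq.trans (mul_one _).symm)
      exact this
    have hJeq : J = 1 := by
      by_contra hne
      have hlt : J < 1 := lt_of_le_of_ne hJ1 hne
      have := pow_lt_one₀ hJ0 hlt hn.ne'
      rw [hJn] at this
      exact lt_irrefl _ this
    have hzero : ∀ u, G u - F u = 0 := by
      have hint0 : ∫ u, (G u - F u) ∂μ = 0 := by
        rw [integral_sub (hint G hGcont) (hint F hFcont), hGint, ← hJ_def, hJeq, sub_self]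
      have hae := (integral_eq_zero_iff_of_nonneg (fun u => sub_nonneg.2 (hpoint u))
        ((hint G hGcont).sub (hint F hFcont))).1 hint0
      have hfe := (Continuous.ae_eq_iff_eq μ (hGcont.sub hFcont) continuous_const).1 hae
      intro u
      exact congrFun hfe u
    have hgeq : ∀ i j u, g i u = g j u := by
      intro i j u
      have hEq : ∑ k, (1/(n:ℝ)) * (g k u) ^ n = ∏ k, g k u := by
        have h0 := hzero u
        simp only [hG_def, hF_def] at h0
        linarith
      by_contra hne
      have hpne : ((g i u) ^ n : ℝ) ≠ (g j u) ^ n := by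
        intro hp
        exact hne (by rw [← hroot i u, ← hroot j u, hp])
      have hjensen := strictConcaveOn_log_Ioi.lt_map_sum (t := Finset.univ)
        (w := fun _ : Fin n => 1/(n:ℝ)) (p := fun k => (g k u) ^ n)
        (fun k _ => div_pos one_pos hnR)
        (by rw [Finset.sum_const, Finset.card_univ, Fintype.card_fin, nsmul_eq_mul]; field_simp)
        (fun k _ => Set.mem_Ioi.2 (pow_pos (hgpos k u) n))
        ⟨i, Finset.mem_univ i, j, Finset.mem_univ j, hpne⟩
      simp only [smul_eq_mul] at hjensen
      rw [hEq] at hjensen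
      have hlhs : ∑ k, (1/(n:ℝ)) * Real.log ((g k u) ^ n) = Real.log (∏ k, g k u) := by
        rw [Real.log_prod fun k _ => (hgpos k u).ne']
        apply Finset.sum_congr rfl
        intro k _
        rw [Real.log_pow]
        field_simp
      rw [hlhs] at hjensen
      exact lt_irrefl _ hjensen
    intro i j
    refine ⟨c i / c j, div_pos (hcpos i) (hcpos j), fun u => ?_⟩
    rw [hrho i u, hrho j u, hgeq i j u, hcalc (c i) (c j) (g j u) (hcpos j).ne']
  · -- proportional → equality
    intro hpro
    choose k hk hkk using fun i => hpro i ⟨0, hn⟩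
    set W : ℝ := (1/(n:ℝ)) * ∫ u, (ρ ⟨0, hn⟩ u) ^ n ∂μ with hW_def
    have hVt' : Vt = (∏ i, k i) * W := by
      rw [hVt, hW_def]
      have hprod : ∀ u, ∏ i, ρ i u = (∏ i, k i) * (ρ ⟨0, hn⟩ u) ^ n := by
        intro u
        rw [Finset.prod_congr rfl fun i (_ : i ∈ Finset.univ) => hkk i u,
          Finset.prod_mul_distrib, Finset.prod_const, Finset.card_univ, Fintype.card_fin]
      rw [integral_congr_ae (Filter.Eventually.of_forall hprod), integral_const_mul]
      ring
    have hVi' : ∀ i, V i = (k i) ^ n * W := by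
      intro i
      rw [hV i, hW_def]
      have hpow : ∀ u, (ρ i u) ^ n = (k i) ^ n * (ρ ⟨0, hn⟩ u) ^ n := by
        intro u
        rw [hkk i u, mul_pow]
      rw [integral_congr_ae (Filter.Eventually.of_forall hpow), integral_const_mul]
      ring
    rw [hVt', Finset.prod_congr rfl fun i (_ : i ∈ Finset.univ) => hVi' i,
      Finset.prod_mul_distrib, Finset.prod_const, Finset.card_univ, Fintype.card_fin,
      Finset.prod_pow]
    ring
end

section
/- Let K₁,...,Kₙ be star bodies in ℝⁿ (positive continuous radial functions on S^{n-1}) and let 1 ≤ r ≤ n. Then the dual Aleksandrov–Fenchel inequality holds: Ṽ(K₁,...,Kₙ) ≤ ∏_{i=1}^{r} Ṽ(Kᵢ,...,Kᵢ,K_{r+1},...,Kₙ)^{1/r}, where in the i-th factor Kᵢ appears r times. Equality holds if and only if K₁,...,K_r are all dilations of each other. -/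
open MeasureTheory Metric Finset

/-- The dual mixed volume of an `n`-tuple of radial functions (indices `0,...,n-1`). -/
noncomputable def dualMixedVol (n : ℕ)
    (f : ℕ → (sphere (0 : EuclideanSpace ℝ (Fin n)) 1 → ℝ)) : ℝ :=
  (1 / n) * ∫ u, (∏ j ∈ Finset.range n, f j u) ∂(sphereσ n)

namespace DAF

variable {n : ℕ}

/-- projection killing coordinate k -/
noncomputable def pk (n : ℕ) (k : Fin n) (x : EuclideanSpace ℝ (Fin n)) :
    EuclideanSpace ℝ (Fin n) := x - (x k) • EuclideanSpace.single k 1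

/-- graph map -/
noncomputable def gm (n : ℕ) (k : Fin n) (s : ℝ) (y : EuclideanSpace ℝ (Fin n)) :
    EuclideanSpace ℝ (Fin n) := y + (s * Real.sqrt (1 - ‖y‖^2)) • EuclideanSpace.single k 1

lemma inner_single (k : Fin n) (x : EuclideanSpace ℝ (Fin n)) :
    inner ℝ (EuclideanSpace.single k (1:ℝ)) x = x k := by
  rw [EuclideanSpace.inner_single_left]; simp

lemma pk_apply_k (k : Fin n) (x : EuclideanSpace ℝ (Fin n)) : pk n k x k = 0 := by
  simp [pk, PiLp.sub_apply, PiLp.smul_apply, EuclideanSpace.single_apply]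

lemma gm_apply_k (k : Fin n) (s : ℝ) (y : EuclideanSpace ℝ (Fin n)) :
    gm n k s y k = y k + s * Real.sqrt (1 - ‖y‖^2) := by
  simp [gm, PiLp.add_apply, PiLp.smul_apply, EuclideanSpace.single_apply]

lemma norm_pk_sq (k : Fin n) (x : EuclideanSpace ℝ (Fin n)) :
    ‖pk n k x‖^2 = ‖x‖^2 - (x k)^2 := by
  have h1 : (inner ℝ x ((x k) • EuclideanSpace.single k (1:ℝ)) : ℝ) = (x k)^2 := by
    rw [real_inner_smul_right, real_inner_comm, inner_single]; ring
  have := @norm_sub_sq_real (EuclideanSpace ℝ (Fin n)) _ _ x ((x k) • EuclideanSpace.single k 1)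
  rw [pk, this, h1, norm_smul, EuclideanSpace.norm_single]
  simp [mul_pow]; ring

lemma pk_sub (k : Fin n) (x y : EuclideanSpace ℝ (Fin n)) :
    pk n k x - pk n k y = pk n k (x - y) := by
  simp only [pk, PiLp.sub_apply]; module

lemma norm_pk_le (k : Fin n) (x : EuclideanSpace ℝ (Fin n)) : ‖pk n k x‖ ≤ ‖x‖ := by
  have h := norm_pk_sq k x
  nlinarith [norm_nonneg (pk n k x), norm_nonneg x, sq_nonneg (x k)]

lemma lipschitz_pk (k : Fin n) : LipschitzWith 1 (pk n k) := by
  apply LipschitzWith.of_dist_le_mul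
  intro x y
  rw [NNReal.coe_one, one_mul, dist_eq_norm, dist_eq_norm, pk_sub]
  exact norm_pk_le k _

lemma norm_gm_sq (k : Fin n) (s : ℝ) {y : EuclideanSpace ℝ (Fin n)} (hy : y k = 0)
    (hy1 : ‖y‖^2 ≤ 1) :
    ‖gm n k s y‖^2 = ‖y‖^2 + s^2 * (1 - ‖y‖^2) := by
  set t := s * Real.sqrt (1 - ‖y‖^2) with ht
  have h1 : (inner ℝ y (t • EuclideanSpace.single k (1:ℝ)) : ℝ) = 0 := by
    rw [real_inner_smul_right, real_inner_comm, inner_single, hy, mul_zero]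
  have := @norm_add_sq_real (EuclideanSpace ℝ (Fin n)) _ _ y (t • EuclideanSpace.single k 1)
  rw [gm, ← ht, this, h1, norm_smul, EuclideanSpace.norm_single]
  have ht2 : (‖t‖ * ‖(1:ℝ)‖)^2 = s^2 * (1 - ‖y‖^2) := by
    rw [norm_one, mul_one, Real.norm_eq_abs, sq_abs, ht, mul_pow,
      Real.sq_sqrt (by linarith : (0:ℝ) ≤ 1 - ‖y‖^2)]
  rw [ht2]; ring

lemma gm_pk (k : Fin n) {s : ℝ} (hs : s = 1 ∨ s = -1) {x : EuclideanSpace ℝ (Fin n)}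
    (hx : ‖x‖ = 1) (hxk : 0 < s * x k) : gm n k s (pk n k x) = x := by
  have hsq : s^2 = 1 := by rcases hs with h | h <;> simp [h]
  have h1 : 1 - ‖pk n k x‖^2 = (x k)^2 := by rw [norm_pk_sq, hx]; ring
  have h2 : Real.sqrt ((x k)^2) = s * x k := by
    rw [Real.sqrt_sq_eq_abs]
    have : |s * x k| = s * x k := abs_of_pos hxk
    rw [abs_mul] at this
    rcases hs with h | h <;> simp [h] at this ⊢ <;> linarith [this]
  rw [gm, h1, h2]
  have : s * (s * x k) = x k := by
    have : s * (s * x k) = s^2 * x k := by ring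
    rw [this, hsq, one_mul]
  rw [this, pk]; module

lemma pk_gm (k : Fin n) (s : ℝ) {y : EuclideanSpace ℝ (Fin n)} (hy : y k = 0) :
    pk n k (gm n k s y) = y := by
  rw [pk, gm_apply_k, hy, zero_add, gm]; module

lemma gm_sub (k : Fin n) (s : ℝ) (y₁ y₂ : EuclideanSpace ℝ (Fin n)) :
    gm n k s y₁ - gm n k s y₂ = (y₁ - y₂) +
      (s * (Real.sqrt (1 - ‖y₁‖^2) - Real.sqrt (1 - ‖y₂‖^2))) • EuclideanSpace.single k 1 := by
  rw [gm, gm]; module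

lemma gm_lipschitzOn (k : Fin n) {s δ : ℝ} (hs : s = 1 ∨ s = -1) (hδ : 0 < δ) :
    LipschitzOnWith (1 + δ⁻¹).toNNReal (gm n k s)
      {y : EuclideanSpace ℝ (Fin n) | y k = 0 ∧ ‖y‖^2 ≤ 1 - δ^2} := by
  apply LipschitzOnWith.of_dist_le_mul
  rintro y₁ ⟨-, h1⟩ y₂ ⟨-, h2⟩
  have hn1 : (0:ℝ) ≤ ‖y₁‖ := norm_nonneg _
  have hn2 : (0:ℝ) ≤ ‖y₂‖ := norm_nonneg _
  set t₁ := Real.sqrt (1 - ‖y₁‖^2) with ht₁def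
  set t₂ := Real.sqrt (1 - ‖y₂‖^2) with ht₂def
  have hδsq : (0:ℝ) ≤ δ^2 := sq_nonneg δ
  have ht₁ : δ ≤ t₁ := by
    rw [show δ = Real.sqrt (δ^2) by rw [Real.sqrt_sq hδ.le], ht₁def]
    exact Real.sqrt_le_sqrt (by linarith)
  have ht₂ : δ ≤ t₂ := by
    rw [show δ = Real.sqrt (δ^2) by rw [Real.sqrt_sq hδ.le], ht₂def]
    exact Real.sqrt_le_sqrt (by linarith)
  have ht₁sq : t₁^2 = 1 - ‖y₁‖^2 := Real.sq_sqrt (by linarith)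
  have ht₂sq : t₂^2 = 1 - ‖y₂‖^2 := Real.sq_sqrt (by linarith)
  have hd : |t₁ - t₂| ≤ δ⁻¹ * ‖y₁ - y₂‖ := by
    have h3 : |t₁ - t₂| * (t₁ + t₂) = |t₁^2 - t₂^2| := by
      rw [← abs_of_pos (show (0:ℝ) < t₁ + t₂ by linarith), ← abs_mul]
      congr 1; ring
    have hnn : |‖y₂‖ - ‖y₁‖| ≤ ‖y₁ - y₂‖ := by
      rw [norm_sub_rev]; exact abs_norm_sub_norm_le y₂ y₁
    have h4 : |t₁^2 - t₂^2| ≤ 2 * ‖y₁ - y₂‖ := by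
      rw [ht₁sq, ht₂sq, show 1 - ‖y₁‖^2 - (1 - ‖y₂‖^2) = (‖y₂‖ - ‖y₁‖) * (‖y₂‖ + ‖y₁‖) by ring,
        abs_mul, abs_of_nonneg (by linarith : (0:ℝ) ≤ ‖y₂‖ + ‖y₁‖)]
      have hle1 : ‖y₁‖ ≤ 1 := by nlinarith
      have hle2 : ‖y₂‖ ≤ 1 := by nlinarith
      nlinarith [abs_nonneg (‖y₂‖ - ‖y₁‖)]
    have h5 : |t₁ - t₂| * (2*δ) ≤ 2 * ‖y₁ - y₂‖ := by
      nlinarith [abs_nonneg (t₁ - t₂)]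
    rw [inv_mul_eq_div, le_div_iff₀ hδ]
    linarith
  have habs : |s| = 1 := by rcases hs with h | h <;> simp [h]
  rw [dist_eq_norm, dist_eq_norm, gm_sub, ← ht₁def, ← ht₂def]
  calc ‖(y₁ - y₂) + (s * (t₁ - t₂)) • EuclideanSpace.single k (1:ℝ)‖
      ≤ ‖y₁ - y₂‖ + ‖(s * (t₁ - t₂)) • EuclideanSpace.single k (1:ℝ)‖ := norm_add_le _ _
    _ = ‖y₁ - y₂‖ + |t₁ - t₂| := by
        rw [norm_smul, EuclideanSpace.norm_single, norm_one, mul_one, Real.norm_eq_abs,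
          abs_mul, habs, one_mul]
    _ ≤ ‖y₁ - y₂‖ + δ⁻¹ * ‖y₁ - y₂‖ := by linarith
    _ = (1 + δ⁻¹).toNNReal * ‖y₁ - y₂‖ := by
        rw [Real.coe_toNNReal _ (by positivity)]; ring

lemma coord_abs_le (k : Fin n) (x : EuclideanSpace ℝ (Fin n)) : |x k| ≤ ‖x‖ := by
  have := abs_real_inner_le_norm (EuclideanSpace.single k (1:ℝ)) x
  rwa [inner_single, EuclideanSpace.norm_single, norm_one, one_mul] at this

noncomputable def Hpl (n : ℕ) (k : Fin n) : Submodule ℝ (EuclideanSpace ℝ (Fin n)) :=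
  (ℝ ∙ EuclideanSpace.single k (1:ℝ))ᗮ

lemma mem_Hpl {k : Fin n} {y : EuclideanSpace ℝ (Fin n)} : y ∈ Hpl n k ↔ y k = 0 := by
  rw [Hpl, Submodule.mem_orthogonal_singleton_iff_inner_right, inner_single]

lemma finrank_Hpl (k : Fin n) : Module.finrank ℝ (Hpl n k) = n - 1 := by
  have h1 : Module.finrank ℝ (ℝ ∙ EuclideanSpace.single k (1:ℝ)) = 1 := by
    apply finrank_span_singleton
    intro h
    have := EuclideanSpace.norm_single k (1:ℝ)
    rw [h, norm_zero, norm_one] at this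
    exact zero_ne_one this
  have h2 := Submodule.finrank_add_finrank_orthogonal (𝕜 := ℝ) (ℝ ∙ EuclideanSpace.single k (1:ℝ))
  rw [h1, finrank_euclideanSpace_fin] at h2
  rw [Hpl]; omega

lemma measure_Hpl_ball_lt_top (hn : 1 ≤ n) (k : Fin n) :
    μH[(n:ℝ)-1] ((Hpl n k : Set (EuclideanSpace ℝ (Fin n))) ∩ closedBall 0 1) < ⊤ := by
  have hd : (0:ℝ) ≤ (n:ℝ) - 1 := by
    have : (1:ℝ) ≤ (n:ℝ) := by exact_mod_cast hn
    linarith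
  set A : Set (Hpl n k) := Subtype.val ⁻¹' closedBall 0 1 with hA
  have hAcb : A = closedBall (0 : Hpl n k) 1 := by
    ext y; simp [hA, Metric.mem_closedBall, dist_eq_norm]
  have hAc : IsCompact A := by rw [hAcb]; exact isCompact_closedBall _ _
  have him : Subtype.val '' A = ((Hpl n k : Set (EuclideanSpace ℝ (Fin n))) ∩ closedBall 0 1) :=
    Subtype.image_preimage_coe _ _
  rw [← him, Isometry.hausdorffMeasure_image isometry_subtype_coe (Or.inl hd)]
  have hfr : ((Module.finrank ℝ (Hpl n k) : ℝ)) = (n:ℝ) - 1 := by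
    rw [finrank_Hpl]; push_cast [Nat.cast_sub hn]; ring
  rw [← hfr]
  exact hAc.measure_lt_top

lemma sphere_subset_caps (hn : 1 ≤ n) :
    (sphere (0 : EuclideanSpace ℝ (Fin n)) 1 : Set (EuclideanSpace ℝ (Fin n))) ⊆
      ⋃ k : Fin n,
        ({x | ‖x‖ = 1 ∧ Real.sqrt (n:ℝ)⁻¹ ≤ 1 * x k} ∪
         {x | ‖x‖ = 1 ∧ Real.sqrt (n:ℝ)⁻¹ ≤ (-1) * x k}) := by
  intro x hx
  have hx1 : ‖x‖ = 1 := by simpa using hx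
  have hsum : ∑ i : Fin n, (x i)^2 = 1 := by
    have := EuclideanSpace.norm_eq x
    rw [hx1] at this
    have h2 : (1:ℝ) = Real.sqrt (∑ i : Fin n, ‖x i‖^2) := this
    have h3 : ∑ i : Fin n, ‖x i‖^2 = ∑ i : Fin n, (x i)^2 := by
      congr 1; ext i; rw [Real.norm_eq_abs, sq_abs]
    have h4 := congrArg (fun t => t^2) h2
    simp only [Real.sq_sqrt (by positivity : (0:ℝ) ≤ ∑ i : Fin n, ‖x i‖^2)] at h4
    rw [← h3]; simpa using h4.symm
  have hk : ∃ k : Fin n, (n:ℝ)⁻¹ ≤ (x k)^2 := by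
    by_contra hcon
    push_neg at hcon
    have hne : (Finset.univ : Finset (Fin n)).Nonempty := by
      rw [Finset.univ_nonempty_iff]
      exact Fin.pos_iff_nonempty.mp hn
    have := Finset.sum_lt_sum_of_nonempty hne (fun i _ => hcon i)
    rw [hsum, Finset.sum_const, Finset.card_univ, Fintype.card_fin, nsmul_eq_mul] at this
    rw [mul_inv_cancel₀ (Nat.cast_ne_zero.mpr (by omega))] at this
    exact lt_irrefl 1 this
  obtain ⟨k, hk⟩ := hk
  have habs : Real.sqrt (n:ℝ)⁻¹ ≤ |x k| := by
    rw [← Real.sqrt_sq_eq_abs]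
    exact Real.sqrt_le_sqrt hk
  apply Set.mem_iUnion.mpr
  refine ⟨k, ?_⟩
  rcases le_or_gt 0 (x k) with h | h
  · exact Or.inl ⟨hx1, by rwa [one_mul, ← abs_of_nonneg h]⟩
  · exact Or.inr ⟨hx1, by rw [neg_one_mul, ← abs_of_neg h]; exact habs⟩

lemma cap_subset_image (k : Fin n) {s δ : ℝ} (hs : s = 1 ∨ s = -1) (hδ : 0 < δ) :
    {x : EuclideanSpace ℝ (Fin n) | ‖x‖ = 1 ∧ δ ≤ s * x k} ⊆
      gm n k s '' {y | y k = 0 ∧ ‖y‖^2 ≤ 1 - δ^2} := by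
  rintro x ⟨hx, hxk⟩
  have hsq : s^2 = 1 := by rcases hs with h | h <;> simp [h]
  have hxk2 : δ^2 ≤ (x k)^2 := by nlinarith
  refine ⟨pk n k x, ⟨pk_apply_k k x, ?_⟩, gm_pk k hs hx (by linarith)⟩
  rw [norm_pk_sq, hx]; nlinarith

lemma sphere_hausdorff_lt_top (hn : 1 ≤ n) :
    μH[(n:ℝ)-1] (sphere (0 : EuclideanSpace ℝ (Fin n)) 1 :
      Set (EuclideanSpace ℝ (Fin n))) < ⊤ := by
  have hd : (0:ℝ) ≤ (n:ℝ) - 1 := by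
    have : (1:ℝ) ≤ (n:ℝ) := by exact_mod_cast hn
    linarith
  set δ : ℝ := Real.sqrt (n:ℝ)⁻¹ with hδdef
  have hδ : 0 < δ := Real.sqrt_pos.mpr (by positivity)
  have capbound : ∀ (k : Fin n) (s : ℝ), s = 1 ∨ s = -1 →
      μH[(n:ℝ)-1] {x : EuclideanSpace ℝ (Fin n) | ‖x‖ = 1 ∧ δ ≤ s * x k} < ⊤ := by
    intro k s hs
    calc μH[(n:ℝ)-1] {x : EuclideanSpace ℝ (Fin n) | ‖x‖ = 1 ∧ δ ≤ s * x k}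
        ≤ μH[(n:ℝ)-1] (gm n k s '' {y | y k = 0 ∧ ‖y‖^2 ≤ 1 - δ^2}) :=
          measure_mono (cap_subset_image k hs hδ)
      _ ≤ ((1 + δ⁻¹).toNNReal : ENNReal) ^ ((n:ℝ)-1) *
            μH[(n:ℝ)-1] {y : EuclideanSpace ℝ (Fin n) | y k = 0 ∧ ‖y‖^2 ≤ 1 - δ^2} :=
          (gm_lipschitzOn k hs hδ).hausdorffMeasure_image_le hd
      _ < ⊤ := by
          apply ENNReal.mul_lt_top
          · exact ENNReal.rpow_lt_top_of_nonneg hd ENNReal.coe_ne_top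
          · refine lt_of_le_of_lt (measure_mono ?_) (measure_Hpl_ball_lt_top hn k)
            rintro y ⟨hy0, hy1⟩
            refine ⟨mem_Hpl.mpr hy0, ?_⟩
            rw [Metric.mem_closedBall, dist_zero_right]
            nlinarith [norm_nonneg y, sq_nonneg δ]
  calc μH[(n:ℝ)-1] (sphere (0 : EuclideanSpace ℝ (Fin n)) 1 : Set (EuclideanSpace ℝ (Fin n)))
      ≤ μH[(n:ℝ)-1] (⋃ k : Fin n,
          ({x : EuclideanSpace ℝ (Fin n) | ‖x‖ = 1 ∧ δ ≤ 1 * x k} ∪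
           {x | ‖x‖ = 1 ∧ δ ≤ (-1) * x k})) := measure_mono (sphere_subset_caps hn)
    _ ≤ ∑ k : Fin n, μH[(n:ℝ)-1]
          ({x : EuclideanSpace ℝ (Fin n) | ‖x‖ = 1 ∧ δ ≤ 1 * x k} ∪
           {x | ‖x‖ = 1 ∧ δ ≤ (-1) * x k}) := measure_iUnion_fintype_le _ _
    _ < ⊤ := by
        apply ENNReal.sum_lt_top.mpr
        intro k _
        exact lt_of_le_of_lt (measure_union_le _ _)
          (ENNReal.add_lt_top.mpr ⟨capbound k 1 (Or.inl rfl), capbound k (-1) (Or.inr rfl)⟩)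

lemma continuous_gm (k : Fin n) (s : ℝ) : Continuous (gm n k s) := by
  unfold gm
  exact continuous_id.add
    (((continuous_const.mul ((Real.continuous_sqrt).comp
      (continuous_const.sub ((continuous_norm).pow 2)))).smul continuous_const))

lemma hausdorff_pos_of_sphere_open (hn : 1 ≤ n)
    {V : Set (EuclideanSpace ℝ (Fin n))} (hVo : IsOpen V)
    {x : EuclideanSpace ℝ (Fin n)} (hx1 : ‖x‖ = 1) (hxV : x ∈ V) :
    0 < μH[(n:ℝ)-1] (V ∩ {z : EuclideanSpace ℝ (Fin n) | ‖z‖ = 1}) := by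
  have hd : (0:ℝ) ≤ (n:ℝ) - 1 := by
    have : (1:ℝ) ≤ (n:ℝ) := by exact_mod_cast hn
    linarith
  -- find the coordinate and sign
  have hcap := sphere_subset_caps hn (show x ∈ sphere (0 : EuclideanSpace ℝ (Fin n)) 1 by simpa [mem_sphere_iff_norm] using hx1)
  rw [Set.mem_iUnion] at hcap
  obtain ⟨k, hcapk⟩ := hcap
  set δ : ℝ := Real.sqrt (n:ℝ)⁻¹ with hδdef
  have hδ : 0 < δ := Real.sqrt_pos.mpr (by positivity)
  obtain ⟨s, hs, hsk⟩ : ∃ s : ℝ, (s = 1 ∨ s = -1) ∧ δ ≤ s * x k := by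
    rcases hcapk with h | h
    · exact ⟨1, Or.inl rfl, h.2⟩
    · exact ⟨-1, Or.inr rfl, h.2⟩
  have hssq : s^2 = 1 := by rcases hs with h | h <;> simp [h]
  -- choose ε
  obtain ⟨ε₀, hε₀, hball⟩ := Metric.isOpen_iff.mp hVo x hxV
  set ε : ℝ := min ε₀ (δ/2) with hεdef
  have hε : 0 < ε := lt_min hε₀ (by linarith)
  have hballV : ball x ε ⊆ V := fun z hz => hball (ball_subset_ball (min_le_left _ _) hz)
  -- the relatively open set in the hyperplane
  set O : Set (EuclideanSpace ℝ (Fin n)) :=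
    {y | ‖y‖ < 1} ∩ gm n k s ⁻¹' (ball x ε) with hOdef
  have hOopen : IsOpen O := by
    apply IsOpen.inter
    · exact isOpen_lt continuous_norm continuous_const
    · exact (continuous_gm k s).isOpen_preimage _ isOpen_ball
  set W : Set (EuclideanSpace ℝ (Fin n)) := {y | y k = 0} ∩ O with hWdef
  -- W is contained in pk '' (V ∩ sphere)
  have hWsub : W ⊆ pk n k '' (V ∩ {z | ‖z‖ = 1}) := by
    rintro y ⟨hy0, hy1, hyball⟩
    have hy0' : y k = 0 := hy0
    have hy1' : ‖y‖ < 1 := hy1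
    have hgm1 : ‖gm n k s y‖ = 1 := by
      have := norm_gm_sq k s hy0' (by nlinarith [norm_nonneg y] : ‖y‖^2 ≤ 1)
      rw [hssq] at this
      have h2 : ‖gm n k s y‖^2 = 1 := by rw [this]; ring
      nlinarith [norm_nonneg (gm n k s y)]
    exact ⟨gm n k s y, ⟨hballV hyball, hgm1⟩, pk_gm k s hy0'⟩
  -- W is nonempty and relatively open, so it has positive measure
  have hxk2 : 0 < (x k)^2 := by nlinarith
  have hpkx : pk n k x ∈ W := by
    refine ⟨pk_apply_k k x, ?_, ?_⟩
    · show ‖pk n k x‖ < 1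
      have := norm_pk_sq k x
      rw [hx1] at this
      nlinarith [norm_nonneg (pk n k x)]
    · show gm n k s (pk n k x) ∈ ball x ε
      rw [gm_pk k hs hx1 (by linarith)]
      exact mem_ball_self hε
  have hWpos : 0 < μH[(n:ℝ)-1] W := by
    have him : Subtype.val '' ((Subtype.val : Hpl n k → EuclideanSpace ℝ (Fin n)) ⁻¹' O) =
        (Hpl n k : Set (EuclideanSpace ℝ (Fin n))) ∩ O := Subtype.image_preimage_coe _ _
    have hWeq : W = (Hpl n k : Set (EuclideanSpace ℝ (Fin n))) ∩ O := by
      rw [hWdef]; ext y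
      simp only [Set.mem_inter_iff, Set.mem_setOf_eq, SetLike.mem_coe, mem_Hpl]
    rw [hWeq, ← him, Isometry.hausdorffMeasure_image isometry_subtype_coe (Or.inl hd)]
    have hfr : ((Module.finrank ℝ (Hpl n k) : ℝ)) = (n:ℝ) - 1 := by
      rw [finrank_Hpl]; push_cast [Nat.cast_sub hn]; ring
    rw [← hfr]
    haveI : (μH[(Module.finrank ℝ (Hpl n k) : ℝ)] :
        Measure (Hpl n k)).IsAddHaarMeasure := isAddHaarMeasure_hausdorffMeasure
    exact (continuous_subtype_val.isOpen_preimage _ hOopen).measure_pos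
      (μH[(Module.finrank ℝ (Hpl n k) : ℝ)])
      ⟨⟨pk n k x, mem_Hpl.mpr (pk_apply_k k x)⟩, hpkx.2⟩
  calc (0:ENNReal) < μH[(n:ℝ)-1] W := hWpos
    _ ≤ μH[(n:ℝ)-1] (pk n k '' (V ∩ {z | ‖z‖ = 1})) := measure_mono hWsub
    _ ≤ ((1:NNReal) : ENNReal) ^ ((n:ℝ)-1) * μH[(n:ℝ)-1] (V ∩ {z | ‖z‖ = 1}) :=
        (lipschitz_pk k).hausdorffMeasure_image_le hd _
    _ = μH[(n:ℝ)-1] (V ∩ {z | ‖z‖ = 1}) := by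
        rw [ENNReal.coe_one, ENNReal.one_rpow, one_mul]

lemma sphere_set_eq :
    (sphere (0 : EuclideanSpace ℝ (Fin n)) 1 : Set (EuclideanSpace ℝ (Fin n))) =
      {z : EuclideanSpace ℝ (Fin n) | ‖z‖ = 1} := by
  ext z; simp [mem_sphere_iff_norm]

lemma sphereσ_finite (hn : 1 ≤ n) : IsFiniteMeasure (sphereσ n) := by
  constructor
  have hd : (0:ℝ) ≤ (n:ℝ) - 1 := by
    have : (1:ℝ) ≤ (n:ℝ) := by exact_mod_cast hn
    linarith
  have h := Isometry.hausdorffMeasure_image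
    (isometry_subtype_coe (s := (sphere (0 : EuclideanSpace ℝ (Fin n)) 1 :
      Set (EuclideanSpace ℝ (Fin n))))) (Or.inl hd) Set.univ
  rw [Set.image_univ, Subtype.range_coe] at h
  show μH[(n:ℝ)-1] Set.univ < ⊤
  rw [← h]
  exact sphere_hausdorff_lt_top hn

lemma sphereσ_openPos (hn : 1 ≤ n) : (sphereσ n).IsOpenPosMeasure := by
  have hd : (0:ℝ) ≤ (n:ℝ) - 1 := by
    have : (1:ℝ) ≤ (n:ℝ) := by exact_mod_cast hn
    linarith
  constructor
  intro U hU hUne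
  obtain ⟨T, hT, hTU⟩ := isOpen_induced_iff.mp hU
  obtain ⟨x₀, hx₀⟩ := hUne
  have hx₀1 : ‖(x₀ : EuclideanSpace ℝ (Fin n))‖ = 1 := by
    have := x₀.2; rw [mem_sphere_iff_norm, sub_zero] at this; exact this
  have hx₀T : (x₀ : EuclideanSpace ℝ (Fin n)) ∈ T := by
    rw [← hTU] at hx₀; exact hx₀
  show μH[(n:ℝ)-1] U ≠ 0
  have h := Isometry.hausdorffMeasure_image
    (isometry_subtype_coe (s := (sphere (0 : EuclideanSpace ℝ (Fin n)) 1 :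
      Set (EuclideanSpace ℝ (Fin n))))) (Or.inl hd) U
  rw [← h]
  have himg : Subtype.val '' U = T ∩ {z : EuclideanSpace ℝ (Fin n) | ‖z‖ = 1} := by
    rw [← hTU, Subtype.image_preimage_coe, sphere_set_eq, Set.inter_comm]
  rw [himg]
  exact (hausdorff_pos_of_sphere_open hn hT hx₀1 hx₀T).ne'

lemma amgm_le {r : ℕ} (hr1 : 1 ≤ r) {x : ℕ → ℝ} (hx : ∀ i ∈ Finset.range r, (0:ℝ) ≤ x i) :
    ∏ i ∈ Finset.range r, x i ^ ((r:ℝ)⁻¹) ≤ ∑ i ∈ Finset.range r, (r:ℝ)⁻¹ * x i := by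
  have hrne : (r:ℝ) ≠ 0 := Nat.cast_ne_zero.mpr (by omega)
  exact Real.geom_mean_le_arith_mean_weighted (Finset.range r) (fun _ => (r:ℝ)⁻¹) x
    (fun i _ => by positivity)
    (by rw [Finset.sum_const, Finset.card_range, nsmul_eq_mul, mul_inv_cancel₀ hrne]) hx

lemma amgm_eq {r : ℕ} (hr1 : 1 ≤ r) {x : ℕ → ℝ} (hx : ∀ i ∈ Finset.range r, (0:ℝ) < x i)
    (heq : ∑ i ∈ Finset.range r, (r:ℝ)⁻¹ * x i ≤ ∏ i ∈ Finset.range r, x i ^ ((r:ℝ)⁻¹)) :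
    ∀ i ∈ Finset.range r, ∀ j ∈ Finset.range r, x i = x j := by
  have hrne : (r:ℝ) ≠ 0 := Nat.cast_ne_zero.mpr (by omega)
  have hrpos : (0:ℝ) < (r:ℝ)⁻¹ := by positivity
  have hsumpos : 0 < ∑ i ∈ Finset.range r, (r:ℝ)⁻¹ * x i :=
    Finset.sum_pos (fun i hi => mul_pos hrpos (hx i hi)) ⟨0, Finset.mem_range.mpr (by omega)⟩
  have hlogprod : Real.log (∏ i ∈ Finset.range r, x i ^ ((r:ℝ)⁻¹)) =
      ∑ i ∈ Finset.range r, (r:ℝ)⁻¹ * Real.log (x i) := by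
    rw [Real.log_prod (fun i hi => by
      have := hx i hi
      exact ne_of_gt (Real.rpow_pos_of_pos this _))]
    exact Finset.sum_congr rfl (fun i hi => Real.log_rpow (hx i hi) _)
  have h_eq : Real.log (∑ i ∈ Finset.range r, (fun _ => (r:ℝ)⁻¹) i • x i) ≤
      ∑ i ∈ Finset.range r, (fun _ => (r:ℝ)⁻¹) i • Real.log (x i) := by
    simp only [smul_eq_mul]
    calc Real.log (∑ i ∈ Finset.range r, (r:ℝ)⁻¹ * x i)
        ≤ Real.log (∏ i ∈ Finset.range r, x i ^ ((r:ℝ)⁻¹)) :=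
          Real.log_le_log hsumpos heq
      _ = ∑ i ∈ Finset.range r, (r:ℝ)⁻¹ * Real.log (x i) := hlogprod
  exact fun i hi j hj => strictConcaveOn_log_Ioi.eq_of_map_sum_eq
    (fun i _ => hrpos) (by rw [Finset.sum_const, Finset.card_range, nsmul_eq_mul,
      mul_inv_cancel₀ hrne]) (fun i hi => hx i hi) h_eq hi hj

end DAF

/-- The dual Aleksandrov–Fenchel inequality:
`Ṽ(K₁,...,Kₙ) ≤ ∏_{i<r} Ṽ(Kᵢ [r], K_{r+1},...,Kₙ)^{1/r}`, with equality iff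
`K₁,...,K_r` are all dilations of each other. -/
theorem dual_aleksandrov_fenchel
    (n r : ℕ) (hr1 : 1 ≤ r) (hrn : r ≤ n)
    (ρ : ℕ → (sphere (0 : EuclideanSpace ℝ (Fin n)) 1 → ℝ))
    (hcont : ∀ i < n, Continuous (ρ i))
    (hpos : ∀ i < n, ∀ u, 0 < ρ i u) :
    dualMixedVol n ρ ≤
        ∏ i ∈ Finset.range r,
          (dualMixedVol n (fun j => if j < r then ρ i else ρ j)) ^ ((r : ℝ)⁻¹) ∧
      (dualMixedVol n ρ =
          (∏ i ∈ Finset.range r,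
            (dualMixedVol n (fun j => if j < r then ρ i else ρ j)) ^ ((r : ℝ)⁻¹)) ↔
        ∀ i < r, ∀ j < r, ∃ c : ℝ, 0 < c ∧ ∀ u, ρ i u = c * ρ j u) := by
  classical
  have hn : 1 ≤ n := le_trans hr1 hrn
  haveI := DAF.sphereσ_finite hn
  haveI := DAF.sphereσ_openPos hn
  haveI : Nonempty (sphere (0 : EuclideanSpace ℝ (Fin n)) 1) := by
    refine ⟨⟨EuclideanSpace.single ⟨0, hn⟩ 1, ?_⟩⟩
    rw [mem_sphere_iff_norm, sub_zero, EuclideanSpace.norm_single, norm_one]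
  set μ := sphereσ n with hμ
  have hrR : (0:ℝ) < r := by exact_mod_cast hr1
  have hrne : (r:ℝ) ≠ 0 := ne_of_gt hrR
  have hnR : (0:ℝ) < n := by exact_mod_cast hn
  set Q : sphere (0 : EuclideanSpace ℝ (Fin n)) 1 → ℝ :=
    fun u => ∏ j ∈ Finset.Ico r n, ρ j u with hQ
  have hQcont : Continuous Q :=
    continuous_finset_prod _ (fun j hj => hcont j (Finset.mem_Ico.mp hj).2)
  have hQpos : ∀ u, 0 < Q u :=
    fun u => Finset.prod_pos (fun j hj => hpos j (Finset.mem_Ico.mp hj).2 u)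
  set g : ℕ → sphere (0 : EuclideanSpace ℝ (Fin n)) 1 → ℝ :=
    fun i u => ρ i u ^ r * Q u with hg
  have hgcont : ∀ i < r, Continuous (g i) :=
    fun i hi => ((hcont i (lt_of_lt_of_le hi hrn)).pow r).mul hQcont
  have hgpos : ∀ i < r, ∀ u, 0 < g i u :=
    fun i hi u => mul_pos (pow_pos (hpos i (lt_of_lt_of_le hi hrn) u) r) (hQpos u)
  have hint : ∀ f : sphere (0 : EuclideanSpace ℝ (Fin n)) 1 → ℝ,
      Continuous f → Integrable f μ := fun f hf =>
    hf.integrable_of_hasCompactSupport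
      (IsCompact.of_isClosed_subset isCompact_univ (isClosed_tsupport f) (Set.subset_univ _))
  -- product splitting
  have hsplit : ∀ u, ∏ j ∈ Finset.range n, ρ j u = (∏ i ∈ Finset.range r, ρ i u) * Q u := by
    intro u
    rw [hQ, Finset.range_eq_Ico, ← Finset.prod_Ico_consecutive _ (Nat.zero_le r) hrn,
      ← Finset.range_eq_Ico]
  have hsplit2 : ∀ i u, ∏ j ∈ Finset.range n, (if j < r then ρ i else ρ j) u = g i u := by
    intro i u
    rw [Finset.range_eq_Ico, ← Finset.prod_Ico_consecutive _ (Nat.zero_le r) hrn]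
    have e1 : ∏ j ∈ Finset.Ico 0 r, (if j < r then ρ i else ρ j) u = ρ i u ^ r := by
      rw [← Finset.range_eq_Ico,
        Finset.prod_congr rfl (fun j hj => by rw [if_pos (Finset.mem_range.mp hj)]),
        Finset.prod_const, Finset.card_range]
    have e2 : ∏ j ∈ Finset.Ico r n, (if j < r then ρ i else ρ j) u = Q u :=
      Finset.prod_congr rfl (fun j hj => by rw [if_neg (not_lt.mpr (Finset.mem_Ico.mp hj).1)])
    rw [e1, e2]
  set V : ℕ → ℝ := fun i => ∫ u, g i u ∂μ with hV
  have hVpos : ∀ i < r, 0 < V i := by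
    intro i hi
    rw [hV]
    rw [integral_pos_iff_support_of_nonneg (fun u => (hgpos i hi u).le) (hint _ (hgcont i hi))]
    have hsupp : Function.support (g i) = Set.univ :=
      Set.eq_univ_of_forall (fun u => (hgpos i hi u).ne')
    rw [hsupp]
    exact isOpen_univ.measure_pos μ Set.univ_nonempty
  have hdmv : ∀ i, dualMixedVol n (fun j => if j < r then ρ i else ρ j) = (1/(n:ℝ)) * V i := by
    intro i
    have : (fun u => ∏ j ∈ Finset.range n, (if j < r then ρ i else ρ j) u) = g i :=
      funext (hsplit2 i)
    rw [dualMixedVol]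
    congr 1
    rw [hV, ← hμ]
    exact congrArg (fun f => ∫ u, f u ∂μ) this
  set C : ℝ := ∏ i ∈ Finset.range r, (V i) ^ ((r:ℝ)⁻¹) with hC
  have hCpos : 0 < C :=
    Finset.prod_pos fun i hi => Real.rpow_pos_of_pos (hVpos i (Finset.mem_range.mp hi)) _
  -- pointwise identity ∏ (g i u)^{1/r} = ∏_{j<n} ρ j u
  have hA : ∀ u, ∏ i ∈ Finset.range r, (g i u) ^ ((r:ℝ)⁻¹) = ∏ j ∈ Finset.range n, ρ j u := by
    intro u
    have h1 : ∀ i ∈ Finset.range r, (g i u) ^ ((r:ℝ)⁻¹) = ρ i u * (Q u) ^ ((r:ℝ)⁻¹) := by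
      intro i hi
      have hρ := hpos i (lt_of_lt_of_le (Finset.mem_range.mp hi) hrn) u
      rw [hg]
      show (ρ i u ^ r * Q u) ^ ((r:ℝ)⁻¹) = _
      rw [Real.mul_rpow (by positivity) (hQpos u).le, ← Real.rpow_natCast (ρ i u) r,
        ← Real.rpow_mul hρ.le, mul_inv_cancel₀ hrne, Real.rpow_one]
    rw [Finset.prod_congr rfl h1, Finset.prod_mul_distrib, Finset.prod_const, Finset.card_range,
      ← Real.rpow_natCast ((Q u) ^ ((r:ℝ)⁻¹)) r, ← Real.rpow_mul (hQpos u).le,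
      inv_mul_cancel₀ hrne, Real.rpow_one, hsplit u]
  have hprod_div : ∀ u, ∏ i ∈ Finset.range r, (g i u / V i) ^ ((r:ℝ)⁻¹)
      = (∏ j ∈ Finset.range n, ρ j u) / C := by
    intro u
    rw [← hA u, hC, ← Finset.prod_div_distrib]
    exact Finset.prod_congr rfl fun i hi =>
      Real.div_rpow (hgpos i (Finset.mem_range.mp hi) u).le (hVpos i (Finset.mem_range.mp hi)).le _
  -- integral of the arithmetic-mean side is 1
  have harith : ∫ u, (∑ i ∈ Finset.range r, (r:ℝ)⁻¹ * (g i u / V i)) ∂μ = 1 := by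
    rw [integral_finset_sum _ (fun i hi => (((hint _ (hgcont i (Finset.mem_range.mp hi))).div_const
      (V i)).const_mul ((r:ℝ)⁻¹)))]
    have : ∀ i ∈ Finset.range r, ∫ u, (r:ℝ)⁻¹ * (g i u / V i) ∂μ = (r:ℝ)⁻¹ := by
      intro i hi
      rw [MeasureTheory.integral_const_mul, MeasureTheory.integral_div,
        show (∫ a, g i a ∂μ) = V i from rfl,
        div_self (hVpos i (Finset.mem_range.mp hi)).ne', mul_one]
    rw [Finset.sum_congr rfl this, Finset.sum_const, Finset.card_range, nsmul_eq_mul,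
      mul_inv_cancel₀ hrne]
  -- integral of the geometric-mean side
  set I : ℝ := ∫ u, (∏ j ∈ Finset.range n, ρ j u) ∂μ with hI
  have hgeom : ∫ u, (∏ i ∈ Finset.range r, (g i u / V i) ^ ((r:ℝ)⁻¹)) ∂μ = I / C := by
    rw [show (fun u => ∏ i ∈ Finset.range r, (g i u / V i) ^ ((r:ℝ)⁻¹)) =
      (fun u => (∏ j ∈ Finset.range n, ρ j u) / C) from funext hprod_div]
    rw [MeasureTheory.integral_div, ← hI]
  -- the AM-GM gap function
  set F : sphere (0 : EuclideanSpace ℝ (Fin n)) 1 → ℝ :=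
    fun u => (∑ i ∈ Finset.range r, (r:ℝ)⁻¹ * (g i u / V i)) -
      ∏ i ∈ Finset.range r, (g i u / V i) ^ ((r:ℝ)⁻¹) with hF
  have hFnonneg : ∀ u, 0 ≤ F u := fun u => sub_nonneg.mpr
    (DAF.amgm_le hr1 (fun i hi =>
      (div_nonneg (hgpos i (Finset.mem_range.mp hi) u).le (hVpos i (Finset.mem_range.mp hi)).le)))
  have hFcont : Continuous F := by
    apply Continuous.sub
    · exact continuous_finset_sum _ (fun i hi =>
        continuous_const.mul ((hgcont i (Finset.mem_range.mp hi)).div_const (V i)))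
    · exact continuous_finset_prod _ (fun i hi =>
        (((hgcont i (Finset.mem_range.mp hi)).div_const (V i)).rpow_const
          (fun u => Or.inl (div_pos (hgpos i (Finset.mem_range.mp hi) u)
            (hVpos i (Finset.mem_range.mp hi))).ne')))
  have hFint : ∫ u, F u ∂μ = 1 - I / C := by
    rw [hF]
    rw [MeasureTheory.integral_sub
      (by exact integrable_finset_sum _ (fun i hi => (((hint _
        (hgcont i (Finset.mem_range.mp hi))).div_const (V i)).const_mul ((r:ℝ)⁻¹))))
      (by
        refine hint _ ?_
        exact continuous_finset_prod _ (fun i hi =>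
          (((hgcont i (Finset.mem_range.mp hi)).div_const (V i)).rpow_const
            (fun u => Or.inl (div_pos (hgpos i (Finset.mem_range.mp hi) u)
              (hVpos i (Finset.mem_range.mp hi))).ne'))))]
    rw [harith, hgeom]
  -- the main inequality on integrals
  have hIC : I ≤ C := by
    have h0 : 0 ≤ ∫ u, F u ∂μ := integral_nonneg hFnonneg
    rw [hFint] at h0
    have : I / C ≤ 1 := by linarith
    calc I = (I / C) * C := by field_simp
      _ ≤ 1 * C := mul_le_mul_of_nonneg_right this hCpos.le
      _ = C := one_mul C
  -- identification of LHS and RHS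
  have hLHS : dualMixedVol n ρ = (1/(n:ℝ)) * I := rfl
  have hRHS : (∏ i ∈ Finset.range r,
      (dualMixedVol n (fun j => if j < r then ρ i else ρ j)) ^ ((r:ℝ)⁻¹)) = (1/(n:ℝ)) * C := by
    rw [Finset.prod_congr rfl (fun i hi => by
      rw [hdmv i, Real.mul_rpow (by positivity) (hVpos i (Finset.mem_range.mp hi)).le])]
    rw [Finset.prod_mul_distrib, Finset.prod_const, Finset.card_range, ← hC]
    congr 1
    rw [← Real.rpow_natCast ((1/(n:ℝ)) ^ ((r:ℝ)⁻¹)) r, ← Real.rpow_mul (by positivity),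
      inv_mul_cancel₀ hrne, Real.rpow_one]
  constructor
  · rw [hLHS, hRHS]
    exact mul_le_mul_of_nonneg_left hIC (by positivity)
  constructor
  · -- equality implies dilation
    intro heq
    rw [hLHS, hRHS] at heq
    have hICeq : I = C := mul_left_cancel₀ (by positivity : (1/(n:ℝ)) ≠ 0) heq
    have hF0 : ∫ u, F u ∂μ = 0 := by
      rw [hFint, hICeq, div_self hCpos.ne']; ring
    have hFae : F =ᵐ[μ] 0 := (integral_eq_zero_iff_of_nonneg hFnonneg (hint F hFcont)).mp hF0
    have hFzero : F = 0 := (hFcont.ae_eq_iff_eq μ continuous_const).mp hFae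
    intro i hi j hj
    refine ⟨(V i / V j) ^ ((r:ℝ)⁻¹), Real.rpow_pos_of_pos (div_pos (hVpos i hi) (hVpos j hj)) _, ?_⟩
    intro u
    have hFu : F u = 0 := by rw [hFzero]; rfl
    have hxeq : g i u / V i = g j u / V j := by
      have := DAF.amgm_eq hr1 (x := fun i => g i u / V i)
        (fun i hi => div_pos (hgpos i (Finset.mem_range.mp hi) u) (hVpos i (Finset.mem_range.mp hi)))
        (by simpa using le_of_eq (sub_eq_zero.mp hFu))
      exact this i (Finset.mem_range.mpr hi) j (Finset.mem_range.mpr hj)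
    -- from equality of normalized g's derive the dilation
    have hQu := hQpos u
    have hVi := hVpos i hi
    have hVj := hVpos j hj
    have h1 : ρ i u ^ r = (V i / V j) * ρ j u ^ r := by
      rw [div_eq_div_iff hVi.ne' hVj.ne'] at hxeq
      have h2 : ρ i u ^ r * Q u * V j = ρ j u ^ r * Q u * V i := hxeq
      have h3 : ρ i u ^ r * V j = ρ j u ^ r * V i := by
        have := mul_left_cancel₀ hQu.ne' (show Q u * (ρ i u ^ r * V j) = Q u * (ρ j u ^ r * V i)
          by ring_nf; ring_nf at h2; linarith)
        exact this
      field_simp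
      linarith [h3]
    have hρi := hpos i (lt_of_lt_of_le hi hrn) u
    have hρj := hpos j (lt_of_lt_of_le hj hrn) u
    have h4 := congrArg (fun t : ℝ => t ^ ((r:ℝ)⁻¹)) h1
    rwa [← Real.rpow_natCast (ρ i u) r, ← Real.rpow_mul hρi.le, mul_inv_cancel₀ hrne,
      Real.rpow_one, Real.mul_rpow (div_pos hVi hVj).le (pow_nonneg hρj.le r),
      ← Real.rpow_natCast (ρ j u) r, ← Real.rpow_mul hρj.le, mul_inv_cancel₀ hrne,
      Real.rpow_one] at h4
  · -- dilation implies equality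
    intro hdil
    have hchoice : ∀ i, i < r → ∃ c : ℝ, 0 < c ∧ ∀ u, ρ i u = c * ρ 0 u :=
      fun i hi => hdil i hi 0 (by omega)
    choose! c hcpos hceq using hchoice
    set K : ℝ := ∏ i ∈ Finset.range r, c i with hK
    have hgi : ∀ i < r, ∀ u, g i u = c i ^ r * g 0 u := by
      intro i hi u
      show ρ i u ^ r * Q u = c i ^ r * (ρ 0 u ^ r * Q u)
      rw [hceq i hi u, mul_pow]; ring
    have hVi : ∀ i < r, V i = c i ^ r * V 0 := by
      intro i hi
      show (∫ u, g i u ∂μ) = c i ^ r * ∫ u, g 0 u ∂μ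
      rw [show (fun u => g i u) = (fun u => c i ^ r * g 0 u) from funext (hgi i hi),
        MeasureTheory.integral_const_mul]
    have hIK : I = K * V 0 := by
      rw [hI, hK]
      have : (fun u => ∏ j ∈ Finset.range n, ρ j u) =
          (fun u => (∏ i ∈ Finset.range r, c i) * g 0 u) := by
        funext u
        rw [hsplit u]
        show (∏ i ∈ Finset.range r, ρ i u) * Q u =
          (∏ i ∈ Finset.range r, c i) * (ρ 0 u ^ r * Q u)
        rw [Finset.prod_congr rfl (fun i hi => hceq i (Finset.mem_range.mp hi) u),
          Finset.prod_mul_distrib, Finset.prod_const, Finset.card_range]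
        ring
      rw [this, MeasureTheory.integral_const_mul]
    have hV0 : 0 < V 0 := hVpos 0 (by omega)
    have hCK : C = K * V 0 := by
      rw [hC, hK]
      rw [Finset.prod_congr rfl (fun i hi => by
        rw [hVi i (Finset.mem_range.mp hi),
          Real.mul_rpow (pow_nonneg (hcpos i (Finset.mem_range.mp hi)).le r) hV0.le,
          ← Real.rpow_natCast (c i) r, ← Real.rpow_mul (hcpos i (Finset.mem_range.mp hi)).le,
          mul_inv_cancel₀ hrne, Real.rpow_one])]
      rw [Finset.prod_mul_distrib, Finset.prod_const, Finset.card_range,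
        ← Real.rpow_natCast ((V 0) ^ ((r:ℝ)⁻¹)) r, ← Real.rpow_mul hV0.le,
        inv_mul_cancel₀ hrne, Real.rpow_one]
    rw [hLHS, hRHS, hIK, hCK]
end

section
/- Let K, L be star bodies in ℝⁿ and p ≥ 1. Define the L_p dual mixed volume Ṽ_{-p}(K,L) = (1/n)∫_{S^{n-1}} ρ(K,u)^{n+p} ρ(L,u)^{-p} dS(u). Then Ṽ_{-p}(K,L)ⁿ ≥ V(K)^{n+p} V(L)^{-p}, with equality if and only if K and L are dilates. -/
open MeasureTheory Metric Real

open Module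
open scoped ENNReal NNReal

noncomputable section
namespace LpAux

section Geometry


variable {m : ℕ} {u : EuclideanSpace ℝ (Fin (m+1))}

/-- The orthogonal complement of `u`. -/
def Kperp (u : EuclideanSpace ℝ (Fin (m+1))) : Submodule ℝ (EuclideanSpace ℝ (Fin (m+1))) :=
  (Submodule.span ℝ {u})ᗮ

lemma inner_uu (hu : ‖u‖ = 1) : (inner ℝ u u : ℝ) = 1 := by
  rw [real_inner_self_eq_norm_sq, hu]; norm_num

lemma finrank_Kperp (hu : ‖u‖ = 1) : finrank ℝ (Kperp u) = m := by
  have hu0 : u ≠ 0 := by intro h; rw [h, norm_zero] at hu; norm_num at hu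
  have h1 : finrank ℝ (Submodule.span ℝ {u}) = 1 := finrank_span_singleton hu0
  have h2 := Submodule.finrank_add_finrank_orthogonal (K := Submodule.span ℝ {u}) (𝕜 := ℝ)
  rw [h1, finrank_euclideanSpace_fin] at h2
  rw [Kperp]
  omega

/-- The projection onto the hyperplane `u^⊥`, as a map to the ambient space. -/
def projQ (u x : EuclideanSpace ℝ (Fin (m+1))) : EuclideanSpace ℝ (Fin (m+1)) :=
  x - (inner ℝ u x : ℝ) • u

lemma projQ_mem (hu : ‖u‖ = 1) (x : EuclideanSpace ℝ (Fin (m+1))) : projQ u x ∈ Kperp u := by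
  rw [Kperp, Submodule.mem_orthogonal_singleton_iff_inner_right, projQ, inner_sub_right,
    real_inner_smul_right, inner_uu hu]
  ring

lemma projQ_sub (x y : EuclideanSpace ℝ (Fin (m+1))) :
    projQ u x - projQ u y = projQ u (x - y) := by
  simp only [projQ, inner_sub_right]
  module

lemma norm_projQ_sq (hu : ‖u‖ = 1) (z : EuclideanSpace ℝ (Fin (m+1))) :
    ‖projQ u z‖ ^ 2 = ‖z‖ ^ 2 - (inner ℝ u z : ℝ) ^ 2 := by
  have h1 : ‖projQ u z‖ ^ 2 = ‖z‖ ^ 2 - 2 * (inner ℝ z ((inner ℝ u z : ℝ) • u) : ℝ)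
      + ‖(inner ℝ u z : ℝ) • u‖ ^ 2 := norm_sub_sq_real z _
  rw [real_inner_smul_right, norm_smul, norm_eq_abs, hu, real_inner_comm z u] at h1
  have hc : (inner ℝ z u : ℝ) = inner ℝ u z := by rw [real_inner_comm]
  rw [h1, mul_one, sq_abs, hc]; ring

/-- The projection to a concrete Euclidean space of dimension `m`. -/
def projP (hu : ‖u‖ = 1) (x : EuclideanSpace ℝ (Fin (m+1))) : EuclideanSpace ℝ (Fin m) :=
  ((stdOrthonormalBasis ℝ (Kperp u)).reindex (finCongr (finrank_Kperp hu))).repr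
    ⟨projQ u x, projQ_mem hu x⟩

lemma dist_projP (hu : ‖u‖ = 1) (x y : EuclideanSpace ℝ (Fin (m+1))) :
    dist (projP hu x) (projP hu y) = ‖projQ u x - projQ u y‖ := by
  rw [projP, projP, LinearIsometryEquiv.dist_map, Subtype.dist_eq, dist_eq_norm]

lemma lipschitz_projP (hu : ‖u‖ = 1) : LipschitzWith 1 (projP hu) := by
  apply LipschitzWith.of_dist_le_mul
  intro x y
  rw [dist_projP hu, projQ_sub, NNReal.coe_one, one_mul, dist_eq_norm]
  have h := norm_projQ_sq hu (x - y)
  nlinarith [norm_nonneg (projQ u (x - y)), norm_nonneg (x - y), sq_nonneg (inner ℝ u (x-y) : ℝ)]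

set_option maxHeartbeats 1000000 in
lemma inner_ge_of_cap (hu : ‖u‖ = 1) {x : EuclideanSpace ℝ (Fin (m+1))} (hx : ‖x‖ = 1)
    (hxu : dist x u ≤ 1/2) : (7:ℝ)/8 ≤ (inner ℝ u x : ℝ) := by
  have h : ‖x - u‖ ^ 2 = ‖x‖ ^ 2 - 2 * (inner ℝ x u : ℝ) + ‖u‖ ^ 2 := norm_sub_sq_real x u
  rw [dist_eq_norm] at hxu
  have hc : (inner ℝ x u : ℝ) = inner ℝ u x := by rw [real_inner_comm]
  nlinarith [norm_nonneg (x - u)]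

set_option maxHeartbeats 2000000 in
lemma antilip_on_cap (hu : ‖u‖ = 1) {x y : EuclideanSpace ℝ (Fin (m+1))} (hx : ‖x‖ = 1)
    (hy : ‖y‖ = 1) (hxu : dist x u ≤ 1/2) (hyu : dist y u ≤ 1/2) :
    dist x y ≤ 2 * dist (projP hu x) (projP hu y) := by
  rw [dist_projP hu, dist_eq_norm]
  set tx := (inner ℝ u x : ℝ) with htx
  set ty := (inner ℝ u y : ℝ) with hty
  have hxs := norm_projQ_sq hu x
  have hys := norm_projQ_sq hu y
  have hzs := norm_projQ_sq hu (x - y)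
  rw [hx] at hxs; rw [hy] at hys
  have htx7 : (7:ℝ)/8 ≤ tx := inner_ge_of_cap hu hx hxu
  have hty7 : (7:ℝ)/8 ≤ ty := inner_ge_of_cap hu hy hyu
  have hsub : (inner ℝ u (x - y) : ℝ) = tx - ty := inner_sub_right u x y
  rw [hsub] at hzs
  have hnx : ‖projQ u x‖ ≤ 1/2 := by nlinarith [norm_nonneg (projQ u x)]
  have hny : ‖projQ u y‖ ≤ 1/2 := by nlinarith [norm_nonneg (projQ u y)]
  have hQd1 : ‖projQ u x‖ - ‖projQ u y‖ ≤ ‖projQ u x - projQ u y‖ := norm_sub_norm_le _ _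
  have hQd2 : ‖projQ u y‖ - ‖projQ u x‖ ≤ ‖projQ u x - projQ u y‖ := by
    rw [norm_sub_rev]; exact norm_sub_norm_le _ _
  have hQQ : ‖projQ u (x - y)‖ = ‖projQ u x - projQ u y‖ := by rw [projQ_sub]
  rw [hQQ] at hzs
  have h1 : (tx - ty) * (tx + ty) = ‖projQ u y‖^2 - ‖projQ u x‖^2 := by
    linear_combination hxs - hys
  have ht : (0:ℝ) ≤ tx + ty := by linarith
  have hD0 : (0:ℝ) ≤ ‖projQ u x - projQ u y‖ := norm_nonneg _
  have e1 : |tx - ty| * (tx + ty) = |‖projQ u y‖^2 - ‖projQ u x‖^2| := by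
    rw [← h1, abs_mul, abs_of_nonneg ht]
  have e2 : |‖projQ u y‖^2 - ‖projQ u x‖^2| ≤ ‖projQ u x - projQ u y‖ := by
    rw [abs_le]
    constructor <;> nlinarith [norm_nonneg (projQ u x), norm_nonneg (projQ u y)]
  have e3 : |tx - ty| ≤ ‖projQ u x - projQ u y‖ := by nlinarith [abs_nonneg (tx - ty)]
  have e4 : (tx - ty)^2 ≤ ‖projQ u x - projQ u y‖^2 := by
    rw [← sq_abs]; exact pow_le_pow_left₀ (abs_nonneg _) e3 2
  have e5 : ‖x - y‖^2 ≤ 2 * ‖projQ u x - projQ u y‖^2 := by linarith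
  nlinarith [norm_nonneg (x - y), sq_nonneg ‖projQ u x - projQ u y‖]


lemma norm_projP_le (hu : ‖u‖ = 1) (x : EuclideanSpace ℝ (Fin (m+1))) :
    ‖projP hu x‖ ≤ ‖x‖ := by
  have h : ‖projP hu x‖ = ‖projQ u x‖ := by
    rw [projP, LinearIsometryEquiv.norm_map]
    rfl
  rw [h]
  have h2 := norm_projQ_sq hu x
  nlinarith [norm_nonneg (projQ u x), norm_nonneg x, sq_nonneg (inner ℝ u x : ℝ)]

set_option maxHeartbeats 2000000 in
lemma exists_preimage (hu : ‖u‖ = 1) {w : EuclideanSpace ℝ (Fin m)} (hw : ‖w‖ ≤ 1/2) :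
    ∃ x : EuclideanSpace ℝ (Fin (m+1)), ‖x‖ = 1 ∧ ‖x - u‖ ≤ 2 * ‖w‖ ∧ projP hu x = w := by
  set B := (stdOrthonormalBasis ℝ (Kperp u)).reindex (finCongr (finrank_Kperp hu)) with hB
  set v' : Kperp u := B.repr.symm w with hv'
  set v : EuclideanSpace ℝ (Fin (m+1)) := (v' : EuclideanSpace ℝ (Fin (m+1))) with hv
  have hvK : v ∈ Kperp u := v'.2
  have hvw : ‖v‖ = ‖w‖ := by
    rw [hv]
    rw [show ‖(v' : EuclideanSpace ℝ (Fin (m+1)))‖ = ‖v'‖ from rfl, hv',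
      LinearIsometryEquiv.norm_map]
  have huv : (inner ℝ u v : ℝ) = 0 := Submodule.mem_orthogonal_singleton_iff_inner_right.1 hvK
  have hvu : (inner ℝ v u : ℝ) = 0 := by rw [real_inner_comm]; exact huv
  have hv1 : ‖v‖ ≤ 1/2 := by rw [hvw]; exact hw
  set s := Real.sqrt (1 - ‖v‖^2) with hs
  have hs0 : 0 ≤ s := Real.sqrt_nonneg _
  have hs2 : s^2 = 1 - ‖v‖^2 := Real.sq_sqrt (by nlinarith [norm_nonneg v])
  have hs1 : s ≤ 1 := by nlinarith [norm_nonneg v]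
  refine ⟨v + s • u, ?_, ?_, ?_⟩
  · -- norm one
    have h : ‖v + s • u‖^2 = ‖v‖^2 + 2 * (inner ℝ v (s • u) : ℝ) + ‖s • u‖^2 :=
      norm_add_sq_real v _
    rw [real_inner_smul_right, hvu, norm_smul, norm_eq_abs, hu, mul_one] at h
    have h2 : ‖v + s • u‖^2 = 1 := by rw [h, sq_abs]; linarith
    rw [← Real.sqrt_sq (norm_nonneg (v + s • u)), h2, Real.sqrt_one]
  · -- distance to u
    have hxu : v + s • u - u = v + (s - 1) • u := by module
    have h : ‖v + (s-1) • u‖^2 = ‖v‖^2 + 2 * (inner ℝ v ((s-1) • u) : ℝ) + ‖(s-1) • u‖^2 :=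
      norm_add_sq_real v _
    rw [real_inner_smul_right, hvu, norm_smul, norm_eq_abs, hu, mul_one] at h
    have h1s : 1 - s ≤ ‖v‖^2 := by nlinarith
    have hsq : ‖v + (s-1) • u‖^2 ≤ 4 * ‖v‖^2 := by
      rw [h, sq_abs]
      nlinarith [norm_nonneg v, sq_nonneg (s - 1), sq_nonneg ‖v‖]
    rw [hxu]
    have hge := norm_nonneg (v + (s-1) • u)
    rw [hvw] at hsq
    have h2b : (0:ℝ) ≤ 2 * ‖w‖ := by positivity
    rw [← Real.sqrt_sq hge, ← Real.sqrt_sq h2b]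
    apply Real.sqrt_le_sqrt
    nlinarith
  · -- projP equals w
    have hux : (inner ℝ u (v + s • u) : ℝ) = s := by
      rw [inner_add_right, real_inner_smul_right, inner_uu hu, huv]; ring
    have hQ : projQ u (v + s • u) = v := by
      rw [projQ, hux]; module
    rw [projP]
    have hsub : (⟨projQ u (v + s • u), projQ_mem hu _⟩ : Kperp u) = v' := by
      apply Subtype.ext
      exact hQ.trans hv
    rw [hsub, hv']
    exact B.repr.apply_symm_apply w

lemma haar_T (m : ℕ) :
    (μH[(m:ℝ)] : Measure (EuclideanSpace ℝ (Fin m))).IsAddHaarMeasure := by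
  have h := isAddHaarMeasure_hausdorffMeasure (E := EuclideanSpace ℝ (Fin m))
  rwa [finrank_euclideanSpace_fin] at h

lemma measure_cap_pos (hu : ‖u‖ = 1) {r : ℝ} (hr : 0 < r) :
    0 < μH[(m:ℝ)] {x : EuclideanSpace ℝ (Fin (m+1)) | ‖x‖ = 1 ∧ dist x u < r} := by
  haveI := haar_T m
  set r' := min r 1 with hr'
  have hr'0 : 0 < r' := lt_min hr one_pos
  have hr'1 : r' ≤ 1 := min_le_right _ _
  have hsub : ball (0 : EuclideanSpace ℝ (Fin m)) (r'/4) ⊆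
      projP hu '' {x | ‖x‖ = 1 ∧ dist x u < r} := by
    intro w hw
    rw [mem_ball, dist_zero_right] at hw
    have hw2 : ‖w‖ ≤ 1/2 := by linarith
    obtain ⟨x, hx1, hx2, hx3⟩ := exists_preimage hu hw2
    refine ⟨x, ⟨hx1, ?_⟩, hx3⟩
    rw [dist_eq_norm]
    calc ‖x - u‖ ≤ 2 * ‖w‖ := hx2
      _ < 2 * (r'/4) := by linarith [norm_nonneg w]
      _ ≤ r := by have hr'r : r' ≤ r := by rw [hr']; exact min_le_left r 1
                  linarith
  have h0 : (0:ℝ≥0∞) < μH[(m:ℝ)] (ball (0 : EuclideanSpace ℝ (Fin m)) (r'/4)) :=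
    IsOpen.measure_pos _ isOpen_ball (Metric.nonempty_ball.2 (by linarith))
  have h1 := measure_mono (μ := μH[(m:ℝ)]) hsub
  have h2 := (lipschitz_projP hu).hausdorffMeasure_image_le
    (Nat.cast_nonneg m) {x : EuclideanSpace ℝ (Fin (m+1)) | ‖x‖ = 1 ∧ dist x u < r}
  rw [ENNReal.coe_one, ENNReal.one_rpow, one_mul] at h2
  exact lt_of_lt_of_le h0 (le_trans h1 h2)

lemma measure_cap_lt_top (hu : ‖u‖ = 1) :
    μH[(m:ℝ)] {x : EuclideanSpace ℝ (Fin (m+1)) | ‖x‖ = 1 ∧ dist x u ≤ 1/2} < ⊤ := by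
  haveI := haar_T m
  set C : Set (EuclideanSpace ℝ (Fin (m+1))) := {x | ‖x‖ = 1 ∧ dist x u ≤ 1/2} with hC
  have hf : AntilipschitzWith 2 (fun z : C => projP hu (z : EuclideanSpace ℝ (Fin (m+1)))) := by
    apply AntilipschitzWith.of_le_mul_dist
    intro a b
    rw [Subtype.dist_eq]
    have := antilip_on_cap hu a.2.1 b.2.1 a.2.2 b.2.2
    simpa using this
  have h1 := hf.le_hausdorffMeasure_image (Nat.cast_nonneg m) Set.univ
  have h2 : μH[(m:ℝ)] (Set.univ : Set C) = μH[(m:ℝ)] C := by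
    have := (isometry_subtype_coe (s := C)).hausdorffMeasure_image
      (Or.inl (Nat.cast_nonneg m)) Set.univ
    rw [Set.image_univ, Subtype.range_coe] at this
    exact this.symm
  have h3 : (fun z : C => projP hu (z : EuclideanSpace ℝ (Fin (m+1)))) '' Set.univ ⊆
      closedBall (0 : EuclideanSpace ℝ (Fin m)) 1 := by
    rintro _ ⟨z, -, rfl⟩
    rw [mem_closedBall, dist_zero_right]
    calc ‖projP hu (z : EuclideanSpace ℝ (Fin (m+1)))‖ ≤ ‖(z : EuclideanSpace ℝ (Fin (m+1)))‖ :=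
        norm_projP_le hu _
      _ = 1 := z.2.1
  have h4 : μH[(m:ℝ)] ((fun z : C => projP hu (z : EuclideanSpace ℝ (Fin (m+1)))) '' Set.univ) < ⊤ :=
    lt_of_le_of_lt (measure_mono h3) (isCompact_closedBall _ _).measure_lt_top
  rw [h2] at h1
  calc μH[(m:ℝ)] C ≤ ((2:ℝ≥0) : ℝ≥0∞) ^ (m:ℝ) * _ := h1
    _ < ⊤ := ENNReal.mul_lt_top (ENNReal.rpow_lt_top_of_nonneg (Nat.cast_nonneg m) (by simp)) h4

lemma measure_sphere_lt_top (m : ℕ) :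
    μH[(m:ℝ)] (sphere (0 : EuclideanSpace ℝ (Fin (m+1))) 1) < ⊤ := by
  obtain ⟨t, ht⟩ := (isCompact_sphere (0 : EuclideanSpace ℝ (Fin (m+1))) 1).elim_finite_subcover
    (fun u : sphere (0 : EuclideanSpace ℝ (Fin (m+1))) 1 => ball (u : EuclideanSpace ℝ (Fin (m+1))) (1/2))
    (fun _ => isOpen_ball) (by
      intro x hx
      exact Set.mem_iUnion.2 ⟨⟨x, hx⟩, mem_ball_self (by norm_num)⟩)
  have hsub : sphere (0 : EuclideanSpace ℝ (Fin (m+1))) 1 ⊆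
      ⋃ u ∈ t, {x : EuclideanSpace ℝ (Fin (m+1)) | ‖x‖ = 1 ∧ dist x (u : EuclideanSpace ℝ (Fin (m+1))) ≤ 1/2} := by
    intro x hx
    obtain ⟨u, hu, hxu⟩ := Set.mem_iUnion₂.1 (ht hx)
    exact Set.mem_iUnion₂.2 ⟨u, hu, ⟨mem_sphere_zero_iff_norm.1 hx, le_of_lt hxu⟩⟩
  refine lt_of_le_of_lt (le_trans (measure_mono hsub) (measure_biUnion_finset_le t _)) ?_
  refine ENNReal.sum_lt_top.2 fun u _ => ?_
  exact measure_cap_lt_top (mem_sphere_zero_iff_norm.1 u.2)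


end Geometry

section Holder


lemma young_eq {w1 w2 x y : ℝ} (hw1 : 0 < w1) (hw2 : 0 < w2) (hw : w1 + w2 = 1)
    (hx : 0 < x) (hy : 0 < y) (h : x ^ w1 * y ^ w2 = w1 * x + w2 * y) : x = y := by
  by_contra hxy
  have hlt := strictConcaveOn_log_Ioi.2 (Set.mem_Ioi.2 hx) (Set.mem_Ioi.2 hy) hxy hw1 hw2 hw
  rw [smul_eq_mul, smul_eq_mul, smul_eq_mul, smul_eq_mul] at hlt
  have hL : log (x ^ w1 * y ^ w2) = w1 * log x + w2 * log y := by
    rw [Real.log_mul (Real.rpow_pos_of_pos hx w1).ne' (Real.rpow_pos_of_pos hy w2).ne',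
      Real.log_rpow hx, Real.log_rpow hy]
  rw [← hL, h] at hlt
  exact lt_irrefl _ hlt

variable {X : Type*} [MeasurableSpace X] [TopologicalSpace X] [BorelSpace X]
  [CompactSpace X] [T2Space X] [Nonempty X]
  (μ : Measure X) [IsFiniteMeasure μ] [μ.IsOpenPosMeasure]

lemma cont_integrable {f : X → ℝ} (hf : Continuous f) : Integrable f μ :=
  hf.integrable_of_hasCompactSupport
    (IsCompact.of_isClosed_subset isCompact_univ (isClosed_tsupport f) (Set.subset_univ _))

lemma cont_integral_pos {f : X → ℝ} (hf : Continuous f) (hpos : ∀ x, 0 < f x) :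
    0 < ∫ x, f x ∂μ := by
  rw [integral_pos_iff_support_of_nonneg (fun x => (hpos x).le) (cont_integrable μ hf)]
  have hs : Function.support f = Set.univ := Set.eq_univ_iff_forall.2 fun x => (hpos x).ne'
  rw [hs]
  exact IsOpen.measure_pos μ isOpen_univ Set.univ_nonempty

lemma holder_eq {F G : X → ℝ} (hFc : Continuous F) (hGc : Continuous G)
    (hF : ∀ x, 0 < F x) (hG : ∀ x, 0 < G x) {w1 w2 : ℝ}
    (hw1 : 0 < w1) (hw2 : 0 < w2) (hw : w1 + w2 = 1) :
    (∫ x, (F x) ^ w1 * (G x) ^ w2 ∂μ) ≤ (∫ x, F x ∂μ) ^ w1 * (∫ x, G x ∂μ) ^ w2 ∧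
      ((∫ x, (F x) ^ w1 * (G x) ^ w2 ∂μ) = (∫ x, F x ∂μ) ^ w1 * (∫ x, G x ∂μ) ^ w2 ↔
        ∀ x, F x / (∫ x, F x ∂μ) = G x / (∫ x, G x ∂μ)) := by
  set A := ∫ x, F x ∂μ with hA
  set C := ∫ x, G x ∂μ with hC
  have hA0 : 0 < A := cont_integral_pos μ hFc hF
  have hC0 : 0 < C := cont_integral_pos μ hGc hG
  set I := ∫ x, (F x) ^ w1 * (G x) ^ w2 ∂μ with hI
  have hACpos : 0 < A ^ w1 * C ^ w2 :=
    mul_pos (Real.rpow_pos_of_pos hA0 _) (Real.rpow_pos_of_pos hC0 _)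
  -- the defect function
  set h : X → ℝ := fun x => w1 * (F x / A) + w2 * (G x / C) - (F x / A) ^ w1 * (G x / C) ^ w2
    with hh
  have hcont : Continuous h := by
    apply Continuous.sub
    · exact ((continuous_const.mul (hFc.div_const A)).add (continuous_const.mul (hGc.div_const C)))
    · exact ((hFc.div_const A).rpow_const fun x => Or.inl (div_pos (hF x) hA0).ne').mul
        ((hGc.div_const C).rpow_const fun x => Or.inl (div_pos (hG x) hC0).ne')
  have hnonneg : ∀ x, 0 ≤ h x := by
    intro x
    have := Real.geom_mean_le_arith_mean2_weighted hw1.le hw2.le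
      (div_pos (hF x) hA0).le (div_pos (hG x) hC0).le hw
    simp only [hh]
    linarith
  have hFGc : Continuous fun x => (F x) ^ w1 * (G x) ^ w2 :=
    (hFc.rpow_const fun x => Or.inl (hF x).ne').mul (hGc.rpow_const fun x => Or.inl (hG x).ne')
  -- value of the integral of h
  have hint : ∫ x, h x ∂μ = 1 - I / (A ^ w1 * C ^ w2) := by
    have e1 : ∀ x, h x = w1 * (F x / A) + w2 * (G x / C)
        - ((F x) ^ w1 * (G x) ^ w2) / (A ^ w1 * C ^ w2) := by
      intro x
      simp only [hh]
      rw [Real.div_rpow (hF x).le hA0.le, Real.div_rpow (hG x).le hC0.le]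
      field_simp
    have c1 : Continuous fun a => w1 * (F a / A) := continuous_const.mul (hFc.div_const A)
    have c2 : Continuous fun a => w2 * (G a / C) := continuous_const.mul (hGc.div_const C)
    rw [integral_congr_ae (Filter.Eventually.of_forall e1)]
    rw [integral_sub (cont_integrable μ (f := fun a => w1 * (F a / A) + w2 * (G a / C)) (c1.add c2)) ((cont_integrable μ hFGc).div_const _)]
    rw [integral_add (cont_integrable μ c1) (cont_integrable μ c2)]
    rw [integral_const_mul, integral_const_mul, integral_div, integral_div, integral_div]
    rw [← hA, ← hC, ← hI]
    rw [div_self hA0.ne', div_self hC0.ne']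
    linarith [hw]
  have hup : I ≤ A ^ w1 * C ^ w2 := by
    have h0 : 0 ≤ ∫ x, h x ∂μ := integral_nonneg hnonneg
    rw [hint] at h0
    have hle : I / (A ^ w1 * C ^ w2) ≤ 1 := by linarith
    calc I = I / (A ^ w1 * C ^ w2) * (A ^ w1 * C ^ w2) := by field_simp
      _ ≤ 1 * (A ^ w1 * C ^ w2) := mul_le_mul_of_nonneg_right hle hACpos.le
      _ = A ^ w1 * C ^ w2 := one_mul _
  refine ⟨hup, ?_, ?_⟩
  · -- equality → proportional
    intro heq
    have hzero : ∫ x, h x ∂μ = 0 := by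
      rw [hint, heq]
      field_simp
      norm_num
    have hae := (integral_eq_zero_iff_of_nonneg (fun x => hnonneg x)
      (cont_integrable μ hcont)).1 hzero
    have hzero' : h = 0 := (Continuous.ae_eq_iff_eq μ hcont continuous_const).1 hae
    intro x
    have hx0 : h x = 0 := by rw [hzero']; rfl
    apply young_eq hw1 hw2 hw (div_pos (hF x) hA0) (div_pos (hG x) hC0)
    simp only [hh] at hx0
    linarith
  · -- proportional → equality
    intro hprop
    have e2 : ∀ x, (F x) ^ w1 * (G x) ^ w2 = (G x / C) * (A ^ w1 * C ^ w2) := by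
      intro x
      have h1 : F x = (G x / C) * A := by
        have := hprop x
        field_simp at this ⊢
        linarith [this]
      have h2 : (G x) ^ w2 = (G x / C) ^ w2 * C ^ w2 := by
        rw [← Real.mul_rpow (div_pos (hG x) hC0).le hC0.le, div_mul_cancel₀ _ hC0.ne']
      have h3 : (G x / C) ^ w1 * (G x / C) ^ w2 = G x / C := by
        rw [← Real.rpow_add (div_pos (hG x) hC0), hw, Real.rpow_one]
      rw [h1, Real.mul_rpow (div_pos (hG x) hC0).le hA0.le, h2]
      calc (G x / C) ^ w1 * A ^ w1 * ((G x / C) ^ w2 * C ^ w2)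
          = (G x / C) ^ w1 * (G x / C) ^ w2 * (A ^ w1 * C ^ w2) := by ring
        _ = G x / C * (A ^ w1 * C ^ w2) := by rw [h3]
    rw [hI, integral_congr_ae (Filter.Eventually.of_forall e2), integral_mul_const,
      integral_div, ← hC, div_self hC0.ne', one_mul]


end Holder

section Bridge

lemma sphereσ_eq (m : ℕ) : sphereσ (m+1) =
    (μH[(m:ℝ)] : Measure (sphere (0 : EuclideanSpace ℝ (Fin (m+1))) 1)) := by
  rw [sphereσ]
  congr 1
  push_cast
  ring

lemma isFiniteMeasure_sphereσ (m : ℕ) : IsFiniteMeasure (sphereσ (m+1)) := by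
  constructor
  rw [sphereσ_eq]
  have h := (isometry_subtype_coe
      (s := (sphere (0 : EuclideanSpace ℝ (Fin (m+1))) 1 : Set _))).hausdorffMeasure_image
    (Or.inl (Nat.cast_nonneg m)) Set.univ
  rw [Set.image_univ, Subtype.range_coe] at h
  rw [← h]
  exact measure_sphere_lt_top m

lemma isOpenPos_sphereσ (m : ℕ) : (sphereσ (m+1)).IsOpenPosMeasure := by
  constructor
  intro U hU hne
  obtain ⟨u, hu⟩ := hne
  obtain ⟨r, hr, hball⟩ := Metric.isOpen_iff.1 hU u hu
  have hmono := measure_mono (μ := sphereσ (m+1)) hball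
  have hpos : 0 < sphereσ (m+1) (ball u r) := by
    rw [sphereσ_eq]
    have h := (isometry_subtype_coe
        (s := (sphere (0 : EuclideanSpace ℝ (Fin (m+1))) 1 : Set _))).hausdorffMeasure_image
      (Or.inl (Nat.cast_nonneg m)) (ball u r)
    rw [← h]
    have him : (Subtype.val '' ball u r : Set (EuclideanSpace ℝ (Fin (m+1)))) =
        {x | ‖x‖ = 1 ∧ dist x (u : EuclideanSpace ℝ (Fin (m+1))) < r} := by
      ext x
      constructor
      · rintro ⟨y, hy, rfl⟩
        exact ⟨mem_sphere_zero_iff_norm.1 y.2, by rw [← Subtype.dist_eq]; exact hy⟩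
      · rintro ⟨h1, h2⟩
        exact ⟨⟨x, mem_sphere_zero_iff_norm.2 h1⟩, by rwa [mem_ball, Subtype.dist_eq], rfl⟩
    rw [him]
    exact measure_cap_pos (mem_sphere_zero_iff_norm.1 u.2) hr
  exact (lt_of_lt_of_le hpos hmono).ne'


end Bridge

end LpAux
end

open LpAux in
/-- Lutwak's `L_p`-dual Minkowski inequality:
`Ṽ₋ₚ(K,L)ⁿ ≥ V(K)^{n+p} V(L)^{-p}`, with equality iff `K` and `L` are dilates. -/
theorem Lp_dual_minkowski
    (n : ℕ) (hn : 0 < n) (p : ℝ) (hp : 1 ≤ p)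
    (ρK ρL : sphere (0 : EuclideanSpace ℝ (Fin n)) 1 → ℝ)
    (hKc : Continuous ρK) (hLc : Continuous ρL)
    (hKpos : ∀ u, 0 < ρK u) (hLpos : ∀ u, 0 < ρL u)
    (Vmp VK VL : ℝ)
    (hVmp : Vmp = (1 / n) * ∫ u, (ρK u) ^ ((n : ℝ) + p) * (ρL u) ^ (-p) ∂(sphereσ n))
    (hVK : VK = (1 / n) * ∫ u, (ρK u) ^ (n : ℕ) ∂(sphereσ n))
    (hVL : VL = (1 / n) * ∫ u, (ρL u) ^ (n : ℕ) ∂(sphereσ n)) :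
    Vmp ^ (n : ℕ) ≥ VK ^ ((n : ℝ) + p) * VL ^ (-p) ∧
      (Vmp ^ (n : ℕ) = VK ^ ((n : ℝ) + p) * VL ^ (-p) ↔
        ∃ c : ℝ, 0 < c ∧ ∀ u, ρK u = c * ρL u) := by
  obtain ⟨m, rfl⟩ : ∃ m, n = m + 1 := ⟨n - 1, by omega⟩
  haveI := isFiniteMeasure_sphereσ m
  haveI := isOpenPos_sphereσ m
  haveI : Nonempty (sphere (0 : EuclideanSpace ℝ (Fin (m+1))) 1) := by
    refine ⟨⟨EuclideanSpace.single 0 1, ?_⟩⟩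
    rw [mem_sphere_zero_iff_norm, EuclideanSpace.norm_single]
    norm_num
  set μ := sphereσ (m+1) with hμ
  set N : ℝ := ((m+1 : ℕ) : ℝ) with hNdef
  have hN1 : 1 ≤ N := by rw [hNdef]; exact_mod_cast Nat.one_le_iff_ne_zero.2 (Nat.succ_ne_zero m)
  have hN0 : 0 < N := lt_of_lt_of_le one_pos hN1
  have hp0 : 0 < p := lt_of_lt_of_le one_pos hp
  have hNp : 0 < N + p := by linarith
  set w1 : ℝ := N / (N + p) with hw1def
  set w2 : ℝ := p / (N + p) with hw2def
  have hw1 : 0 < w1 := div_pos hN0 hNp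
  have hw2 : 0 < w2 := div_pos hp0 hNp
  have hw : w1 + w2 = 1 := by rw [hw1def, hw2def]; field_simp
  set F : sphere (0 : EuclideanSpace ℝ (Fin (m+1))) 1 → ℝ :=
    fun u => (ρK u) ^ (N + p) * (ρL u) ^ (-p) with hFdef
  set G : sphere (0 : EuclideanSpace ℝ (Fin (m+1))) 1 → ℝ := fun u => (ρL u) ^ N with hGdef
  have hFc : Continuous F := (hKc.rpow_const fun x => Or.inl (hKpos x).ne').mul
    (hLc.rpow_const fun x => Or.inl (hLpos x).ne')
  have hGc : Continuous G := hLc.rpow_const fun x => Or.inl (hLpos x).ne'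
  have hFpos : ∀ u, 0 < F u := fun u =>
    mul_pos (rpow_pos_of_pos (hKpos u) _) (rpow_pos_of_pos (hLpos u) _)
  have hGpos : ∀ u, 0 < G u := fun u => rpow_pos_of_pos (hLpos u) _
  set A := ∫ u, F u ∂μ with hAdef
  set C := ∫ u, G u ∂μ with hCdef
  set B := ∫ u, (ρK u) ^ N ∂μ with hBdef
  have hA0 : 0 < A := cont_integral_pos μ hFc hFpos
  have hC0 : 0 < C := cont_integral_pos μ hGc hGpos
  have hB0 : 0 < B := cont_integral_pos μ
    (hKc.rpow_const fun x => Or.inl (hKpos x).ne') (fun u => rpow_pos_of_pos (hKpos u) _)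
  -- pointwise identity F^w1 * G^w2 = ρK^N
  have hpoint : ∀ u, (F u) ^ w1 * (G u) ^ w2 = (ρK u) ^ N := by
    intro u
    have e1 : (F u) ^ w1 = (ρK u) ^ ((N+p)*w1) * (ρL u) ^ (-p*w1) := by
      rw [hFdef, Real.mul_rpow (rpow_pos_of_pos (hKpos u) _).le
        (rpow_pos_of_pos (hLpos u) _).le, ← Real.rpow_mul (hKpos u).le,
        ← Real.rpow_mul (hLpos u).le]
    have e2 : (G u) ^ w2 = (ρL u) ^ (N*w2) := by
      rw [hGdef, ← Real.rpow_mul (hLpos u).le]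
    have f1 : (N+p)*w1 = N := by rw [hw1def]; field_simp
    have f2 : -p*w1 + N*w2 = 0 := by rw [hw1def, hw2def]; field_simp; ring
    rw [e1, e2, mul_assoc, ← Real.rpow_add (hLpos u), f1, f2, Real.rpow_zero, mul_one]
  -- Hölder with equality
  obtain ⟨hle0, hiff0⟩ := holder_eq μ hFc hGc hFpos hGpos hw1 hw2 hw
  have hIB : ∫ u, (F u) ^ w1 * (G u) ^ w2 ∂μ = B := by
    rw [hBdef]
    exact integral_congr_ae (Filter.Eventually.of_forall hpoint)
  rw [hIB, ← hAdef, ← hCdef] at hle0 hiff0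
  -- express V's
  have hVK' : VK = B / N := by
    have he : ∫ u, (ρK u) ^ ((m+1 : ℕ)) ∂μ = B := by
      rw [hBdef]
      refine integral_congr_ae (Filter.Eventually.of_forall fun u => ?_)
      exact (Real.rpow_natCast (ρK u) (m+1)).symm
    rw [hVK, he]
    ring
  have hVL' : VL = C / N := by
    have he : ∫ u, (ρL u) ^ ((m+1 : ℕ)) ∂μ = C := by
      rw [hCdef, hGdef]
      refine integral_congr_ae (Filter.Eventually.of_forall fun u => ?_)
      exact (Real.rpow_natCast (ρL u) (m+1)).symm
    rw [hVL, he]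
    ring
  have hVmp' : Vmp = A / N := by
    rw [hVmp]
    ring
  -- the comparison quantity
  set D := B ^ ((N+p)/N) * C ^ (-p/N) with hDdef
  have hD0 : 0 < D := mul_pos (rpow_pos_of_pos hB0 _) (rpow_pos_of_pos hC0 _)
  have hDkey : D ^ w1 * C ^ w2 = B := by
    rw [hDdef, Real.mul_rpow (rpow_pos_of_pos hB0 _).le (rpow_pos_of_pos hC0 _).le,
      ← Real.rpow_mul hB0.le, ← Real.rpow_mul hC0.le]
    have f1 : (N+p)/N*w1 = 1 := by rw [hw1def]; field_simp
    have f2 : -p/N*w1 = -w2 := by rw [hw1def, hw2def]; field_simp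
    rw [f1, f2, Real.rpow_one, mul_assoc, ← Real.rpow_add hC0, neg_add_cancel,
      Real.rpow_zero, mul_one]
  -- B ≤ A^w1 C^w2 ↔ D ≤ A, and similarly for equality
  have hBD_le : D ≤ A := by
    have h1 : D ^ w1 * C ^ w2 ≤ A ^ w1 * C ^ w2 := by rw [hDkey]; exact hle0
    have h2 : D ^ w1 ≤ A ^ w1 :=
      le_of_mul_le_mul_right h1 (rpow_pos_of_pos hC0 _)
    exact (Real.rpow_le_rpow_iff hD0.le hA0.le hw1).1 h2
  have hBD_eq : B = A ^ w1 * C ^ w2 ↔ D = A := by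
    constructor
    · intro h
      refine le_antisymm hBD_le ?_
      have h1 : A ^ w1 * C ^ w2 ≤ D ^ w1 * C ^ w2 := by rw [hDkey, ← h]
      have h2 : A ^ w1 ≤ D ^ w1 := le_of_mul_le_mul_right h1 (rpow_pos_of_pos hC0 _)
      exact (Real.rpow_le_rpow_iff hA0.le hD0.le hw1).1 h2
    · intro h
      rw [← hDkey, h]
  -- rewrite the goal quantities
  have hDN : D ^ N = B ^ (N + p) * C ^ (-p) := by
    rw [hDdef, Real.mul_rpow (rpow_pos_of_pos hB0 _).le (rpow_pos_of_pos hC0 _).le,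
      ← Real.rpow_mul hB0.le, ← Real.rpow_mul hC0.le, div_mul_cancel₀ _ hN0.ne',
      div_mul_cancel₀ _ hN0.ne']
  have hRHS : VK ^ (N + p) * VL ^ (-p) = (D / N) ^ ((m+1 : ℕ)) := by
    rw [hVK', hVL', Real.div_rpow hB0.le hN0.le, Real.div_rpow hC0.le hN0.le,
      ← Real.rpow_natCast (D / N) (m+1), ← hNdef,
      Real.div_rpow hD0.le hN0.le, hDN]
    rw [div_mul_div_comm, ← Real.rpow_add hN0]
    ring_nf
  have hLHS : Vmp ^ ((m+1 : ℕ)) = (A / N) ^ ((m+1 : ℕ)) := by rw [hVmp']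
  have hpow_iff : ∀ {a b : ℝ}, 0 ≤ a → 0 ≤ b → (a ^ ((m+1:ℕ)) ≤ b ^ ((m+1:ℕ)) ↔ a ≤ b) :=
    fun ha hb => pow_le_pow_iff_left₀ ha hb (Nat.succ_ne_zero m)
  have hAD_div : (0:ℝ) ≤ A / N := (div_pos hA0 hN0).le
  have hDD_div : (0:ℝ) ≤ D / N := (div_pos hD0 hN0).le
  constructor
  · -- inequality
    rw [ge_iff_le, hRHS, hLHS]
    exact pow_le_pow_left₀ hDD_div ((div_le_div_iff_of_pos_right hN0).2 hBD_le) _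
  · -- equality case
    rw [hLHS, hRHS]
    have heq1 : (A / N) ^ ((m+1:ℕ)) = (D / N) ^ ((m+1:ℕ)) ↔ A / N = D / N :=
      ⟨fun h => le_antisymm ((hpow_iff hAD_div hDD_div).1 h.le)
        ((hpow_iff hDD_div hAD_div).1 h.ge), fun h => by rw [h]⟩
    have heq2 : A / N = D / N ↔ D = A := by
      constructor
      · intro h
        have h2 := congrArg (fun t : ℝ => t * N) h
        simp only [div_mul_cancel₀ _ hN0.ne'] at h2
        exact h2.symm
      · intro h; rw [h]
    rw [heq1, heq2, ← hBD_eq, hiff0]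
    constructor
    · -- proportional → dilates
      intro hprop
      refine ⟨(A / C) ^ (1/(N+p)), rpow_pos_of_pos (div_pos hA0 hC0) _, fun u => ?_⟩
      have hFG : F u = A / C * G u := by
        have h := hprop u
        field_simp at h ⊢
        linarith [h]
      have hKp : (ρK u) ^ (N+p) = (A/C) * (ρL u) ^ (N+p) := by
        have h1 : F u * (ρL u) ^ p = (ρK u) ^ (N+p) := by
          rw [hFdef]
          rw [mul_assoc, ← Real.rpow_add (hLpos u), neg_add_cancel, Real.rpow_zero, mul_one]
        have h2 : (A/C * G u) * (ρL u) ^ p = A/C * (ρL u) ^ (N+p) := by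
          rw [hGdef, mul_assoc, ← Real.rpow_add (hLpos u)]
        rw [← h1, hFG, h2]
      have hstep := congrArg (fun t : ℝ => t ^ (1/(N+p))) hKp
      rw [← Real.rpow_mul (hKpos u).le, mul_one_div, div_self hNp.ne', Real.rpow_one,
        Real.mul_rpow (div_pos hA0 hC0).le (rpow_pos_of_pos (hLpos u) _).le,
        ← Real.rpow_mul (hLpos u).le, mul_one_div, div_self hNp.ne', Real.rpow_one] at hstep
      exact hstep
    · -- dilates → proportional
      rintro ⟨c, hc, hdil⟩
      have hFu : ∀ u, F u = c ^ (N+p) * G u := by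
        intro u
        rw [hFdef, hGdef]
        simp only
        rw [hdil u, Real.mul_rpow hc.le (hLpos u).le, mul_assoc, ← Real.rpow_add (hLpos u),
          show N + p + -p = N by ring]
      have hAC : A = c ^ (N+p) * C := by
        rw [hAdef, integral_congr_ae (Filter.Eventually.of_forall hFu), integral_const_mul]
      intro u
      rw [hFu u, hAC, mul_div_mul_left _ _ (rpow_pos_of_pos hc _).ne']
end

section
/- Let φ : (0,∞) → (0,∞) be convex and strictly decreasing with lim_{t→0⁺} φ(t) = ∞ and lim_{t→∞} φ(t) = 0. Let K, L be star bodies in ℝⁿ. Define the Orlicz dual mixed volume Ṽ_φ(K,L) = (1/n)∫_{S^{n-1}} φ(ρ(L,u)/ρ(K,u)) ρ(K,u)ⁿ dS(u). Then Ṽ_φ(K,L) ≥ V(K) · φ((V(L)/V(K))^{1/n}). If φ is strictly convex, equality holds if and only if K and L are dilates. -/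
open MeasureTheory Metric Real Filter Set

/-- Supporting line for a convex function on `Ioi 0`, with strict version. -/
theorem support_line {f : ℝ → ℝ} (hf : ConvexOn ℝ (Ioi 0) f) {t₁ : ℝ} (ht₁ : 0 < t₁) :
    ∃ c : ℝ, (∀ t ∈ Ioi (0:ℝ), f t₁ + c * (t - t₁) ≤ f t) ∧
      (StrictConvexOn ℝ (Ioi 0) f → ∀ t ∈ Ioi (0:ℝ), t ≠ t₁ → f t₁ + c * (t - t₁) < f t) := by
  set S : ℝ → ℝ := fun t => (f t - f t₁) / (t - t₁) with hS
  have ht₁' : t₁ ∈ Ioi (0:ℝ) := ht₁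
  have hmono : ∀ x ∈ Ioi (0:ℝ), ∀ y ∈ Ioi (0:ℝ), x ≠ t₁ → y ≠ t₁ → x ≤ y → S x ≤ S y :=
    fun x hx y hy hx1 hy1 hxy => hf.secant_mono ht₁' hx hy hx1 hy1 hxy
  have hne : (S '' Ioo 0 t₁).Nonempty := ⟨S (t₁/2), ⟨t₁/2, ⟨by linarith, by linarith⟩, rfl⟩⟩
  have hbdd : BddAbove (S '' Ioo 0 t₁) := by
    refine ⟨S (t₁ + 1), fun z hz => ?_⟩
    obtain ⟨x, hx, rfl⟩ := hz
    exact hmono x (mem_Ioi.mpr hx.1) (t₁+1) (mem_Ioi.mpr (by linarith)) hx.2.ne (by linarith [hx.1, hx.2]) (by linarith [hx.1, hx.2])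
  set c := sSup (S '' Ioo 0 t₁) with hc
  have hc_le : ∀ t ∈ Ioi (0:ℝ), t₁ < t → c ≤ S t := by
    intro t ht h1t
    refine csSup_le hne ?_
    rintro z ⟨x, hx, rfl⟩
    exact hmono x (mem_Ioi.mpr hx.1) t ht hx.2.ne (by linarith [hx.1, hx.2]) (by linarith [hx.1, hx.2])
  have hle_c : ∀ t, t ∈ Ioo 0 t₁ → S t ≤ c := fun t ht => le_csSup hbdd ⟨t, ht, rfl⟩
  have key : ∀ t ∈ Ioi (0:ℝ), t ≠ t₁ → f t = f t₁ + S t * (t - t₁) := by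
    intro t ht htne
    have : t - t₁ ≠ 0 := sub_ne_zero.mpr htne
    simp only [hS]; rw [div_mul_cancel₀ _ this]; ring
  refine ⟨c, ?_, ?_⟩
  · intro t ht
    rcases eq_or_ne t t₁ with rfl | htne
    · simp
    rw [key t ht htne]
    rcases lt_or_gt_of_ne htne with hlt | hgt
    · have h1 : S t ≤ c := hle_c t ⟨ht, hlt⟩
      nlinarith [sub_neg.mpr hlt]
    · have h1 : c ≤ S t := hc_le t ht hgt
      nlinarith [sub_pos.mpr hgt]
  · intro hsf t ht htne
    rw [key t ht htne]
    rcases lt_or_gt_of_ne htne with hlt | hgt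
    · -- t < t₁ : S t < S ((t+t₁)/2) ≤ c
      have ht0 : (0:ℝ) < t := ht
      have hw : (t+t₁)/2 ∈ Ioo 0 t₁ := ⟨by linarith, by linarith⟩
      have h1 : S t < S ((t+t₁)/2) :=
        hsf.secant_strict_mono ht₁' ht (mem_Ioi.mpr hw.1) htne hw.2.ne (by linarith)
      have h2 := hle_c _ hw
      nlinarith [sub_neg.mpr hlt]
    · -- t₁ < t : c ≤ S ((t₁+t)/2) < S t
      have ht0 : (0:ℝ) < t := ht
      have hw : (t₁+t)/2 ∈ Ioi (0:ℝ) := mem_Ioi.mpr (by linarith)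
      have h1 : S ((t₁+t)/2) < S t :=
        hsf.secant_strict_mono ht₁' hw ht (by intro h; apply htne; linarith) htne (by linarith)
      have h2 : c ≤ S ((t₁+t)/2) := hc_le _ hw (by linarith)
      nlinarith [sub_pos.mpr hgt]


lemma mix_pos {a b X Y : ℝ} (ha : 0 ≤ a) (hb : 0 ≤ b) (hab : a + b = 1)
    (hX : 0 < X) (hY : 0 < Y) : 0 < a * X + b * Y := by
  nlinarith [mul_nonneg ha (sub_nonneg.mpr (min_le_left X Y)),
    mul_nonneg hb (sub_nonneg.mpr (min_le_right X Y)), lt_min hX hY]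

section Psi
variable {n : ℕ} {φ : ℝ → ℝ}

lemma psi_convexOn (hn : 0 < n) (hconv : ConvexOn ℝ (Ioi 0) φ)
    (hanti : AntitoneOn φ (Ioi 0)) :
    ConvexOn ℝ (Ioi 0) (fun t : ℝ => φ (t ^ ((n:ℝ)⁻¹))) := by
  have hp : (0:ℝ) < (n:ℝ)⁻¹ := by positivity
  have hp1 : ((n:ℝ)⁻¹ : ℝ) ≤ 1 := by
    rw [inv_le_one_iff₀]; right; exact_mod_cast hn
  refine ⟨convex_Ioi 0, fun x hx y hy a b ha hb hab => ?_⟩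
  have hx' : (0:ℝ) < x := hx
  have hy' : (0:ℝ) < y := hy
  have hxp : (0:ℝ) < x ^ ((n:ℝ)⁻¹) := Real.rpow_pos_of_pos hx' _
  have hyp : (0:ℝ) < y ^ ((n:ℝ)⁻¹) := Real.rpow_pos_of_pos hy' _
  have hconc := (Real.concaveOn_rpow hp.le hp1).2 (mem_Ici.mpr hx'.le) (mem_Ici.mpr hy'.le)
    ha hb hab
  simp only [smul_eq_mul] at hconc ⊢
  have hmix : (0:ℝ) < a * x ^ ((n:ℝ)⁻¹) + b * y ^ ((n:ℝ)⁻¹) := mix_pos ha hb hab hxp hyp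
  have hmix2 : (0:ℝ) < a * x + b * y := mix_pos ha hb hab hx' hy'
  have step1 : φ ((a * x + b * y) ^ ((n:ℝ)⁻¹))
      ≤ φ (a * x ^ ((n:ℝ)⁻¹) + b * y ^ ((n:ℝ)⁻¹)) :=
    hanti (mem_Ioi.mpr hmix) (mem_Ioi.mpr (Real.rpow_pos_of_pos hmix2 _)) hconc
  have step2 : φ (a * x ^ ((n:ℝ)⁻¹) + b * y ^ ((n:ℝ)⁻¹))
      ≤ a * φ (x ^ ((n:ℝ)⁻¹)) + b * φ (y ^ ((n:ℝ)⁻¹)) := by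
    have := hconv.2 (mem_Ioi.mpr hxp) (mem_Ioi.mpr hyp) ha hb hab
    simpa using this
  linarith

lemma psi_strictConvexOn (hn : 0 < n) (hsconv : StrictConvexOn ℝ (Ioi 0) φ)
    (hanti : AntitoneOn φ (Ioi 0)) :
    StrictConvexOn ℝ (Ioi 0) (fun t : ℝ => φ (t ^ ((n:ℝ)⁻¹))) := by
  have hp : (0:ℝ) < (n:ℝ)⁻¹ := by positivity
  have hp1 : ((n:ℝ)⁻¹ : ℝ) ≤ 1 := by
    rw [inv_le_one_iff₀]; right; exact_mod_cast hn
  refine ⟨convex_Ioi 0, fun x hx y hy hxy a b ha hb hab => ?_⟩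
  have hx' : (0:ℝ) < x := hx
  have hy' : (0:ℝ) < y := hy
  have hxp : (0:ℝ) < x ^ ((n:ℝ)⁻¹) := Real.rpow_pos_of_pos hx' _
  have hyp : (0:ℝ) < y ^ ((n:ℝ)⁻¹) := Real.rpow_pos_of_pos hy' _
  have hconc := (Real.concaveOn_rpow hp.le hp1).2 (mem_Ici.mpr hx'.le) (mem_Ici.mpr hy'.le)
    ha.le hb.le hab
  simp only [smul_eq_mul] at hconc ⊢
  have hmix : (0:ℝ) < a * x ^ ((n:ℝ)⁻¹) + b * y ^ ((n:ℝ)⁻¹) :=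
    mix_pos ha.le hb.le hab hxp hyp
  have hmix2 : (0:ℝ) < a * x + b * y := mix_pos ha.le hb.le hab hx' hy'
  have step1 : φ ((a * x + b * y) ^ ((n:ℝ)⁻¹))
      ≤ φ (a * x ^ ((n:ℝ)⁻¹) + b * y ^ ((n:ℝ)⁻¹)) :=
    hanti (mem_Ioi.mpr hmix) (mem_Ioi.mpr (Real.rpow_pos_of_pos hmix2 _)) hconc
  have hne : x ^ ((n:ℝ)⁻¹) ≠ y ^ ((n:ℝ)⁻¹) := by
    rcases lt_or_gt_of_ne hxy with h | h
    · exact ne_of_lt (Real.rpow_lt_rpow hx'.le h hp)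
    · exact (ne_of_lt (Real.rpow_lt_rpow hy'.le h hp)).symm
  have step2 : φ (a * x ^ ((n:ℝ)⁻¹) + b * y ^ ((n:ℝ)⁻¹))
      < a * φ (x ^ ((n:ℝ)⁻¹)) + b * φ (y ^ ((n:ℝ)⁻¹)) := by
    have := hsconv.2 (mem_Ioi.mpr hxp) (mem_Ioi.mpr hyp) hne ha hb hab
    simpa using this
  linarith

end Psi


namespace SphereAux

variable {m : ℕ}

lemma norm_sq_eq {k : ℕ} (x : EuclideanSpace ℝ (Fin k)) : ‖x‖^2 = ∑ j, (x j)^2 := by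
  rw [EuclideanSpace.norm_eq, Real.sq_sqrt (by positivity)]
  simp [sq_abs]

lemma dist_sq_eq {k : ℕ} (x y : EuclideanSpace ℝ (Fin k)) :
    (dist x y)^2 = ∑ j, (x j - y j)^2 := by
  rw [EuclideanSpace.dist_eq, Real.sq_sqrt (by positivity)]
  simp [Real.dist_eq, sq_abs]

noncomputable def F (y : EuclideanSpace ℝ (Fin m)) : ℝ := Real.sqrt (1 - ‖y‖^2)

noncomputable def G (i : Fin (m+1)) (s : ℝ) (y : EuclideanSpace ℝ (Fin m)) :
    EuclideanSpace ℝ (Fin (m+1)) :=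
  (WithLp.equiv 2 (Fin (m+1) → ℝ)).symm (i.insertNth (s * F y) (fun k => y k))

lemma G_apply_same (i : Fin (m+1)) (s : ℝ) (y : EuclideanSpace ℝ (Fin m)) :
    G i s y i = s * F y := by
  simp [G, WithLp.equiv_symm_apply, PiLp.toLp_apply]

lemma G_apply_succAbove (i : Fin (m+1)) (s : ℝ) (y : EuclideanSpace ℝ (Fin m)) (k : Fin m) :
    G i s y (i.succAbove k) = y k := by
  simp [G, WithLp.equiv_symm_apply, PiLp.toLp_apply]

lemma G_cont (i : Fin (m+1)) (s : ℝ) : Continuous (G i s) := by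
  have hF : Continuous (F (m := m)) := by
    exact Real.continuous_sqrt.comp (by continuity)
  apply Continuous.comp (PiLp.continuous_toLp 2 (fun _ : Fin (m+1) => ℝ))
  apply continuous_pi
  intro j
  rcases eq_or_ne j i with rfl | hne
  · simp only [Fin.insertNth_apply_same]; exact continuous_const.mul hF
  · obtain ⟨k, rfl⟩ := Fin.exists_succAbove_eq hne
    simp only [Fin.insertNth_apply_succAbove]; exact (continuous_apply k).comp
      (PiLp.continuous_ofLp 2 (fun _ : Fin m => ℝ))

lemma G_norm_sq (i : Fin (m+1)) {s : ℝ} (hs : s^2 = 1) (y : EuclideanSpace ℝ (Fin m))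
    (hy : ‖y‖ ≤ 1) : ‖G i s y‖^2 = 1 := by
  have h0 : (0:ℝ) ≤ 1 - ‖y‖^2 := by nlinarith [norm_nonneg y]
  have hF2 : F y ^ 2 = 1 - ‖y‖^2 := Real.sq_sqrt h0
  rw [norm_sq_eq, Fin.sum_univ_succAbove _ i]
  simp only [G_apply_same, G_apply_succAbove]
  have : ∑ k : Fin m, (y k)^2 = ‖y‖^2 := (norm_sq_eq y).symm
  rw [mul_pow, hs, this]
  linarith

lemma G_mem_sphere (i : Fin (m+1)) {s : ℝ} (hs : s^2 = 1) (y : EuclideanSpace ℝ (Fin m))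
    (hy : ‖y‖ ≤ 1) : G i s y ∈ sphere (0 : EuclideanSpace ℝ (Fin (m+1))) 1 := by
  rw [mem_sphere_zero_iff_norm]
  have := G_norm_sq i hs y hy
  nlinarith [norm_nonneg (G i s y)]


def Bset (m : ℕ) : Set (EuclideanSpace ℝ (Fin m)) := {y | ‖y‖^2 ≤ 1 - 1/(m+1)}

lemma F_lip {y z : EuclideanSpace ℝ (Fin m)} (hy : y ∈ Bset m) (hz : z ∈ Bset m) :
    |F y - F z| ≤ Real.sqrt (m+1) * dist y z := by
  have hm : (0:ℝ) < 1/(m+1) := by positivity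
  have hy' : ‖y‖^2 ≤ 1 - 1/(m+1) := hy
  have hz' : ‖z‖^2 ≤ 1 - 1/(m+1) := hz
  have hy1 : ‖y‖ ≤ 1 := by nlinarith [norm_nonneg y]
  have hz1 : ‖z‖ ≤ 1 := by nlinarith [norm_nonneg z]
  set a := F y with ha
  set b := F z with hb
  have ha2 : a^2 = 1 - ‖y‖^2 := Real.sq_sqrt (by nlinarith [norm_nonneg y])
  have hb2 : b^2 = 1 - ‖z‖^2 := Real.sq_sqrt (by nlinarith [norm_nonneg z])
  have haeps : Real.sqrt (1/(m+1)) ≤ a := by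
    apply Real.sqrt_le_sqrt; linarith
  have hbeps : Real.sqrt (1/(m+1)) ≤ b := by
    apply Real.sqrt_le_sqrt; linarith
  have heps : (0:ℝ) < Real.sqrt (1/(m+1)) := Real.sqrt_pos.mpr hm
  have hanonneg : 0 ≤ a := Real.sqrt_nonneg _
  have hbnonneg : 0 ≤ b := Real.sqrt_nonneg _
  -- |a - b| * (a + b) = |a² - b²|
  have key : |a - b| * (a + b) = |a^2 - b^2| := by
    rw [← abs_of_nonneg (by linarith : (0:ℝ) ≤ a + b), ← abs_mul]
    ring_nf
  have hsq : |a^2 - b^2| = |‖z‖^2 - ‖y‖^2| := by rw [ha2, hb2]; ring_nf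
  have hnormdiff : |‖z‖ - ‖y‖| ≤ dist y z := by
    rw [dist_comm, dist_eq_norm]; exact abs_norm_sub_norm_le z y
  have hsum : |‖z‖^2 - ‖y‖^2| ≤ 2 * dist y z := by
    have : ‖z‖^2 - ‖y‖^2 = (‖z‖ - ‖y‖) * (‖z‖ + ‖y‖) := by ring
    rw [this, abs_mul, abs_of_nonneg (by positivity : (0:ℝ) ≤ ‖z‖ + ‖y‖)]
    nlinarith [abs_nonneg (‖z‖ - ‖y‖), dist_nonneg (x := y) (y := z)]
  have h1 : |a - b| * (a + b) ≤ 2 * dist y z := by rw [key, hsq]; exact hsum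
  have hmul : Real.sqrt (m+1) * Real.sqrt (1/(m+1)) = 1 := by
    rw [← Real.sqrt_mul (by positivity)]
    rw [mul_one_div, div_self (by positivity), Real.sqrt_one]
  have h2 : |a - b| * (2 * Real.sqrt (1/(m+1))) ≤ 2 * dist y z := by
    calc |a - b| * (2 * Real.sqrt (1/(m+1))) ≤ |a - b| * (a + b) := by
          apply mul_le_mul_of_nonneg_left (by linarith) (abs_nonneg _)
      _ ≤ 2 * dist y z := h1
  nlinarith [mul_le_mul_of_nonneg_left h2 (Real.sqrt_nonneg ((m:ℝ)+1)), abs_nonneg (a-b),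
    Real.sqrt_nonneg ((m:ℝ)+1), dist_nonneg (x := y) (y := z)]

-- the projection
noncomputable def proj (i : Fin (m+1)) (x : EuclideanSpace ℝ (Fin (m+1))) : EuclideanSpace ℝ (Fin m) :=
  (WithLp.equiv 2 (Fin m → ℝ)).symm (fun k => x (i.succAbove k))

lemma proj_apply (i : Fin (m+1)) (x : EuclideanSpace ℝ (Fin (m+1))) (k : Fin m) :
    proj i x k = x (i.succAbove k) := rfl

lemma proj_G (i : Fin (m+1)) (s : ℝ) (y : EuclideanSpace ℝ (Fin m)) :
    proj i (G i s y) = y := by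
  ext k
  rw [proj_apply, G_apply_succAbove]

lemma proj_lipschitz (i : Fin (m+1)) : LipschitzWith 1 (proj i) := by
  apply LipschitzWith.of_dist_le_mul
  intro x y
  rw [NNReal.coe_one, one_mul]
  have h1 : (dist (proj i x) (proj i y))^2 ≤ (dist x y)^2 := by
    rw [dist_sq_eq, dist_sq_eq]
    rw [Fin.sum_univ_succAbove (fun j => (x j - y j)^2) i]
    have : ∑ k : Fin m, (proj i x k - proj i y k)^2
        = ∑ k : Fin m, (x (i.succAbove k) - y (i.succAbove k))^2 := by
      simp [proj_apply]
    rw [this]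
    nlinarith [sq_nonneg (x i - y i)]
  nlinarith [dist_nonneg (x := proj i x) (y := proj i y), dist_nonneg (x := x) (y := y)]

lemma G_lipschitzOn (i : Fin (m+1)) {s : ℝ} (hs : s^2 = 1) :
    LipschitzOnWith (Real.sqrt (m+2)).toNNReal (G i s) (Bset m) := by
  apply LipschitzOnWith.of_dist_le_mul
  intro x hx y hy
  rw [Real.coe_toNNReal _ (Real.sqrt_nonneg _)]
  have habs : |s| = 1 := by nlinarith [abs_nonneg s, sq_abs s]
  have h1 : (dist (G i s x) (G i s y))^2 = (s * F x - s * F y)^2 + (dist x y)^2 := by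
    rw [dist_sq_eq, Fin.sum_univ_succAbove (fun j => (G i s x j - G i s y j)^2) i]
    simp only [G_apply_same, G_apply_succAbove]
    rw [dist_sq_eq x y]
  have h2 : (s * F x - s * F y)^2 = (F x - F y)^2 := by
    have : s * F x - s * F y = s * (F x - F y) := by ring
    rw [this, mul_pow]; nlinarith [sq_abs s]
  have h3 : (F x - F y)^2 ≤ (m+1) * (dist x y)^2 := by
    have := F_lip hx hy
    have h4 : (F x - F y)^2 ≤ (Real.sqrt (m+1) * dist x y)^2 := by
      rw [← sq_abs (F x - F y)]
      apply pow_le_pow_left₀ (abs_nonneg _) this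
    calc (F x - F y)^2 ≤ (Real.sqrt (m+1) * dist x y)^2 := h4
      _ = (m+1) * (dist x y)^2 := by
          rw [mul_pow, Real.sq_sqrt (by positivity)]
  have h5 : (dist (G i s x) (G i s y))^2 ≤ (m+2) * (dist x y)^2 := by
    rw [h1, h2]; nlinarith
  have h6 : (Real.sqrt (m+2) * dist x y)^2 = (m+2) * (dist x y)^2 := by
    rw [mul_pow, Real.sq_sqrt (by positivity)]
  nlinarith [dist_nonneg (x := G i s x) (y := G i s y), dist_nonneg (x := x) (y := y),
    Real.sqrt_nonneg ((m:ℝ)+2), mul_nonneg (Real.sqrt_nonneg ((m:ℝ)+2)) (dist_nonneg (x := x) (y := y))]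

lemma sphere_subset_cover :
    (sphere (0 : EuclideanSpace ℝ (Fin (m+1))) 1 : Set _) ⊆
      ⋃ p : Fin (m+1) × Bool, G p.1 (if p.2 then 1 else -1) '' (Bset m) := by
  intro u hu
  rw [mem_sphere_zero_iff_norm] at hu
  have husq : ∑ j, (u j)^2 = 1 := by rw [← norm_sq_eq, hu]; norm_num
  -- pick coordinate with maximal square
  obtain ⟨i, -, hi⟩ := Finset.exists_max_image Finset.univ (fun j => (u j)^2) ⟨0, Finset.mem_univ 0⟩
  have hmax : ∀ j, (u j)^2 ≤ (u i)^2 := fun j => hi j (Finset.mem_univ j)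
  have hIs : 1 ≤ ((m:ℝ)+1) * (u i)^2 := by
    calc (1:ℝ) = ∑ j, (u j)^2 := husq.symm
      _ ≤ ∑ _j : Fin (m+1), (u i)^2 := Finset.sum_le_sum (fun j _ => hmax j)
      _ = ((m:ℝ)+1) * (u i)^2 := by
          rw [Finset.sum_const, Finset.card_univ, Fintype.card_fin, nsmul_eq_mul]
          push_cast; ring
  have hui : 1/((m:ℝ)+1) ≤ (u i)^2 := by
    rw [div_le_iff₀ (by positivity)]; linarith
  set y : EuclideanSpace ℝ (Fin m) :=
    (WithLp.equiv 2 (Fin m → ℝ)).symm (fun k => u (i.succAbove k)) with hy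
  have hyk : ∀ k, y k = u (i.succAbove k) := fun k => rfl
  have hysq : ‖y‖^2 = 1 - (u i)^2 := by
    rw [norm_sq_eq]
    have : ∑ k, (y k)^2 = ∑ k, (u (i.succAbove k))^2 := by simp [hyk]
    rw [this]
    have := Fin.sum_univ_succAbove (fun j => (u j)^2) i
    linarith
  have hyB : y ∈ Bset m := by
    have : ‖y‖^2 ≤ 1 - 1/((m:ℝ)+1) := by rw [hysq]; linarith
    simpa [Bset] using this
  set b : Bool := decide (0 ≤ u i) with hb
  set s : ℝ := if b then 1 else -1 with hs
  have hFy : F y = |u i| := by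
    rw [F, hysq]
    have : 1 - (1 - (u i)^2) = (u i)^2 := by ring
    rw [this, Real.sqrt_sq_eq_abs]
  have hsF : s * F y = u i := by
    rw [hFy, hs, hb]
    rcases le_or_gt 0 (u i) with h | h
    · simp [h, abs_of_nonneg h]
    · simp [not_le.mpr h, abs_of_neg h]
  refine mem_iUnion.mpr ⟨⟨i, b⟩, ⟨y, hyB, ?_⟩⟩
  ext j
  rcases eq_or_ne j i with rfl | hne
  · rw [G_apply_same, hsF]
  · obtain ⟨k, rfl⟩ := Fin.exists_succAbove_eq hne
    rw [G_apply_succAbove, hyk]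

lemma cast_dim : ((m+1 : ℕ) : ℝ) - 1 = (m : ℝ) := by push_cast; ring

lemma sphereσ_eq : sphereσ (m+1)
    = (μH[(m : ℝ)] : Measure (sphere (0 : EuclideanSpace ℝ (Fin (m+1))) 1)) := by
  rw [sphereσ, cast_dim]

lemma hausdorff_eq_haar :
    (μH[(m : ℝ)] : Measure (EuclideanSpace ℝ (Fin m)))
      = μH[(Module.finrank ℝ (EuclideanSpace ℝ (Fin m)) : ℝ)] := by
  rw [finrank_euclideanSpace_fin]

lemma Bset_subset_ball : Bset m ⊆ closedBall (0 : EuclideanSpace ℝ (Fin m)) 1 := by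
  intro y hy
  have hy' : ‖y‖^2 ≤ 1 - 1/((m:ℝ)+1) := hy
  have h1 : (0:ℝ) < 1/((m:ℝ)+1) := by positivity
  rw [mem_closedBall_zero_iff]
  nlinarith [norm_nonneg y]

lemma Bset_hausdorff_lt_top : μH[(m : ℝ)] (Bset m) < ⊤ := by
  rw [hausdorff_eq_haar]
  exact lt_of_le_of_lt (measure_mono Bset_subset_ball)
    (isCompact_closedBall 0 1).measure_lt_top

lemma sq_sign (b : Bool) : (if b then (1:ℝ) else -1)^2 = 1 := by cases b <;> norm_num

lemma sphereσ_finite : IsFiniteMeasure (sphereσ (m+1)) := by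
  rw [sphereσ_eq]
  constructor
  have hd0 : (0:ℝ) ≤ (m:ℝ) := by positivity
  have h1 : (μH[(m:ℝ)] : Measure (sphere (0 : EuclideanSpace ℝ (Fin (m+1))) 1)) univ
      = μH[(m:ℝ)] ((Subtype.val) '' (univ : Set (sphere (0 : EuclideanSpace ℝ (Fin (m+1))) 1))) :=
    (isometry_subtype_coe.hausdorffMeasure_image (Or.inl hd0) _).symm
  rw [h1, image_univ, Subtype.range_coe]
  have h2 : μH[(m:ℝ)] (sphere (0 : EuclideanSpace ℝ (Fin (m+1))) 1 : Set _)
      ≤ ∑' p : Fin (m+1) × Bool,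
          μH[(m:ℝ)] (G p.1 (if p.2 then 1 else -1) '' (Bset m)) :=
    le_trans (measure_mono sphere_subset_cover) (measure_iUnion_le _)
  refine lt_of_le_of_lt h2 ?_
  rw [tsum_fintype]
  refine ENNReal.sum_lt_top.mpr (fun p _ => ?_)
  refine lt_of_le_of_lt ((G_lipschitzOn p.1 (sq_sign p.2)).hausdorffMeasure_image_le hd0) ?_
  exact ENNReal.mul_lt_top
    (ENNReal.rpow_lt_top_of_nonneg hd0 ENNReal.coe_ne_top) Bset_hausdorff_lt_top


lemma F_pos {y : EuclideanSpace ℝ (Fin m)} (hy : ‖y‖ < 1) : 0 < F y := by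
  apply Real.sqrt_pos.mpr
  nlinarith [norm_nonneg y]

lemma F_eq_abs {u : EuclideanSpace ℝ (Fin (m+1))} (hu : ‖u‖ = 1) (i : Fin (m+1)) :
    F (proj i u) = |u i| := by
  have h1 : ‖proj i u‖^2 = 1 - (u i)^2 := by
    rw [norm_sq_eq]
    have h2 : ∑ k, (proj i u k)^2 = ∑ k, (u (i.succAbove k))^2 := by
      simp [proj_apply]
    rw [h2]
    have h3 := Fin.sum_univ_succAbove (fun j => (u j)^2) i
    have h4 : ∑ j, (u j)^2 = 1 := by rw [← norm_sq_eq, hu]; norm_num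
    rw [h4] at h3
    linarith
  rw [F, h1]
  have : 1 - (1 - (u i)^2) = (u i)^2 := by ring
  rw [this, Real.sqrt_sq_eq_abs]

lemma norm_proj_lt {u : EuclideanSpace ℝ (Fin (m+1))} (hu : ‖u‖ = 1) {i : Fin (m+1)}
    (hi : u i ≠ 0) : ‖proj i u‖ < 1 := by
  have h1 : ‖proj i u‖^2 = 1 - (u i)^2 := by
    have := F_eq_abs hu i
    rw [F] at this
    have h0 : (0:ℝ) ≤ 1 - ‖proj i u‖^2 ∨ 1 - ‖proj i u‖^2 < 0 := le_or_gt _ _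
    -- direct recomputation
    rw [norm_sq_eq]
    have h2 : ∑ k, (proj i u k)^2 = ∑ k, (u (i.succAbove k))^2 := by
      simp [proj_apply]
    rw [h2]
    have h3 := Fin.sum_univ_succAbove (fun j => (u j)^2) i
    have h4 : ∑ j, (u j)^2 = 1 := by rw [← norm_sq_eq, hu]; norm_num
    rw [h4] at h3
    linarith
  nlinarith [norm_nonneg (proj i u), sq_pos_of_ne_zero hi]

lemma G_proj_self {u : EuclideanSpace ℝ (Fin (m+1))} (hu : ‖u‖ = 1) {i : Fin (m+1)}
    {s : ℝ} (hs2 : s^2 = 1) (hsu : s * u i = |u i|) : G i s (proj i u) = u := by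
  ext j
  rcases eq_or_ne j i with rfl | hne
  · rw [G_apply_same, F_eq_abs hu, ← hsu]
    have h1 : s * (s * u j) = s^2 * u j := by ring
    rw [h1, hs2, one_mul]
  · obtain ⟨k, rfl⟩ := Fin.exists_succAbove_eq hne
    rw [G_apply_succAbove, proj_apply]

lemma sphereσ_openPos : (sphereσ (m+1)).IsOpenPosMeasure := by
  rw [sphereσ_eq]
  constructor
  intro U hU hUne
  have hd0 : (0:ℝ) ≤ (m:ℝ) := by positivity
  obtain ⟨u, hu⟩ := hUne
  obtain ⟨O, hO, hOU⟩ := isOpen_induced_iff.mp hU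
  have hu1 : ‖(u : EuclideanSpace ℝ (Fin (m+1)))‖ = 1 := by
    have := u.2; rwa [mem_sphere_zero_iff_norm] at this
  -- pick a nonzero coordinate
  have hex : ∃ i, (u : EuclideanSpace ℝ (Fin (m+1))) i ≠ 0 := by
    by_contra h
    push_neg at h
    have : (u : EuclideanSpace ℝ (Fin (m+1))) = 0 := by
      ext j; exact h j
    rw [this] at hu1; simp at hu1
  obtain ⟨i, hi⟩ := hex
  set uv := (u : EuclideanSpace ℝ (Fin (m+1))) with huv
  set s : ℝ := if 0 < uv i then 1 else -1 with hs
  have hs2 : s^2 = 1 := by rw [hs]; split <;> norm_num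
  have hsu : s * uv i = |uv i| := by
    rw [hs]
    rcases lt_trichotomy (uv i) 0 with h | h | h
    · simp [not_lt.mpr h.le, abs_of_neg h]
    · exact absurd h hi
    · simp [h, abs_of_pos h]
  have hsu' : 0 < s * uv i := by rw [hsu]; exact abs_pos.mpr hi
  -- the open test set downstairs
  set T : Set (EuclideanSpace ℝ (Fin m)) :=
    {y | ‖y‖ < 1} ∩ (G i s) ⁻¹' (O ∩ {x | 0 < s * x i}) with hT
  have hTopen : IsOpen T := by
    apply IsOpen.inter
    · exact isOpen_lt continuous_norm continuous_const
    · apply (G_cont i s).isOpen_preimage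
      apply hO.inter
      have hcoord : Continuous fun x : EuclideanSpace ℝ (Fin (m+1)) => s * x i := by
        exact continuous_const.mul ((continuous_apply i).comp (PiLp.continuous_ofLp 2 _))
      exact isOpen_lt continuous_const hcoord
  have hGp : G i s (proj i uv) = uv := G_proj_self hu1 hs2 hsu
  have hTne : (proj i uv) ∈ T := by
    refine ⟨norm_proj_lt hu1 hi, ?_⟩
    show G i s (proj i uv) ∈ O ∩ {x | 0 < s * x i}
    rw [hGp]
    rw [← hOU] at hu
    exact ⟨hu, hsu'⟩
  -- T is contained in the projection of (val '' U) ∩ cap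
  set A : Set (EuclideanSpace ℝ (Fin (m+1))) := (Subtype.val '' U) with hA
  have hTsub : T ⊆ proj i '' A := by
    rintro y ⟨hy1, hy2, hy3⟩
    have hy1' : ‖y‖ < 1 := hy1
    have hmem : G i s y ∈ sphere (0 : EuclideanSpace ℝ (Fin (m+1))) 1 :=
      G_mem_sphere i hs2 y hy1'.le
    refine ⟨G i s y, ⟨⟨G i s y, hmem⟩, ?_, rfl⟩, proj_G i s y⟩
    rw [← hOU]
    exact hy2
  have h1 : 0 < μH[(m:ℝ)] T := by
    rw [hausdorff_eq_haar]
    exact hTopen.measure_pos _ ⟨_, hTne⟩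
  have h2 : μH[(m:ℝ)] T ≤ μH[(m:ℝ)] (proj i '' A) := measure_mono hTsub
  have h3 : μH[(m:ℝ)] (proj i '' A) ≤ 1 * μH[(m:ℝ)] A := by
    have := (proj_lipschitz i).hausdorffMeasure_image_le hd0 A
    simpa using this
  have h4 : μH[(m:ℝ)] A
      = (μH[(m:ℝ)] : Measure (sphere (0 : EuclideanSpace ℝ (Fin (m+1))) 1)) U :=
    isometry_subtype_coe.hausdorffMeasure_image (Or.inl hd0) U
  rw [one_mul, h4] at h3
  exact (lt_of_lt_of_le h1 (le_trans h2 h3)).ne'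


end SphereAux

/-- The Orlicz dual Minkowski inequality:
`Ṽ_φ(K,L) ≥ V(K)·φ((V(L)/V(K))^{1/n})`; if `φ` is strictly convex, equality holds
iff `K` and `L` are dilates. -/
theorem orlicz_dual_minkowski
    (n : ℕ) (hn : 0 < n)
    (φ : ℝ → ℝ)
    (hφconv : ConvexOn ℝ (Ioi 0) φ)
    (hφanti : StrictAntiOn φ (Ioi 0))
    (hφpos : ∀ t ∈ Ioi (0 : ℝ), 0 < φ t)
    (hφ0 : Tendsto φ (nhdsWithin 0 (Ioi 0)) atTop)
    (hφtop : Tendsto φ atTop (nhds 0))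
    (ρK ρL : sphere (0 : EuclideanSpace ℝ (Fin n)) 1 → ℝ)
    (hKc : Continuous ρK) (hLc : Continuous ρL)
    (hKpos : ∀ u, 0 < ρK u) (hLpos : ∀ u, 0 < ρL u)
    (Vφ VK VL : ℝ)
    (hVφ : Vφ = (1 / n) * ∫ u, φ (ρL u / ρK u) * (ρK u) ^ (n : ℕ) ∂(sphereσ n))
    (hVK : VK = (1 / n) * ∫ u, (ρK u) ^ (n : ℕ) ∂(sphereσ n))
    (hVL : VL = (1 / n) * ∫ u, (ρL u) ^ (n : ℕ) ∂(sphereσ n)) :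
    Vφ ≥ VK * φ ((VL / VK) ^ ((n : ℝ)⁻¹)) ∧
      (StrictConvexOn ℝ (Ioi 0) φ →
        (Vφ = VK * φ ((VL / VK) ^ ((n : ℝ)⁻¹)) ↔
          ∃ c : ℝ, 0 < c ∧ ∀ u, ρK u = c * ρL u)) := by
  obtain ⟨m, rfl⟩ := Nat.exists_eq_succ_of_ne_zero hn.ne'
  haveI : IsFiniteMeasure (sphereσ (m+1)) := SphereAux.sphereσ_finite
  haveI : (sphereσ (m+1)).IsOpenPosMeasure := SphereAux.sphereσ_openPos
  haveI : CompactSpace (sphere (0 : EuclideanSpace ℝ (Fin (m+1))) 1) :=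
    Metric.sphere.compactSpace _ _
  haveI hne : Nonempty (sphere (0 : EuclideanSpace ℝ (Fin (m+1))) 1) := by
    refine ⟨⟨EuclideanSpace.single 0 1, ?_⟩⟩
    rw [mem_sphere_zero_iff_norm, EuclideanSpace.norm_single]
    norm_num
  set μ := sphereσ (m+1) with hμ
  have hint : ∀ f : sphere (0 : EuclideanSpace ℝ (Fin (m+1))) 1 → ℝ,
      Continuous f → Integrable f μ := fun f hf =>
    hf.integrable_of_hasCompactSupport (HasCompactSupport.of_compactSpace f)
  -- notation
  set nr : ℝ := ((m+1 : ℕ) : ℝ) with hnr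
  have hnr0 : (0:ℝ) < nr := by positivity
  set q : sphere (0 : EuclideanSpace ℝ (Fin (m+1))) 1 → ℝ := fun u => ρL u / ρK u with hq
  have hq0 : ∀ u, 0 < q u := fun u => div_pos (hLpos u) (hKpos u)
  have hqc : Continuous q := hLc.div hKc (fun u => (hKpos u).ne')
  set h : sphere (0 : EuclideanSpace ℝ (Fin (m+1))) 1 → ℝ := fun u => q u ^ (m+1) with hh
  have hh0 : ∀ u, 0 < h u := fun u => pow_pos (hq0 u) _
  have hhc : Continuous h := hqc.pow _
  have hφcont : ContinuousOn φ (Ioi 0) := hφconv.continuousOn isOpen_Ioi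
  have hφqc : Continuous (fun u => φ (q u)) :=
    hφcont.comp_continuous hqc (fun u => mem_Ioi.mpr (hq0 u))
  have hKnc : Continuous (fun u => ρK u ^ (m+1)) := hKc.pow _
  have hLnc : Continuous (fun u => ρL u ^ (m+1)) := hLc.pow _
  set A := ∫ u, (ρK u) ^ (m+1) ∂μ with hA
  set B := ∫ u, (ρL u) ^ (m+1) ∂μ with hB
  set C := ∫ u, φ (q u) * (ρK u) ^ (m+1) ∂μ with hC
  have hApos : 0 < A := by
    rw [hA]
    refine (integral_pos_iff_support_of_nonneg (fun u => pow_nonneg (hKpos u).le _) (hint _ hKnc)).mpr ?_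
    have hsupp : Function.support (fun u => (ρK u) ^ (m+1)) = univ := by
      ext u; simp only [Function.mem_support, mem_univ, iff_true]
      exact pow_ne_zero _ (hKpos u).ne'
    rw [hsupp]
    exact isOpen_univ.measure_pos μ univ_nonempty
  have hBpos : 0 < B := by
    rw [hB]
    refine (integral_pos_iff_support_of_nonneg (fun u => pow_nonneg (hLpos u).le _) (hint _ hLnc)).mpr ?_
    have hsupp : Function.support (fun u => (ρL u) ^ (m+1)) = univ := by
      ext u; simp only [Function.mem_support, mem_univ, iff_true]
      exact pow_ne_zero _ (hLpos u).ne'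
    rw [hsupp]
    exact isOpen_univ.measure_pos μ univ_nonempty
  set t₁ : ℝ := B / A with ht₁def
  have ht₁ : 0 < t₁ := div_pos hBpos hApos
  have hBt : B = t₁ * A := by rw [ht₁def, div_mul_cancel₀ _ hApos.ne']
  set ψ : ℝ → ℝ := fun t => φ (t ^ ((nr)⁻¹)) with hψ
  have hψconv : ConvexOn ℝ (Ioi 0) ψ := psi_convexOn (Nat.succ_pos m) hφconv hφanti.antitoneOn
  obtain ⟨c, hline, hstrict⟩ := support_line hψconv ht₁
  have hψh : ∀ u, ψ (h u) = φ (q u) := by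
    intro u
    rw [hψ, hh]
    simp only
    rw [Real.pow_rpow_inv_natCast (hq0 u).le (Nat.succ_ne_zero m)]
  -- the nonnegative gap function
  set g : sphere (0 : EuclideanSpace ℝ (Fin (m+1))) 1 → ℝ :=
    fun u => (φ (q u) - ψ t₁ - c * (h u - t₁)) * (ρK u) ^ (m+1) with hg
  have hg0 : ∀ u, 0 ≤ g u := by
    intro u
    apply mul_nonneg _ (pow_nonneg (hKpos u).le _)
    have := hline (h u) (mem_Ioi.mpr (hh0 u))
    rw [hψh u] at this
    linarith
  have hgc : Continuous g := by
    apply Continuous.mul _ hKnc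
    exact (hφqc.sub continuous_const).sub (continuous_const.mul (hhc.sub continuous_const))
  have hgint : Integrable g μ := hint _ hgc
  -- pointwise identity  h u * ρK u ^ (m+1) = ρL u ^ (m+1)
  have hhK : ∀ u, h u * (ρK u) ^ (m+1) = (ρL u) ^ (m+1) := by
    intro u
    rw [hh, hq]
    simp only
    rw [div_pow, div_mul_cancel₀ _ (pow_ne_zero _ (hKpos u).ne')]
  have hgeq : ∀ u, g u = φ (q u) * (ρK u) ^ (m+1)
      - (ψ t₁ - c * t₁) * (ρK u) ^ (m+1) - c * (ρL u) ^ (m+1) := by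
    intro u
    rw [hg]
    simp only
    rw [← hhK u]
    ring
  have hIg : ∫ u, g u ∂μ = C - (ψ t₁ - c * t₁) * A - c * B := by
    have e1 : Integrable (fun u => φ (q u) * (ρK u) ^ (m+1)) μ := hint _ (hφqc.mul hKnc)
    have e2 : Integrable (fun u => (ψ t₁ - c * t₁) * (ρK u) ^ (m+1)) μ :=
      hint _ (continuous_const.mul hKnc)
    have e3 : Integrable (fun u => c * (ρL u) ^ (m+1)) μ := hint _ (continuous_const.mul hLnc)
    have e12 : Integrable (fun u => φ (q u) * (ρK u) ^ (m+1)
        - (ψ t₁ - c * t₁) * (ρK u) ^ (m+1)) μ :=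
      hint _ ((hφqc.mul hKnc).sub (continuous_const.mul hKnc))
    calc ∫ u, g u ∂μ = ∫ u, (φ (q u) * (ρK u) ^ (m+1)
          - (ψ t₁ - c * t₁) * (ρK u) ^ (m+1) - c * (ρL u) ^ (m+1)) ∂μ := by
          congr 1; funext u; exact hgeq u
      _ = C - (ψ t₁ - c * t₁) * A - c * B := by
          rw [integral_sub e12 e3, integral_sub e1 e2,
            integral_const_mul, integral_const_mul]
  have hIg' : ∫ u, g u ∂μ = C - ψ t₁ * A := by rw [hIg, hBt]; ring
  have hmain : ψ t₁ * A ≤ C := by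
    have := integral_nonneg (μ := μ) (f := g) hg0
    rw [hIg'] at this
    linarith
  -- identify the quantities in the statement
  have hVKA : VK = (1/nr) * A := hVK
  have hVLB : VL = (1/nr) * B := hVL
  have hVφC : Vφ = (1/nr) * C := hVφ
  have hVKpos : 0 < VK := by rw [hVKA]; positivity
  have hratio : VL / VK = t₁ := by
    rw [hVLB, hVKA, ht₁def, mul_div_mul_left _ _ (by positivity : (1:ℝ)/nr ≠ 0)]
  have hgoalRHS : VK * φ ((VL / VK) ^ ((((m+1):ℕ):ℝ))⁻¹) = (1/nr) * (ψ t₁ * A) := by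
    rw [hratio, hVKA, hψ]
    ring
  constructor
  · rw [hVφC, hgoalRHS, ge_iff_le]
    apply mul_le_mul_of_nonneg_left hmain (by positivity)
  · intro hsφ
    have hψs : StrictConvexOn ℝ (Ioi 0) ψ :=
      psi_strictConvexOn (Nat.succ_pos m) hsφ hφanti.antitoneOn
    constructor
    · intro heq
      rw [hVφC, hgoalRHS] at heq
      have hCA : C = ψ t₁ * A := by
        have h1 : (1:ℝ)/nr ≠ 0 := by positivity
        exact mul_left_cancel₀ h1 heq
      have hgzero : ∫ u, g u ∂μ = 0 := by rw [hIg', hCA]; ring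
      have hae : g =ᵐ[μ] 0 := (integral_eq_zero_iff_of_nonneg hg0 hgint).mp hgzero
      have hgeq0 : g = 0 := (hgc.ae_eq_iff_eq μ continuous_const).mp hae
      have hpt : ∀ u, h u = t₁ := by
        intro u
        by_contra hneq
        have hzero : g u = 0 := by rw [hgeq0]; rfl
        have hlt := hstrict hψs (h u) (mem_Ioi.mpr (hh0 u)) hneq
        rw [hψh u] at hlt
        have hKn0 : (0:ℝ) < (ρK u) ^ (m+1) := pow_pos (hKpos u) _
        rw [hg] at hzero
        simp only at hzero
        rcases mul_eq_zero.mp hzero with h' | h'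
        · linarith
        · exact absurd h' hKn0.ne'
      refine ⟨(t₁ ^ (nr⁻¹))⁻¹, inv_pos.mpr (Real.rpow_pos_of_pos ht₁ _), ?_⟩
      intro u
      have hqu : q u = t₁ ^ (nr⁻¹) := by
        have : (q u ^ (m+1) : ℝ) = t₁ := hpt u
        rw [← this, Real.pow_rpow_inv_natCast (hq0 u).le (Nat.succ_ne_zero m)]
      have ht₁p : (0:ℝ) < t₁ ^ (nr⁻¹) := Real.rpow_pos_of_pos ht₁ _
      have hthis : ρL u = t₁ ^ (nr⁻¹) * ρK u := by
        rw [← hqu, hq]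
        exact (div_mul_cancel₀ (ρL u) (hKpos u).ne').symm
      rw [hthis, ← mul_assoc, inv_mul_cancel₀ ht₁p.ne', one_mul]
    · rintro ⟨c₀, hc₀, hKL⟩
      have hqconst : ∀ u, q u = c₀⁻¹ := by
        intro u
        rw [hq]
        simp only
        rw [hKL u, div_eq_iff (mul_pos hc₀ (hLpos u)).ne', ← mul_assoc,
          inv_mul_cancel₀ hc₀.ne', one_mul]
      have hCval : C = φ (c₀⁻¹) * A := by
        rw [hC]
        have : (fun u => φ (q u) * (ρK u) ^ (m+1))
            = fun u => φ (c₀⁻¹) * (ρK u) ^ (m+1) := by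
          funext u; rw [hqconst u]
        rw [this, integral_const_mul]
      have hLK : ∀ u, ρL u = (c₀⁻¹) * ρK u := by
        intro u
        rw [hKL u]
        field_simp
      have hBval : B = (c₀⁻¹)^(m+1) * A := by
        rw [hB]
        have : (fun u => (ρL u) ^ (m+1))
            = fun u => (c₀⁻¹)^(m+1) * (ρK u) ^ (m+1) := by
          funext u; rw [hLK u, mul_pow]
        rw [this, integral_const_mul]
      have hrat : VL / VK = (c₀⁻¹)^(m+1) := by
        rw [hratio, ht₁def, hBval, mul_div_assoc, div_self hApos.ne', mul_one]
      have hroot : ((c₀⁻¹ : ℝ)^(m+1)) ^ ((((m+1):ℕ):ℝ))⁻¹ = c₀⁻¹ :=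
        Real.pow_rpow_inv_natCast (by positivity) (Nat.succ_ne_zero m)
      rw [hVφC, hCval, hrat, hroot, hVKA]
      ring
end

section
/- Let φ : (0,∞) → (0,∞) be convex and strictly decreasing, and let L₁, K₁, ..., Kₙ be star bodies in ℝⁿ. Define the Orlicz multiple dual mixed volume Ṽ_φ(L₁,K₁,...,Kₙ) = (1/n)∫_{S^{n-1}} φ(ρ(K₁,u)/ρ(L₁,u)) ρ(L₁,u)ρ(K₂,u)···ρ(Kₙ,u) dS(u). Then Ṽ_φ(L₁,K₁,...,Kₙ) ≥ Ṽ(L₁,K₂,...,Kₙ) · φ( Ṽ(K₁,K₂,...,Kₙ) / Ṽ(L₁,K₂,...,Kₙ) ). If φ is strictly convex, equality holds if and only if K₁ and L₁ are dilates. -/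
open MeasureTheory Metric Real Set Finset
open scoped NNReal ENNReal

noncomputable def gma {m : ℕ} (i : Fin (m+1)) (e : ℝ) (v : Fin m → ℝ) :
    EuclideanSpace ℝ (Fin (m+1)) :=
  (e * Real.sqrt (1 - ∑ k, v k ^ 2)) • EuclideanSpace.single i 1
  + ∑ k, v k • EuclideanSpace.single (i.succAbove k) 1

def pma {m : ℕ} (i : Fin (m+1)) (x : EuclideanSpace ℝ (Fin (m+1))) : Fin m → ℝ :=
  fun k => x (i.succAbove k)

lemma euc_sum_apply {n : ℕ} {ι : Type*} [DecidableEq ι] (s : Finset ι)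
    (f : ι → EuclideanSpace ℝ (Fin n)) (j : Fin n) : (∑ x ∈ s, f x) j = ∑ x ∈ s, f x j := by
  induction s using Finset.induction_on with
  | empty => rfl
  | insert _ _ h ih => rw [Finset.sum_insert h, Finset.sum_insert h, ← ih]; rfl

lemma gma_apply_self {m : ℕ} (i : Fin (m+1)) (e : ℝ) (v : Fin m → ℝ) :
    gma i e v i = e * Real.sqrt (1 - ∑ k, v k ^ 2) := by
  show ((e * Real.sqrt (1 - ∑ k, v k ^ 2)) • EuclideanSpace.single i (1:ℝ)) i
      + (∑ k, v k • EuclideanSpace.single (i.succAbove k) (1:ℝ)) i = _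
  rw [euc_sum_apply]
  have h : (∑ x : Fin m, (v x • EuclideanSpace.single (i.succAbove x) (1:ℝ)) i) = 0 := by
    apply Finset.sum_eq_zero
    intro k _
    rw [PiLp.smul_apply, EuclideanSpace.single_apply, if_neg (Fin.succAbove_ne i k).symm,
      smul_eq_mul, mul_zero]
  rw [h, add_zero, PiLp.smul_apply, EuclideanSpace.single_apply, if_pos rfl, smul_eq_mul, mul_one]

lemma gma_apply_succAbove {m : ℕ} (i : Fin (m+1)) (e : ℝ) (v : Fin m → ℝ) (k : Fin m) :
    gma i e v (i.succAbove k) = v k := by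
  show ((e * Real.sqrt (1 - ∑ k, v k ^ 2)) • EuclideanSpace.single i (1:ℝ)) (i.succAbove k)
      + (∑ x, v x • EuclideanSpace.single (i.succAbove x) (1:ℝ)) (i.succAbove k) = _
  rw [euc_sum_apply, PiLp.smul_apply, EuclideanSpace.single_apply,
    if_neg (Fin.succAbove_ne i k), smul_eq_mul, mul_zero, zero_add,
    Finset.sum_eq_single k]
  · rw [PiLp.smul_apply, EuclideanSpace.single_apply, if_pos rfl, smul_eq_mul, mul_one]
  · intro b _ hb
    rw [PiLp.smul_apply, EuclideanSpace.single_apply,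
      if_neg (fun h => hb (Fin.succAbove_right_injective h.symm)), smul_eq_mul, mul_zero]
  · intro h; exact absurd (Finset.mem_univ k) h

lemma pma_gma {m : ℕ} (i : Fin (m+1)) (e : ℝ) (v : Fin m → ℝ) :
    pma i (gma i e v) = v := by
  funext k; exact gma_apply_succAbove i e v k

lemma gma_sum_sq {m : ℕ} (i : Fin (m+1)) (e : ℝ) (he : e = 1 ∨ e = -1) (v : Fin m → ℝ)
    (hv : ∑ k, v k ^ 2 ≤ 1) : ∑ j, gma i e v j ^ 2 = 1 := by
  have h0 : 0 ≤ 1 - ∑ k, v k ^ 2 := by linarith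
  rw [Fin.sum_univ_succAbove (fun j => gma i e v j ^ 2) i]
  simp only [gma_apply_self, gma_apply_succAbove]
  have he2 : e ^ 2 = 1 := by rcases he with h | h <;> simp [h]
  rw [mul_pow, he2, one_mul, Real.sq_sqrt h0]
  ring

lemma gma_norm {m : ℕ} (i : Fin (m+1)) (e : ℝ) (he : e = 1 ∨ e = -1) (v : Fin m → ℝ)
    (hv : ∑ k, v k ^ 2 ≤ 1) : ‖gma i e v‖ = 1 := by
  rw [EuclideanSpace.norm_eq]
  have := gma_sum_sq i e he v hv
  simp only [Real.norm_eq_abs, sq_abs]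
  rw [this, Real.sqrt_one]

lemma gma_continuous {m : ℕ} (i : Fin (m+1)) (e : ℝ) : Continuous (gma i e) := by
  unfold gma
  apply Continuous.add
  · exact ((continuous_const.mul ((Real.continuous_sqrt).comp
      (continuous_const.sub (continuous_finset_sum _ fun k _ =>
        (continuous_apply k).pow 2)))).smul continuous_const)
  · exact continuous_finset_sum _ fun k _ => (continuous_apply k).smul continuous_const

lemma pma_lipschitz {m : ℕ} (i : Fin (m+1)) : LipschitzWith 1 (pma i) := by
  apply LipschitzWith.of_dist_le_mul
  intro x y
  rw [NNReal.coe_one, one_mul]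
  rw [dist_pi_le_iff dist_nonneg]
  intro k
  rw [EuclideanSpace.dist_eq]
  have h1 : dist (x (i.succAbove k)) (y (i.succAbove k)) ^ 2
      ≤ ∑ j, dist (x j) (y j) ^ 2 :=
    Finset.single_le_sum (f := fun j => dist (x j) (y j) ^ 2)
      (fun j _ => sq_nonneg _) (Finset.mem_univ _)
  calc dist (pma i x k) (pma i y k)
      = Real.sqrt (dist (x (i.succAbove k)) (y (i.succAbove k)) ^ 2) := by
        rw [Real.sqrt_sq dist_nonneg]; rfl
    _ ≤ _ := Real.sqrt_le_sqrt h1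



section
variable {m : ℕ}

-- sqrt Lipschitz-type bound
lemma sqrt_diff_le {x y δ : ℝ} (hδ : 0 < δ) (hx : δ ≤ x) (hy : δ ≤ y) :
    |Real.sqrt x - Real.sqrt y| ≤ |x - y| / Real.sqrt δ := by
  have hx0 : 0 ≤ x := le_trans hδ.le hx
  have hy0 : 0 ≤ y := le_trans hδ.le hy
  have hs : 0 < Real.sqrt δ := Real.sqrt_pos.2 hδ
  rw [le_div_iff₀ hs]
  have key : |Real.sqrt x - Real.sqrt y| * (Real.sqrt x + Real.sqrt y) = |x - y| := by
    rw [← abs_of_nonneg (by positivity : (0:ℝ) ≤ Real.sqrt x + Real.sqrt y), ← abs_mul]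
    congr 1
    have : (Real.sqrt x - Real.sqrt y) * (Real.sqrt x + Real.sqrt y)
        = Real.sqrt x ^ 2 - Real.sqrt y ^ 2 := by ring
    rw [this, Real.sq_sqrt hx0, Real.sq_sqrt hy0]
  calc |Real.sqrt x - Real.sqrt y| * Real.sqrt δ
      ≤ |Real.sqrt x - Real.sqrt y| * (Real.sqrt x + Real.sqrt y) := by
        apply mul_le_mul_of_nonneg_left _ (abs_nonneg _)
        have h1 : Real.sqrt δ ≤ Real.sqrt x := Real.sqrt_le_sqrt hx
        have h2 : 0 ≤ Real.sqrt y := Real.sqrt_nonneg _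
        linarith
    _ = |x - y| := key
end


section
variable {m : ℕ}

-- gma already defined

def capD (m : ℕ) : Set (Fin m → ℝ) := {v | ∑ k, v k ^ 2 ≤ 1 - 1/(m+1)}

lemma gma_lipschitzOn (i : Fin (m+1)) (e : ℝ) (he : e = 1 ∨ e = -1) :
    LipschitzOnWith ((2*(m+1)^2 : ℝ≥0)) (gma i e) (capD m) := by
  rw [lipschitzOnWith_iff_dist_le_mul]
  intro v hv w hw
  have hone : (0:ℝ) < 1/(m+1) := by positivity
  have hv1 : ∑ k, v k ^ 2 ≤ 1 - 1/(m+1) := hv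
  have hw1 : ∑ k, w k ^ 2 ≤ 1 - 1/(m+1) := hw
  have habs : ∀ k, |v k| ≤ 1 := by
    intro k
    have h1 : v k ^ 2 ≤ ∑ j, v j ^ 2 :=
      Finset.single_le_sum (f := fun j => v j ^ 2) (fun j _ => sq_nonneg _) (Finset.mem_univ k)
    have := hv1
    nlinarith [abs_nonneg (v k), sq_abs (v k)]
  have habsw : ∀ k, |w k| ≤ 1 := by
    intro k
    have h1 : w k ^ 2 ≤ ∑ j, w j ^ 2 :=
      Finset.single_le_sum (f := fun j => w j ^ 2) (fun j _ => sq_nonneg _) (Finset.mem_univ k)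
    nlinarith [abs_nonneg (w k), sq_abs (w k)]
  have hd0 : 0 ≤ dist v w := dist_nonneg
  have hcoord : ∀ k, |v k - w k| ≤ dist v w := by
    intro k
    have := dist_le_pi_dist v w k
    rwa [Real.dist_eq] at this
  -- |a - b| small
  have hab : |(∑ k, v k ^ 2) - ∑ k, w k ^ 2| ≤ 2 * m * dist v w := by
    rw [← Finset.sum_sub_distrib]
    calc |∑ k, (v k ^ 2 - w k ^ 2)| ≤ ∑ k, |v k ^ 2 - w k ^ 2| :=
          Finset.abs_sum_le_sum_abs _ _
      _ ≤ ∑ _x : Fin m, (2 * dist v w) := by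
          apply Finset.sum_le_sum
          intro k _
          have : v k ^ 2 - w k ^ 2 = (v k - w k) * (v k + w k) := by ring
          rw [this, abs_mul]
          have h2 : |v k + w k| ≤ 2 := by
            calc |v k + w k| ≤ |v k| + |w k| := abs_add_le _ _
              _ ≤ 2 := by linarith [habs k, habsw k]
          calc |v k - w k| * |v k + w k| ≤ dist v w * 2 := by
                apply mul_le_mul (hcoord k) h2 (abs_nonneg _) hd0
            _ = 2 * dist v w := by ring
      _ = 2 * m * dist v w := by
          rw [Finset.sum_const, Finset.card_univ, Fintype.card_fin]
          push_cast; ring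
  -- sqrt part
  have hsq : |Real.sqrt (1 - ∑ k, v k ^ 2) - Real.sqrt (1 - ∑ k, w k ^ 2)|
      ≤ 2 * m * Real.sqrt (m+1) * dist v w := by
    have h1 : (1:ℝ)/(m+1) ≤ 1 - ∑ k, v k ^ 2 := by linarith
    have h2 : (1:ℝ)/(m+1) ≤ 1 - ∑ k, w k ^ 2 := by linarith
    have := sqrt_diff_le hone h1 h2
    have heq : |(1 - ∑ k, v k ^ 2) - (1 - ∑ k, w k ^ 2)|
        = |(∑ k, v k ^ 2) - ∑ k, w k ^ 2| := by
      rw [show (1 - ∑ k, v k ^ 2) - (1 - ∑ k, w k ^ 2)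
        = -((∑ k, v k ^ 2) - ∑ k, w k ^ 2) by ring, abs_neg]
    rw [heq] at this
    have hsd : Real.sqrt (1/((m:ℝ)+1)) = 1 / Real.sqrt ((m:ℝ)+1) := by
      rw [one_div, one_div, Real.sqrt_inv]
    rw [hsd, div_div_eq_mul_div, div_one] at this
    calc |Real.sqrt (1 - ∑ k, v k ^ 2) - Real.sqrt (1 - ∑ k, w k ^ 2)|
        ≤ |(∑ k, v k ^ 2) - ∑ k, w k ^ 2| * Real.sqrt ((m:ℝ)+1) := this
      _ ≤ (2 * m * dist v w) * Real.sqrt ((m:ℝ)+1) := by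
          apply mul_le_mul_of_nonneg_right hab (Real.sqrt_nonneg _)
      _ = 2 * m * Real.sqrt ((m:ℝ)+1) * dist v w := by ring
  -- difference decomposition
  have hdiff : gma i e v - gma i e w
      = (e * (Real.sqrt (1 - ∑ k, v k ^ 2) - Real.sqrt (1 - ∑ k, w k ^ 2)))
          • EuclideanSpace.single i 1
        + ∑ k, (v k - w k) • EuclideanSpace.single (i.succAbove k) 1 := by
    unfold gma
    have habel : ∀ (a b c d : EuclideanSpace ℝ (Fin (m+1))),
        (a + c) - (b + d) = (a - b) + (c - d) := by intros; abel
    rw [habel, ← sub_smul, ← Finset.sum_sub_distrib]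
    congr 1
    · congr 1; ring
    · apply Finset.sum_congr rfl
      intro k _
      rw [sub_smul]
  have he1 : |e| = 1 := by rcases he with h | h <;> simp [h]
  rw [dist_eq_norm, hdiff]
  have hn1 : ‖(e * (Real.sqrt (1 - ∑ k, v k ^ 2) - Real.sqrt (1 - ∑ k, w k ^ 2)))
      • (EuclideanSpace.single i (1:ℝ) : EuclideanSpace ℝ (Fin (m+1)))‖
      = |Real.sqrt (1 - ∑ k, v k ^ 2) - Real.sqrt (1 - ∑ k, w k ^ 2)| := by
    rw [norm_smul, EuclideanSpace.norm_single, norm_one, mul_one, Real.norm_eq_abs,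
      abs_mul, he1, one_mul]
  have hn2 : ‖∑ k, (v k - w k) • (EuclideanSpace.single (i.succAbove k) (1:ℝ)
      : EuclideanSpace ℝ (Fin (m+1)))‖ ≤ m * dist v w := by
    calc ‖∑ k, (v k - w k) • (EuclideanSpace.single (i.succAbove k) (1:ℝ)
        : EuclideanSpace ℝ (Fin (m+1)))‖
        ≤ ∑ k, ‖(v k - w k) • (EuclideanSpace.single (i.succAbove k) (1:ℝ)
          : EuclideanSpace ℝ (Fin (m+1)))‖ := norm_sum_le _ _
      _ = ∑ k, |v k - w k| := by
          apply Finset.sum_congr rfl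
          intro k _
          rw [norm_smul, EuclideanSpace.norm_single, norm_one, mul_one, Real.norm_eq_abs]
      _ ≤ ∑ _x : Fin m, dist v w := Finset.sum_le_sum (fun k _ => hcoord k)
      _ = m * dist v w := by
          rw [Finset.sum_const, Finset.card_univ, Fintype.card_fin]
          push_cast; ring
  have hcoe : (((2*(m+1)^2 : ℝ≥0)) : ℝ) = 2*((m:ℝ)+1)^2 := by
    push_cast; ring
  rw [hcoe]
  have hs0 : 0 ≤ Real.sqrt ((m:ℝ)+1) := Real.sqrt_nonneg _
  have hs2 : Real.sqrt ((m:ℝ)+1) ^ 2 = (m:ℝ)+1 := Real.sq_sqrt (by positivity)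
  calc ‖_ + _‖ ≤ _ + _ := norm_add_le _ _
    _ ≤ 2 * m * Real.sqrt ((m:ℝ)+1) * dist v w + m * dist v w := by
        rw [hn1]; exact add_le_add hsq hn2
    _ = (2 * m * Real.sqrt ((m:ℝ)+1) + m) * dist v w := by ring
    _ ≤ 2*((m:ℝ)+1)^2 * dist v w := by
        have hfac : 2 * (m:ℝ) * Real.sqrt ((m:ℝ)+1) + m ≤ 2*((m:ℝ)+1)^2 := by
          nlinarith [hs2, hs0, sq_nonneg (Real.sqrt ((m:ℝ)+1) - 1), (Nat.cast_nonneg m : (0:ℝ) ≤ m)]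
        exact mul_le_mul_of_nonneg_right hfac hd0
        -- nlinarith [hs2, hs0, sq_nonneg (Real.sqrt ((m:ℝ)+1) - 1), (Nat.cast_nonneg m : (0:ℝ) ≤ m)]
  
end

section
variable {m : ℕ}

lemma sum_sq_of_norm_one (x : EuclideanSpace ℝ (Fin (m+1))) (hx : ‖x‖ = 1) :
    ∑ j, x j ^ 2 = 1 := by
  have h := EuclideanSpace.norm_eq x
  rw [hx] at h
  have h2 : ∑ j, ‖x j‖ ^ 2 = 1 := by
    have hnn : 0 ≤ ∑ j, ‖x j‖ ^ 2 := Finset.sum_nonneg fun j _ => sq_nonneg _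
    nlinarith [Real.sq_sqrt hnn]
  simpa [Real.norm_eq_abs, sq_abs] using h2

lemma pma_sum_sq (i : Fin (m+1)) (x : EuclideanSpace ℝ (Fin (m+1))) :
    ∑ k, pma i x k ^ 2 = (∑ j, x j ^ 2) - x i ^ 2 := by
  rw [Fin.sum_univ_succAbove (fun j => x j ^ 2) i]
  unfold pma; ring

lemma gma_pma_eq (i : Fin (m+1)) (e : ℝ) (x : EuclideanSpace ℝ (Fin (m+1)))
    (hx : ∑ j, x j ^ 2 = 1) (hex : e * |x i| = x i) :
    gma i e (pma i x) = x := by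
  ext j
  rcases eq_or_ne j i with rfl | hne
  · rw [gma_apply_self, pma_sum_sq, hx]
    have : (1 : ℝ) - (1 - x j ^ 2) = x j ^ 2 := by ring
    rw [this, Real.sqrt_sq_eq_abs, hex]
  · obtain ⟨k, hk⟩ := Fin.exists_succAbove_eq hne
    rw [← hk, gma_apply_succAbove]
    rfl

lemma exists_cover (x : EuclideanSpace ℝ (Fin (m+1))) (hx : ‖x‖ = 1) :
    ∃ (i : Fin (m+1)) (e : ℝ), (e = 1 ∨ e = -1) ∧ pma i x ∈ capD m
      ∧ gma i e (pma i x) = x := by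
  have hs := sum_sq_of_norm_one x hx
  obtain ⟨i, _, hi⟩ := Finset.exists_max_image Finset.univ (fun j => x j ^ 2)
    ⟨0, Finset.mem_univ 0⟩
  have hmax : ∀ j, x j ^ 2 ≤ x i ^ 2 := fun j => hi j (Finset.mem_univ j)
  have hbig : 1 / ((m:ℝ) + 1) ≤ x i ^ 2 := by
    have h1 : (1:ℝ) = ∑ j, x j ^ 2 := hs.symm
    have h2 : ∑ j, x j ^ 2 ≤ ∑ _j : Fin (m+1), x i ^ 2 :=
      Finset.sum_le_sum fun j _ => hmax j
    rw [Finset.sum_const, Finset.card_univ, Fintype.card_fin, nsmul_eq_mul] at h2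
    push_cast at h2
    rw [div_le_iff₀ (by positivity)]
    nlinarith [h2]
  have hD : pma i x ∈ capD m := by
    show ∑ k, pma i x k ^ 2 ≤ 1 - 1/((m:ℕ)+1)
    rw [pma_sum_sq, hs]
    push_cast
    linarith
  by_cases hxi : 0 ≤ x i
  · exact ⟨i, 1, Or.inl rfl, hD, gma_pma_eq i 1 x hs (by rw [one_mul, abs_of_nonneg hxi])⟩
  · exact ⟨i, -1, Or.inr rfl, hD, gma_pma_eq i (-1) x hs
      (by rw [abs_of_neg (lt_of_not_ge hxi)]; ring)⟩
end

lemma sphereσ_eq (m : ℕ) :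
    sphereσ (m+1) = (μH[(m:ℝ)] : Measure (sphere (0 : EuclideanSpace ℝ (Fin (m+1))) 1)) := by
  rw [sphereσ, show (((m+1:ℕ)):ℝ) - 1 = (m:ℝ) by push_cast; ring]

lemma hausdorff_pi_fin (m : ℕ) : (μH[(m:ℝ)] : Measure (Fin m → ℝ)) = volume := by
  have := MeasureTheory.hausdorffMeasure_pi_real (ι := Fin m)
  rwa [Fintype.card_fin] at this

lemma capD_subset_ball (m : ℕ) : capD m ⊆ Metric.closedBall (0 : Fin m → ℝ) 1 := by
  intro v hv
  have hv1 : ∑ k, v k ^ 2 ≤ 1 - 1/((m:ℝ)+1) := by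
    have := hv; unfold capD at this; simpa using this
  rw [Metric.mem_closedBall, dist_pi_le_iff zero_le_one]
  intro k
  have h1 : v k ^ 2 ≤ ∑ j, v j ^ 2 :=
    Finset.single_le_sum (f := fun j => v j ^ 2) (fun j _ => sq_nonneg _) (Finset.mem_univ k)
  have h2 : (0:ℝ) < 1/((m:ℝ)+1) := by positivity
  have h0 : (0 : Fin m → ℝ) k = 0 := rfl
  rw [Real.dist_eq, h0, sub_zero]
  nlinarith [sq_abs (v k), abs_nonneg (v k)]

theorem sphereσ_isFiniteMeasure (m : ℕ) : IsFiniteMeasure (sphereσ (m+1)) := by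
  rw [sphereσ_eq]
  constructor
  have hd0 : (0:ℝ) ≤ (m:ℝ) := Nat.cast_nonneg m
  have hiso : Isometry (Subtype.val : sphere (0 : EuclideanSpace ℝ (Fin (m+1))) 1
      → EuclideanSpace ℝ (Fin (m+1))) := isometry_subtype_coe
  have h1 := hiso.hausdorffMeasure_image (d := (m:ℝ)) (Or.inl hd0) univ
  rw [image_univ, Subtype.range_coe] at h1
  rw [← h1]
  have hcover : (sphere (0 : EuclideanSpace ℝ (Fin (m+1))) 1 : Set _)
      ⊆ ⋃ p : Fin (m+1) × Bool, gma p.1 (if p.2 then 1 else -1) '' capD m := by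
    intro x hx
    rw [mem_sphere_zero_iff_norm] at hx
    obtain ⟨i, e, he, hD, hgx⟩ := exists_cover x hx
    rcases he with rfl | rfl
    · exact mem_iUnion.2 ⟨(i, true), ⟨pma i x, hD, by simpa using hgx⟩⟩
    · exact mem_iUnion.2 ⟨(i, false), ⟨pma i x, hD, by simpa using hgx⟩⟩
  calc μH[(m:ℝ)] (sphere (0 : EuclideanSpace ℝ (Fin (m+1))) 1 : Set _)
      ≤ μH[(m:ℝ)] (⋃ p : Fin (m+1) × Bool, gma p.1 (if p.2 then 1 else -1) '' capD m) :=
        measure_mono hcover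
    _ ≤ ∑' p : Fin (m+1) × Bool, μH[(m:ℝ)] (gma p.1 (if p.2 then 1 else -1) '' capD m) :=
        measure_iUnion_le _
    _ < ⊤ := by
        rw [tsum_fintype]
        apply ENNReal.sum_lt_top.2
        intro p _
        have he : (if p.2 then (1:ℝ) else -1) = 1 ∨ (if p.2 then (1:ℝ) else -1) = -1 := by
          by_cases h : p.2 <;> simp [h]
        have hlip := gma_lipschitzOn p.1 (if p.2 then (1:ℝ) else -1) he
        calc μH[(m:ℝ)] (gma p.1 (if p.2 then 1 else -1) '' capD m)
            ≤ ((2*(m+1)^2 : ℝ≥0) : ℝ≥0∞) ^ (m:ℝ) * μH[(m:ℝ)] (capD m) :=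
              hlip.hausdorffMeasure_image_le hd0
          _ < ⊤ := by
              apply ENNReal.mul_lt_top
              · exact ENNReal.rpow_lt_top_of_nonneg hd0 ENNReal.coe_ne_top
              · rw [hausdorff_pi_fin]
                exact lt_of_le_of_lt (measure_mono (capD_subset_ball m))
                  (isCompact_closedBall 0 1).measure_lt_top

theorem sphereσ_isOpenPosMeasure (m : ℕ) : (sphereσ (m+1)).IsOpenPosMeasure := by
  rw [sphereσ_eq]
  constructor
  intro U hU hne
  obtain ⟨u, hu⟩ := hne
  obtain ⟨O, hO, hOU⟩ := isOpen_induced_iff.mp hU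
  have hd0 : (0:ℝ) ≤ (m:ℝ) := Nat.cast_nonneg m
  set x : EuclideanSpace ℝ (Fin (m+1)) := (u : EuclideanSpace ℝ (Fin (m+1))) with hxdef
  have hx : ‖x‖ = 1 := by
    have := u.2
    rwa [mem_sphere_zero_iff_norm] at this
  have hs := sum_sq_of_norm_one x hx
  have hex : ∃ i, x i ≠ 0 := by
    by_contra h
    push_neg at h
    rw [Finset.sum_eq_zero (fun j _ => by rw [h j]; ring)] at hs
    exact one_ne_zero hs.symm
  obtain ⟨i, hxi⟩ := hex
  have hxi2 : 0 < x i ^ 2 := by positivity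
  obtain ⟨e, he1, hee⟩ : ∃ e : ℝ, (e = 1 ∨ e = -1) ∧ e * |x i| = x i := by
    by_cases h : 0 ≤ x i
    · exact ⟨1, Or.inl rfl, by rw [one_mul, abs_of_nonneg h]⟩
    · exact ⟨-1, Or.inr rfl, by rw [abs_of_neg (lt_of_not_ge h)]; ring⟩
  set W : Set (Fin m → ℝ) := {v | ∑ k, v k ^ 2 < 1} ∩ (gma i e) ⁻¹' O with hWdef
  have hWopen : IsOpen W := by
    apply IsOpen.inter
    · exact isOpen_lt (continuous_finset_sum _ fun k _ => (continuous_apply k).pow 2)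
        continuous_const
    · exact hO.preimage (gma_continuous i e)
  have hv0W : pma i x ∈ W := by
    constructor
    · show ∑ k, pma i x k ^ 2 < 1
      rw [pma_sum_sq, hs]; linarith
    · show gma i e (pma i x) ∈ O
      rw [gma_pma_eq i e x hs hee]
      rw [← hOU] at hu
      exact hu
  have hWsub : W ⊆ pma i '' (Subtype.val '' U) := by
    intro v hv
    obtain ⟨hv1, hv2⟩ := hv
    have hvsum : ∑ k, v k ^ 2 ≤ 1 := le_of_lt hv1
    have hnorm : ‖gma i e v‖ = 1 := gma_norm i e he1 v hvsum
    have hmem : gma i e v ∈ sphere (0 : EuclideanSpace ℝ (Fin (m+1))) 1 := by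
      rwa [mem_sphere_zero_iff_norm]
    refine ⟨gma i e v, ⟨⟨gma i e v, hmem⟩, ?_, rfl⟩, ?_⟩
    · rw [← hOU]; exact hv2
    · rw [pma_gma]
  have hiso : Isometry (Subtype.val : sphere (0 : EuclideanSpace ℝ (Fin (m+1))) 1
      → EuclideanSpace ℝ (Fin (m+1))) := isometry_subtype_coe
  have h1 := hiso.hausdorffMeasure_image (d := (m:ℝ)) (Or.inl hd0) U
  have hchain : volume W ≤ μH[(m:ℝ)] U := by
    calc volume W = μH[(m:ℝ)] W := by rw [hausdorff_pi_fin]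
      _ ≤ μH[(m:ℝ)] (pma i '' (Subtype.val '' U)) := measure_mono hWsub
      _ ≤ ((1 : ℝ≥0) : ℝ≥0∞) ^ (m:ℝ) * μH[(m:ℝ)] (Subtype.val '' U) :=
          (pma_lipschitz i).hausdorffMeasure_image_le hd0 _
      _ = μH[(m:ℝ)] (Subtype.val '' U) := by simp
      _ = μH[(m:ℝ)] U := h1
  have hpos : 0 < volume W := hWopen.measure_pos volume ⟨pma i x, hv0W⟩
  exact fun h => (lt_of_lt_of_le hpos hchain).ne' h


/-- Jensen-type inequality for the Orlicz multiple dual mixed volume: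
`Ṽ_φ(L₁,K₁,...,Kₙ) ≥ Ṽ(L₁,K₂,...,Kₙ)·φ(Ṽ(K₁,...,Kₙ)/Ṽ(L₁,K₂,...,Kₙ))`;
if `φ` is strictly convex, equality holds iff `K₁` and `L₁` are dilates.
The star bodies `K₁,...,Kₙ` have radial functions `ρ 1, ..., ρ n`. -/
theorem orlicz_multiple_dual_mixed_volume_jensen
    (n : ℕ) (hn : 0 < n)
    (φ : ℝ → ℝ)
    (hφconv : ConvexOn ℝ (Ioi 0) φ)
    (hφanti : StrictAntiOn φ (Ioi 0))
    (hφpos : ∀ t ∈ Ioi (0 : ℝ), 0 < φ t)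
    (ρL : sphere (0 : EuclideanSpace ℝ (Fin n)) 1 → ℝ)
    (ρ : ℕ → (sphere (0 : EuclideanSpace ℝ (Fin n)) 1 → ℝ))
    (hLc : Continuous ρL) (hLpos : ∀ u, 0 < ρL u)
    (hc : ∀ i, 1 ≤ i → i ≤ n → Continuous (ρ i))
    (hpos : ∀ i, 1 ≤ i → i ≤ n → ∀ u, 0 < ρ i u)
    (Vφ VL VK : ℝ)
    (hVφ : Vφ = (1 / n) * ∫ u,
      φ (ρ 1 u / ρL u) * (ρL u * ∏ j ∈ Finset.Icc 2 n, ρ j u) ∂(sphereσ n))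
    (hVL : VL = (1 / n) * ∫ u, ρL u * ∏ j ∈ Finset.Icc 2 n, ρ j u ∂(sphereσ n))
    (hVK : VK = (1 / n) * ∫ u, ∏ j ∈ Finset.Icc 1 n, ρ j u ∂(sphereσ n)) :
    Vφ ≥ VL * φ (VK / VL) ∧
      (StrictConvexOn ℝ (Ioi 0) φ →
        (Vφ = VL * φ (VK / VL) ↔ ∃ c : ℝ, 0 < c ∧ ∀ u, ρ 1 u = c * ρL u)) := by
  obtain ⟨m, rfl⟩ : ∃ m, n = m + 1 := ⟨n - 1, by omega⟩
  haveI hfin : IsFiniteMeasure (sphereσ (m+1)) := sphereσ_isFiniteMeasure m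
  haveI hop : (sphereσ (m+1)).IsOpenPosMeasure := sphereσ_isOpenPosMeasure m
  haveI hcompact : CompactSpace (sphere (0 : EuclideanSpace ℝ (Fin (m+1))) 1) :=
    isCompact_iff_compactSpace.mp (isCompact_sphere 0 1)
  haveI hSne : Nonempty (sphere (0 : EuclideanSpace ℝ (Fin (m+1))) 1) := by
    refine ⟨⟨EuclideanSpace.single 0 1, ?_⟩⟩
    rw [mem_sphere_zero_iff_norm, EuclideanSpace.norm_single, norm_one]
  set σ := sphereσ (m+1) with hσdef
  -- integrability of continuous functions
  have hIntc : ∀ {ν : Measure (sphere (0 : EuclideanSpace ℝ (Fin (m+1))) 1)}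
      [IsFiniteMeasure ν] (f : (sphere (0 : EuclideanSpace ℝ (Fin (m+1))) 1) → ℝ),
      Continuous f → Integrable f ν := by
    intro ν hν f hf
    rw [← integrableOn_univ]
    exact hf.continuousOn.integrableOn_compact isCompact_univ
  set N : ℝ := ((m+1 : ℕ) : ℝ) with hNdef
  have hNpos : 0 < N := by positivity
  -- the weight and quotient
  set w : (sphere (0 : EuclideanSpace ℝ (Fin (m+1))) 1) → ℝ := fun u => ρL u * ∏ j ∈ Finset.Icc 2 (m+1), ρ j u with hwdef
  have hwc : Continuous w := by
    apply hLc.mul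
    apply continuous_finset_prod
    intro j hj
    rw [Finset.mem_Icc] at hj
    exact hc j (by omega) hj.2
  have hwpos : ∀ u, 0 < w u := by
    intro u
    apply mul_pos (hLpos u)
    apply Finset.prod_pos
    intro j hj
    rw [Finset.mem_Icc] at hj
    exact hpos j (by omega) hj.2 u
  set g : (sphere (0 : EuclideanSpace ℝ (Fin (m+1))) 1) → ℝ := fun u => ρ 1 u / ρL u with hgdef
  have h1c : Continuous (ρ 1) := hc 1 le_rfl (by omega)
  have h1pos : ∀ u, 0 < ρ 1 u := hpos 1 le_rfl (by omega)
  have hgc : Continuous g := h1c.div hLc fun u => (hLpos u).ne'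
  have hgpos : ∀ u, 0 < g u := fun u => div_pos (h1pos u) (hLpos u)
  -- product splitting
  have hprod : ∀ u, ∏ j ∈ Finset.Icc 1 (m+1), ρ j u
      = ρ 1 u * ∏ j ∈ Finset.Icc 2 (m+1), ρ j u := by
    intro u
    have hins : Finset.Icc 1 (m+1) = insert 1 (Finset.Icc 2 (m+1)) := by
      ext a
      simp only [Finset.mem_Icc, Finset.mem_insert]
      omega
    rw [hins, Finset.prod_insert (by simp [Finset.mem_Icc])]
  have hwg : ∀ u, w u * g u = ∏ j ∈ Finset.Icc 1 (m+1), ρ j u := by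
    intro u
    show (ρL u * ∏ j ∈ Finset.Icc 2 (m+1), ρ j u) * (ρ 1 u / ρL u) = _
    rw [hprod u]
    have hne := (hLpos u).ne'
    field_simp
  -- the weighted measure
  set μ : Measure (sphere (0 : EuclideanSpace ℝ (Fin (m+1))) 1) := σ.withDensity (fun u => ((w u).toNNReal : ℝ≥0∞)) with hμdef
  have hwN : Measurable (fun u => (w u).toNNReal) :=
    (continuous_real_toNNReal.comp hwc).measurable
  have hIntEq : ∀ f : (sphere (0 : EuclideanSpace ℝ (Fin (m+1))) 1) → ℝ, (∫ u, f u ∂μ) = ∫ u, w u * f u ∂σ := by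
    intro f
    rw [hμdef, integral_withDensity_eq_integral_smul hwN f]
    congr 1
    funext u
    rw [NNReal.smul_def, Real.coe_toNNReal _ (hwpos u).le]
    rfl
  have hwint : Integrable w σ := hIntc w hwc
  have hIwpos : 0 < ∫ u, w u ∂σ := by
    rw [integral_pos_iff_support_of_nonneg (fun u => (hwpos u).le) hwint]
    have hsupp : Function.support w = Set.univ := by
      ext u; simp [Function.mem_support, (hwpos u).ne']
    rw [hsupp]
    exact isOpen_univ.measure_pos σ univ_nonempty
  have hcoe : (fun u => (((w u).toNNReal : ℝ≥0∞))) = fun u => ENNReal.ofReal (w u) := rfl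
  have hμuniv : μ Set.univ = ENNReal.ofReal (∫ u, w u ∂σ) := by
    rw [hμdef, withDensity_apply _ MeasurableSet.univ, Measure.restrict_univ, hcoe,
      ← ofReal_integral_eq_lintegral_ofReal hwint (ae_of_all _ fun u => (hwpos u).le)]
  haveI hμfin : IsFiniteMeasure μ := by
    apply isFiniteMeasure_withDensity
    rw [hcoe, ← ofReal_integral_eq_lintegral_ofReal hwint (ae_of_all _ fun u => (hwpos u).le)]
    exact ENNReal.ofReal_ne_top
  haveI hμne : NeZero μ := by
    refine ⟨Measure.measure_univ_ne_zero.1 ?_⟩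
    rw [hμuniv]
    exact (ENNReal.ofReal_pos.2 hIwpos).ne'
  have hμtoReal : (μ Set.univ).toReal = ∫ u, w u ∂σ := by
    rw [hμuniv, ENNReal.toReal_ofReal hIwpos.le]
  -- integral identities
  have hIw : ∫ u, w u ∂σ = N * VL := by
    rw [hVL]; field_simp
  have hVLpos : 0 < VL := by
    rw [hVL]
    exact mul_pos (by positivity) hIwpos
  have hIK : ∫ u, g u ∂μ = N * VK := by
    rw [hIntEq g, hVK]
    rw [show (∫ u, w u * g u ∂σ) = ∫ u, ∏ j ∈ Finset.Icc 1 (m+1), ρ j u ∂σ from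
      integral_congr_ae (ae_of_all _ fun u => hwg u)]
    field_simp
  have hIφ : ∫ u, φ (g u) ∂μ = N * Vφ := by
    rw [hIntEq (fun u => φ (g u)), hVφ]
    rw [show (∫ u, w u * φ (g u) ∂σ)
      = ∫ u, φ (ρ 1 u / ρL u) * (ρL u * ∏ j ∈ Finset.Icc 2 (m+1), ρ j u) ∂σ from
      integral_congr_ae (ae_of_all _ fun u => mul_comm _ _)]
    field_simp
  have havg : ⨍ u, g u ∂μ = VK / VL := by
    rw [average_eq, measureReal_def, hμtoReal, hIw, hIK, smul_eq_mul]
    field_simp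
  have havgφ : ⨍ u, φ (g u) ∂μ = Vφ / VL := by
    rw [average_eq, measureReal_def, hμtoReal, hIw, hIφ, smul_eq_mul]
    field_simp
  -- min and max of g
  obtain ⟨umin, -, hminOn⟩ := isCompact_univ.exists_isMinOn univ_nonempty hgc.continuousOn
  obtain ⟨umax, -, hmaxOn⟩ := isCompact_univ.exists_isMaxOn univ_nonempty hgc.continuousOn
  have hmin : ∀ u, g umin ≤ g u := fun u => isMinOn_iff.mp hminOn u (Set.mem_univ u)
  have hmax : ∀ u, g u ≤ g umax := fun u => isMaxOn_iff.mp hmaxOn u (Set.mem_univ u)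
  set a : ℝ := g umin with hadef
  set b : ℝ := g umax with hbdef
  have hapos : 0 < a := hgpos umin
  have hsub : Icc a b ⊆ Ioi 0 := fun x hx => lt_of_lt_of_le hapos hx.1
  have hφcontIoi : ContinuousOn φ (Ioi 0) := hφconv.continuousOn isOpen_Ioi
  have hφconvIcc : ConvexOn ℝ (Icc a b) φ := hφconv.subset hsub (convex_Icc a b)
  have hφcontIcc : ContinuousOn φ (Icc a b) := hφcontIoi.mono hsub
  have hfs : ∀ᵐ u ∂μ, g u ∈ Icc a b :=
    ae_of_all _ fun u => ⟨hmin u, hmax u⟩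
  have hφg_cont : Continuous (fun u => φ (g u)) :=
    hφcontIoi.comp_continuous hgc fun u => hgpos u
  have hgi : Integrable g μ := hIntc g hgc
  have hφgi : Integrable ((fun x => φ x) ∘ g) μ := hIntc _ hφg_cont
  -- Jensen
  have hjensen : φ (VK / VL) ≤ Vφ / VL := by
    have := hφconvIcc.map_average_le hφcontIcc isClosed_Icc hfs hgi hφgi
    rwa [havg, havgφ] at this
  have hmain : Vφ ≥ VL * φ (VK / VL) := by
    have h := mul_le_mul_of_nonneg_left hjensen hVLpos.le
    rw [mul_div_cancel₀ _ hVLpos.ne'] at h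
    linarith
  refine ⟨hmain, ?_⟩
  intro hsconv
  have hVKpos : 0 < VK := by
    rw [hVK]
    apply mul_pos (by positivity)
    have : Integrable (fun u => ∏ j ∈ Finset.Icc 1 (m+1), ρ j u) σ := by
      apply hIntc
      apply continuous_finset_prod
      intro j hj
      rw [Finset.mem_Icc] at hj
      exact hc j hj.1 hj.2
    rw [integral_pos_iff_support_of_nonneg _ this]
    · have hsupp : Function.support (fun u => ∏ j ∈ Finset.Icc 1 (m+1), ρ j u) = Set.univ := by
        ext u
        have : 0 < ∏ j ∈ Finset.Icc 1 (m+1), ρ j u := by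
          apply Finset.prod_pos
          intro j hj
          rw [Finset.mem_Icc] at hj
          exact hpos j hj.1 hj.2 u
        simp [Function.mem_support, this.ne']
      rw [hsupp]
      exact isOpen_univ.measure_pos σ univ_nonempty
    · intro u
      apply Finset.prod_nonneg
      intro j hj
      rw [Finset.mem_Icc] at hj
      exact (hpos j hj.1 hj.2 u).le
  constructor
  · -- equality implies dilates
    intro heq
    have hsIcc : StrictConvexOn ℝ (Icc a b) φ := hsconv.subset hsub (convex_Icc a b)
    rcases hsIcc.ae_eq_const_or_map_average_lt hφcontIcc isClosed_Icc hfs hgi hφgi with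
      hae | hlt
    · -- g is a.e. constant wrt μ; upgrade to everywhere
      rw [havg] at hae
      set c : ℝ := VK / VL with hcdef
      -- from μ-a.e. to σ-a.e.
      have hT : MeasurableSet {u | ¬ g u = c} :=
        (hgc.measurable (measurableSet_singleton c)).compl
      have hμT : μ {u | ¬ g u = c} = 0 := hae
      have hσT : σ {u | ¬ g u = c} = 0 := by
        rw [hμdef, withDensity_apply _ hT] at hμT
        have hmeas : Measurable (fun u => ((w u).toNNReal : ℝ≥0∞)) :=
          hwN.coe_nnreal_ennreal
        rw [lintegral_eq_zero_iff hmeas] at hμT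
        have huniv : {u | ¬ ((fun u => ((w u).toNNReal : ℝ≥0∞)) u = 0)} = Set.univ := by
          ext u
          simp only [mem_setOf_eq, Set.mem_univ, iff_true]
          intro h0
          have := hwpos u
          rw [ENNReal.coe_eq_zero, Real.toNNReal_eq_zero] at h0
          linarith
        have h2 := ae_iff.mp hμT
        simp only [Pi.zero_apply] at h2
        rw [huniv, Measure.restrict_apply_univ] at h2
        exact h2
      have hgae : g =ᵐ[σ] fun _ => c := ae_iff.mpr hσT
      have hgeq : g = fun _ => c := (Continuous.ae_eq_iff_eq σ hgc continuous_const).1 hgae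
      refine ⟨c, div_pos hVKpos hVLpos, fun u => ?_⟩
      have : g u = c := by rw [hgeq]
      have hne := (hLpos u).ne'
      rw [hgdef] at this
      simp only at this
      rw [div_eq_iff hne] at this
      exact this
    · rw [havg, havgφ] at hlt
      exfalso
      have hEq2 : Vφ / VL = φ (VK / VL) := by
        rw [heq, mul_comm, mul_div_assoc, div_self hVLpos.ne', mul_one]
      rw [hEq2] at hlt
      exact lt_irrefl _ hlt
  · -- dilates implies equality
    rintro ⟨c, hcpos, hrho⟩
    have hgco : ∀ u, g u = c := by
      intro u
      rw [hgdef]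
      show ρ 1 u / ρL u = c
      rw [hrho u, mul_div_assoc, div_self (hLpos u).ne', mul_one]
    have hVKc : VK = c * VL := by
      rw [hVK, hVL]
      rw [show (∫ u, ∏ j ∈ Finset.Icc 1 (m+1), ρ j u ∂σ) = ∫ u, c * w u ∂σ from
        integral_congr_ae (ae_of_all _ fun u => by
          show (∏ j ∈ Finset.Icc 1 (m+1), ρ j u) = c * w u
          rw [← hwg u, hgco u]; ring)]
      rw [MeasureTheory.integral_const_mul]
      ring
    have hVKVL : VK / VL = c := by
      rw [hVKc, mul_div_assoc, div_self hVLpos.ne', mul_one]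
    rw [hVφ, hVKVL]
    rw [show (∫ u, φ (ρ 1 u / ρL u) * (ρL u * ∏ j ∈ Finset.Icc 2 (m+1), ρ j u) ∂σ)
      = ∫ u, φ c * w u ∂σ from integral_congr_ae (ae_of_all _ fun u => by
        show φ (ρ 1 u / ρL u) * (ρL u * ∏ j ∈ Finset.Icc 2 (m+1), ρ j u) = φ c * w u
        have h3 : ρ 1 u / ρL u = c := hgco u
        rw [h3])]
    rw [MeasureTheory.integral_const_mul, hVL]
    ring
end
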